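/- arXiv:2411.01486 — 5 statements merged into one kernel-verified Lean document; each statement's English description precedes it below -/
import Mathlib

section
/- Let G be a finite simple undirected graph and let k be a positive integer. For every enumeration e_1, …, e_m of the edges of G, the spanning subgraph H output by the greedy spanner algorithm (running on this enumeration with stretch parameter k) is a k-spanner of G, and the girth of H is at least k+2. -/
/-- `H` is a `k`-spanner of `G`: a spanning subgraph with
`dist_H(u,v) ≤ k * dist_G(u,v)` for all pairs (using extended distances,
so the condition is vacuous for pairs disconnected in `G`). -/
def IsKSpanner {V : Type*} (G H : SimpleGraph V) (k : ℕ) : Prop :=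
  H ≤ G ∧ ∀ u v : V, H.edist u v ≤ (k : ℕ∞) * G.edist u v

/-- `H` is a minimum `k`-spanner of `G`: a `k`-spanner with the fewest edges. -/
def IsMinKSpanner {V : Type*} (G H : SimpleGraph V) (k : ℕ) : Prop :=
  IsKSpanner G H k ∧
    ∀ H' : SimpleGraph V, IsKSpanner G H' k → H.edgeSet.ncard ≤ H'.edgeSet.ncard

open scoped Classical in
/-- The greedy spanner algorithm with stretch `k`, run on a list of edges:
starting from the edgeless graph, an edge `(u,v)` is added iff the current
distance between `u` and `v` exceeds `k`. -/
noncomputable def greedySpanner {V : Type*} (k : ℕ) (l : List (Sym2 V)) : SimpleGraph V :=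
  l.foldl (fun H e =>
    if (k : ℕ∞) < Sym2.lift ⟨fun u v => H.edist u v, fun _ _ => SimpleGraph.edist_comm⟩ e
    then H ⊔ SimpleGraph.fromEdgeSet {e} else H) ⊥

section Aux

open SimpleGraph
open scoped Classical

variable {V : Type*}

/-- One step of the greedy spanner algorithm. -/
noncomputable def gsStep (k : ℕ) (H : SimpleGraph V) (e : Sym2 V) : SimpleGraph V :=
  if (k : ℕ∞) < Sym2.lift ⟨fun u v => H.edist u v, fun _ _ => SimpleGraph.edist_comm⟩ e
  then H ⊔ SimpleGraph.fromEdgeSet {e} else H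

lemma greedySpanner_nil (k : ℕ) : greedySpanner k ([] : List (Sym2 V)) = ⊥ := rfl

lemma greedySpanner_concat (k : ℕ) (l : List (Sym2 V)) (e : Sym2 V) :
    greedySpanner k (l ++ [e]) = gsStep k (greedySpanner k l) e := by
  simp [greedySpanner, gsStep, List.foldl_append]
  exact if_congr Iff.rfl rfl rfl

lemma gsStep_pos {k : ℕ} {H : SimpleGraph V} {e : Sym2 V}
    (h : (k : ℕ∞) < Sym2.lift ⟨fun u v => H.edist u v, fun _ _ => SimpleGraph.edist_comm⟩ e) :
    gsStep k H e = H ⊔ SimpleGraph.fromEdgeSet {e} := if_pos h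

lemma gsStep_neg {k : ℕ} {H : SimpleGraph V} {e : Sym2 V}
    (h : ¬ (k : ℕ∞) < Sym2.lift ⟨fun u v => H.edist u v, fun _ _ => SimpleGraph.edist_comm⟩ e) :
    gsStep k H e = H := if_neg h

lemma le_gsStep (k : ℕ) (H : SimpleGraph V) (e : Sym2 V) : H ≤ gsStep k H e := by
  unfold gsStep
  split_ifs
  · exact le_sup_left
  · exact le_rfl

/-- Key path lemma: if a trail from `a` to `b` uses the edge `s(u,v)` and all its
other edges lie in `H`, then `H` almost-connects the endpoints. -/
lemma lemA {G H : SimpleGraph V} (u v : V) {a b : V} (w : G.Walk a b) :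
    w.IsTrail → s(u, v) ∈ w.edges →
      (∀ f ∈ w.edges, f ≠ s(u, v) → f ∈ H.edgeSet) →
      H.edist a u + H.edist v b + 1 ≤ w.length ∨
        H.edist a v + H.edist u b + 1 ≤ w.length := by
  induction w with
  | nil => intro _ he _; simp at he
  | @cons a c b h p ih =>
    intro ht he hf
    rw [Walk.edges_cons, List.mem_cons] at he
    rw [Walk.isTrail_cons] at ht
    obtain ⟨htp, hhead_ne⟩ := ht
    rcases he with he | he
    · -- the special edge is the head edge
      have hall : ∀ f ∈ p.edges, f ∈ H.edgeSet := by
        intro f hfp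
        refine hf f (List.mem_cons_of_mem _ hfp) ?_
        rintro rfl
        rw [← he] at hhead_ne
        exact hhead_ne hfp
      have hle : H.edist c b ≤ (p.length : ℕ∞) := by
        have := SimpleGraph.edist_le (p.transfer H hall)
        rwa [Walk.length_transfer] at this
      rw [Sym2.eq_iff] at he
      rcases he with ⟨rfl, rfl⟩ | ⟨rfl, rfl⟩
      · left
        rw [SimpleGraph.edist_self, zero_add, Walk.length_cons]
        push_cast
        exact add_le_add_left hle 1
      · right
        rw [SimpleGraph.edist_self, zero_add, Walk.length_cons]
        push_cast
        exact add_le_add_left hle 1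
    · -- the special edge is in the tail
      have hhead : H.Adj a c := by
        rw [← SimpleGraph.mem_edgeSet]
        refine hf _ List.mem_cons_self ?_
        intro h'
        rw [h'] at hhead_ne
        exact hhead_ne he
      have hac : H.edist a c ≤ 1 := by
        have := SimpleGraph.edist_le hhead.toWalk
        simpa using this
      have hstep : ∀ x : V, H.edist a x ≤ 1 + H.edist c x := by
        intro x
        calc H.edist a x ≤ H.edist a c + H.edist c x := SimpleGraph.edist_triangle
          _ ≤ 1 + H.edist c x := by gcongr
      rcases ih htp he (fun f hfp hne => hf f (List.mem_cons_of_mem _ hfp) hne) with h1 | h1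
      · left
        calc H.edist a u + H.edist v b + 1
            ≤ (1 + H.edist c u) + H.edist v b + 1 := by gcongr; exact hstep u
          _ = (H.edist c u + H.edist v b + 1) + 1 := by ring
          _ ≤ (p.length : ℕ∞) + 1 := by gcongr
          _ = ((Walk.cons h p).length : ℕ∞) := by rw [Walk.length_cons]; push_cast; ring
      · right
        calc H.edist a v + H.edist u b + 1
            ≤ (1 + H.edist c v) + H.edist u b + 1 := by gcongr; exact hstep v
          _ = (H.edist c v + H.edist u b + 1) + 1 := by ring
          _ ≤ (p.length : ℕ∞) + 1 := by gcongr
          _ = ((Walk.cons h p).length : ℕ∞) := by rw [Walk.length_cons]; push_cast; ring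

/-- Closed-walk version of `lemA`. -/
lemma lemA' {G H : SimpleGraph V} {u v a : V} (w : G.Walk a a) (ht : w.IsTrail)
    (he : s(u, v) ∈ w.edges) (hf : ∀ f ∈ w.edges, f ≠ s(u, v) → f ∈ H.edgeSet) :
    H.edist u v + 1 ≤ w.length := by
  rcases lemA u v w ht he hf with h1 | h1
  · calc H.edist u v + 1 ≤ (H.edist u a + H.edist a v) + 1 := by
          gcongr; exact SimpleGraph.edist_triangle
      _ = H.edist a u + H.edist v a + 1 := by
          rw [show H.edist u a = H.edist a u from SimpleGraph.edist_comm,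
            show H.edist a v = H.edist v a from SimpleGraph.edist_comm]
      _ ≤ w.length := h1
  · calc H.edist u v + 1 ≤ (H.edist u a + H.edist a v) + 1 := by
          gcongr; exact SimpleGraph.edist_triangle
      _ = H.edist a v + H.edist u a + 1 := by ring
      _ ≤ w.length := h1

lemma gsStep_girth (k : ℕ) (H' : SimpleGraph V)
    (ih : ∀ a (w : H'.Walk a a), w.IsCycle → (k + 2 : ℕ∞) ≤ w.length) (e : Sym2 V) :
    ∀ a (w : (gsStep k H' e).Walk a a), w.IsCycle → (k + 2 : ℕ∞) ≤ w.length := by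
  induction e using Sym2.ind with
  | _ u v =>
    by_cases hcond : (k : ℕ∞) <
        Sym2.lift ⟨fun u v => H'.edist u v, fun _ _ => SimpleGraph.edist_comm⟩ s(u, v)
    · rw [gsStep_pos hcond]
      rw [Sym2.lift_mk] at hcond
      intro a w hw
      by_cases hme : s(u, v) ∈ w.edges
      · have hf : ∀ f ∈ w.edges, f ≠ s(u, v) → f ∈ H'.edgeSet := by
          intro f hfw hne
          have hm := w.edges_subset_edgeSet hfw
          rw [SimpleGraph.edgeSet_sup, SimpleGraph.edgeSet_fromEdgeSet] at hm
          rcases hm with hm | hm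
          · exact hm
          · exact absurd (by simpa using hm.1) hne
        have hlen := lemA' w hw.isCircuit.isTrail hme hf
        have hk1 : (k : ℕ∞) + 1 ≤ H'.edist u v := Order.add_one_le_of_lt hcond
        calc (k + 2 : ℕ∞) = ((k : ℕ∞) + 1) + 1 := by ring
          _ ≤ H'.edist u v + 1 := by gcongr
          _ ≤ w.length := hlen
      · have hsub : ∀ f ∈ w.edges, f ∈ H'.edgeSet := by
          intro f hfw
          have hm := w.edges_subset_edgeSet hfw
          rw [SimpleGraph.edgeSet_sup, SimpleGraph.edgeSet_fromEdgeSet] at hm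
          rcases hm with hm | hm
          · exact hm
          · have : f = s(u, v) := by simpa using hm.1
            rw [this] at hfw
            exact absurd hfw hme
        have hw' := hw.transfer hsub
        have := ih a (w.transfer H' hsub) hw'
        rwa [Walk.length_transfer] at this
    · rw [gsStep_neg hcond]
      exact ih

lemma greedy_girth (k : ℕ) (l : List (Sym2 V)) :
    ∀ a (w : (greedySpanner k l).Walk a a), w.IsCycle → (k + 2 : ℕ∞) ≤ w.length := by
  induction l using List.reverseRecOn with
  | nil =>
    rw [greedySpanner_nil]
    intro a w hw
    cases w with
    | nil => simpa using hw.three_le_length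
    | cons h p => simp at h
  | append_singleton l e ih =>
    rw [greedySpanner_concat]
    exact gsStep_girth k _ ih e

lemma greedy_edist_le (k : ℕ) (hk : 0 < k) (l : List (Sym2 V)) :
    ∀ u v : V, s(u, v) ∈ l → (greedySpanner k l).edist u v ≤ k := by
  induction l using List.reverseRecOn with
  | nil => simp
  | append_singleton l e ih =>
    intro u v hm
    rw [greedySpanner_concat]
    rw [List.mem_append, List.mem_singleton] at hm
    rcases hm with hm | hm
    · exact le_trans (SimpleGraph.edist_anti (le_gsStep k _ e)) (ih u v hm)
    · subst hm
      by_cases hcond : (k : ℕ∞) <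
          Sym2.lift ⟨fun u v => (greedySpanner k l).edist u v,
            fun _ _ => SimpleGraph.edist_comm⟩ s(u, v)
      · rw [gsStep_pos hcond]
        rw [Sym2.lift_mk] at hcond
        by_cases huv : u = v
        · subst huv
          simp [SimpleGraph.edist_self]
        · have hadj : (greedySpanner k l ⊔ SimpleGraph.fromEdgeSet {s(u, v)}).Adj u v := by
            rw [SimpleGraph.sup_adj]
            right
            rw [SimpleGraph.fromEdgeSet_adj]
            exact ⟨rfl, huv⟩
          calc (greedySpanner k l ⊔ SimpleGraph.fromEdgeSet {s(u, v)}).edist u v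
              ≤ 1 := (SimpleGraph.edist_eq_one_iff_adj.mpr hadj).le
            _ ≤ (k : ℕ∞) := by exact_mod_cast hk
      · rw [gsStep_neg hcond]
        rw [Sym2.lift_mk] at hcond
        exact le_of_not_gt hcond

lemma greedy_edgeSet_subset (k : ℕ) (l : List (Sym2 V)) :
    (greedySpanner k l).edgeSet ⊆ {e | e ∈ l} := by
  induction l using List.reverseRecOn with
  | nil => rw [greedySpanner_nil]; simp
  | append_singleton l e ih =>
    rw [greedySpanner_concat]
    by_cases hcond : (k : ℕ∞) <
        Sym2.lift ⟨fun u v => (greedySpanner k l).edist u v,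
          fun _ _ => SimpleGraph.edist_comm⟩ e
    · rw [gsStep_pos hcond]
      rw [SimpleGraph.edgeSet_sup, SimpleGraph.edgeSet_fromEdgeSet]
      intro f hf
      rcases hf with hf | hf
      · simp only [Set.mem_setOf_eq, List.mem_append]
        exact Or.inl (ih hf)
      · have : f = e := by simpa using hf.1
        simp [this]
    · rw [gsStep_neg hcond]
      intro f hf
      simp only [Set.mem_setOf_eq, List.mem_append]
      exact Or.inl (ih hf)

lemma spanner_of_edges {G H : SimpleGraph V} {k : ℕ} (hk : 0 < k)
    (hE : ∀ u v : V, G.Adj u v → H.edist u v ≤ k) (u v : V) :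
    H.edist u v ≤ (k : ℕ∞) * G.edist u v := by
  rcases eq_or_ne (G.edist u v) ⊤ with h | h
  · rw [h, ENat.mul_top (by exact_mod_cast hk.ne')]
    exact le_top
  · obtain ⟨p, hp⟩ := SimpleGraph.exists_walk_of_edist_ne_top h
    rw [← hp]
    clear hp h
    induction p with
    | nil => simp [SimpleGraph.edist_self]
    | @cons a c b hadj p ih =>
      calc H.edist a b ≤ H.edist a c + H.edist c b := SimpleGraph.edist_triangle
        _ ≤ (k : ℕ∞) + (k : ℕ∞) * p.length := by
            gcongr
            · exact hE a c hadj
        _ = (k : ℕ∞) * ((Walk.cons hadj p).length : ℕ∞) := by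
            rw [Walk.length_cons]; push_cast; ring

end Aux

/-- for every enumeration of the edges of `G`, the output of the
greedy spanner algorithm is a `k`-spanner of `G` of girth at least `k+2`. -/
theorem greedy_isSpanner_and_girth {V : Type*} [Fintype V] (G : SimpleGraph V)
    (k : ℕ) (hk : 0 < k) (l : List (Sym2 V)) (hnd : l.Nodup)
    (hmem : ∀ e : Sym2 V, e ∈ l ↔ e ∈ G.edgeSet) :
    IsKSpanner G (greedySpanner k l) k ∧
      (k + 2 : ℕ∞) ≤ (greedySpanner k l).egirth := by
  have hle : greedySpanner k l ≤ G := by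
    rw [← SimpleGraph.edgeSet_subset_edgeSet]
    intro f hf
    exact (hmem f).mp (greedy_edgeSet_subset k l hf)
  have hE : ∀ u v : V, G.Adj u v → (greedySpanner k l).edist u v ≤ k := by
    intro u v hadj
    exact greedy_edist_le k hk l u v ((hmem s(u, v)).mpr ((SimpleGraph.mem_edgeSet G).mpr hadj))
  refine ⟨⟨hle, fun u v => spanner_of_edges hk hE u v⟩, ?_⟩
  rw [SimpleGraph.le_egirth]
  exact greedy_girth k l
end

section
/- There exists a constant C such that for all sufficiently large n and every integer k > (2/3)n + C, the following holds: for every simple graph G on n vertices and every k-spanner H of G, there exists a spanning subgraph R of G such that R is a k-spanner of G, R has girth at least k+2, and the number of edges of R is at most the number of edges of H. -/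
set_option linter.unusedSectionVars false
set_option linter.unusedVariables false
set_option maxHeartbeats 1600000

open SimpleGraph

namespace Span6

variable {V : Type*} [Fintype V] [DecidableEq V]

noncomputable def gg (S : Finset (Sym2 V)) : SimpleGraph V := SimpleGraph.fromEdgeSet ↑S



/-- edge is already spanned -/
def keep (k : ℕ) (S : Finset (Sym2 V)) (e : Sym2 V) : Prop :=
  ∃ u v, e = s(u, v) ∧ (gg S).edist u v ≤ k

lemma keep_iff {k : ℕ} {S : Finset (Sym2 V)} {u v : V} :
    keep k S s(u, v) ↔ (gg S).edist u v ≤ k := by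
  constructor
  · rintro ⟨a, b, hab, hd⟩
    rw [Sym2.eq_iff] at hab
    rcases hab with ⟨rfl, rfl⟩ | ⟨rfl, rfl⟩
    · exact hd
    · rwa [edist_comm]
  · intro h; exact ⟨u, v, rfl, h⟩

open scoped Classical in
noncomputable def greedy (k : ℕ) : List (Sym2 V) → Finset (Sym2 V) → Finset (Sym2 V)
  | [], S => S
  | e :: l, S => greedy k l (if keep k S e then S else insert e S)

@[simp] lemma greedy_nil (k : ℕ) (S : Finset (Sym2 V)) : greedy k [] S = S := rfl

open scoped Classical in
lemma greedy_cons (k : ℕ) (e : Sym2 V) (l : List (Sym2 V)) (S : Finset (Sym2 V)) :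
    greedy k (e :: l) S = greedy k l (if keep k S e then S else insert e S) := rfl

lemma gg_mono {S T : Finset (Sym2 V)} (h : S ⊆ T) : gg S ≤ gg T :=
  SimpleGraph.fromEdgeSet_mono (by exact_mod_cast h)

lemma subset_greedy (k : ℕ) (l : List (Sym2 V)) (S : Finset (Sym2 V)) :
    S ⊆ greedy k l S := by
  classical
  induction l generalizing S with
  | nil => simp
  | cons e l ih =>
      rw [greedy_cons]
      split
      · exact ih S
      · exact (Finset.subset_insert e S).trans (ih _)

lemma greedy_subset (k : ℕ) (l : List (Sym2 V)) (S : Finset (Sym2 V)) :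
    greedy k l S ⊆ S ∪ l.toFinset := by
  classical
  induction l generalizing S with
  | nil => simp
  | cons e l ih =>
      rw [greedy_cons]
      split
      · exact (ih S).trans (by intro x hx; simp at hx ⊢; tauto)
      · refine (ih _).trans ?_
        intro x hx
        simp at hx ⊢
        rcases hx with (rfl | h) | h <;> tauto

/-- every processed edge ends up spanned with stretch ≤ k in the final graph -/
lemma greedy_spans (k : ℕ) (hk : 1 ≤ k) (l : List (Sym2 V)) (S : Finset (Sym2 V))
    (hnd : ∀ e ∈ l, ¬ e.IsDiag) :
    ∀ e ∈ l, ∀ u v : V, e = s(u, v) → (gg (greedy k l S)).edist u v ≤ k := by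
  classical
  induction l generalizing S with
  | nil => simp
  | cons f l ih =>
      intro e he u v huv
      subst huv
      rw [greedy_cons]
      rcases List.mem_cons.mp he with rfl | he
      ·
        by_cases hkeep : keep k S s(u,v)
        · rw [if_pos hkeep]
          refine le_trans (edist_anti (gg_mono (subset_greedy k l S))) ?_
          exact keep_iff.mp hkeep
        · rw [if_neg hkeep]
          have hadj : (gg (greedy k l (insert s(u,v) S))).Adj u v := by
            rw [gg, SimpleGraph.fromEdgeSet_adj]
            constructor
            · exact_mod_cast (subset_greedy k l _) (Finset.mem_insert_self _ _)
            · intro h; exact hnd _ (List.mem_cons_self) (by simp [h])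
          calc (gg (greedy k l (insert s(u,v) S))).edist u v ≤ 1 :=
                le_of_eq (edist_eq_one_iff_adj.mpr hadj)
            _ ≤ k := by exact_mod_cast hk
      · exact ih _ (fun e' he' => hnd e' (List.mem_cons_of_mem _ he')) _ he u v rfl




/-- transfer reachability along a hypothesis on adjacency -/
lemma reach_trans {A B : SimpleGraph V} (h : ∀ a b, A.Adj a b → B.Reachable a b)
    {x y : V} (hr : A.Reachable x y) : B.Reachable x y := by
  obtain ⟨w⟩ := hr
  induction w with
  | nil => exact Reachable.refl _
  | cons ha p ih => exact (h _ _ ha).trans ih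

noncomputable def ncc (A : SimpleGraph V) : ℕ := Nat.card A.ConnectedComponent

/-- component-count comparison via adjacency-to-reachability -/
lemma ncc_le {A B : SimpleGraph V} (h : ∀ a b, A.Adj a b → B.Reachable a b) :
    ncc B ≤ ncc A := by
  classical
  letI : Fintype A.ConnectedComponent := Fintype.ofFinite _
  letI : Fintype B.ConnectedComponent := Fintype.ofFinite _
  rw [ncc, ncc, Nat.card_eq_fintype_card, Nat.card_eq_fintype_card]
  refine Fintype.card_le_of_surjective
    (Quot.map id (fun a b hab => reach_trans h hab)) ?_
  rintro ⟨x⟩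
  exact ⟨A.connectedComponentMk x, rfl⟩

lemma ncc_le_of_le {A B : SimpleGraph V} (h : A ≤ B) : ncc B ≤ ncc A :=
  ncc_le (fun a b hab => ⟨((h hab).toWalk)⟩)

/-- reach in graph with one more edge splits -/
lemma reach_insert_split {S : Finset (Sym2 V)} {u v x y : V}
    (hr : (gg (insert s(u,v) S)).Reachable x y) :
    (gg S).Reachable x y ∨ ((gg S).Reachable x u ∧ (gg S).Reachable v y)
      ∨ ((gg S).Reachable x v ∧ (gg S).Reachable u y) := by
  classical
  obtain ⟨w⟩ := hr
  induction w with
  | nil => exact Or.inl (Reachable.refl _)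
  | @cons a b c ha p ih =>
      have hsplit : (gg S).Adj a b ∨ (a = u ∧ b = v) ∨ (a = v ∧ b = u) := by
        rw [gg, SimpleGraph.fromEdgeSet_adj] at ha
        obtain ⟨hmem, hne⟩ := ha
        rw [Finset.coe_insert, Set.mem_insert_iff] at hmem
        rcases hmem with hmem | hmem
        · rw [Sym2.eq_iff] at hmem
          tauto
        · exact Or.inl (by rw [gg, SimpleGraph.fromEdgeSet_adj]; exact ⟨hmem, hne⟩)
      rcases hsplit with ha' | ⟨rfl, rfl⟩ | ⟨rfl, rfl⟩
      · have hab : (gg S).Reachable a b := ⟨ha'.toWalk⟩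
        rcases ih with h1 | ⟨h1, h2⟩ | ⟨h1, h2⟩
        · exact Or.inl (hab.trans h1)
        · exact Or.inr (Or.inl ⟨hab.trans h1, h2⟩)
        · exact Or.inr (Or.inr ⟨hab.trans h1, h2⟩)
      · rcases ih with h1 | ⟨h1, h2⟩ | ⟨h1, h2⟩
        · exact Or.inr (Or.inl ⟨Reachable.refl _, h1⟩)
        · exact Or.inr (Or.inl ⟨Reachable.refl _, h2⟩)
        · exact Or.inl h2
      · rcases ih with h1 | ⟨h1, h2⟩ | ⟨h1, h2⟩
        · exact Or.inr (Or.inr ⟨Reachable.refl _, h1⟩)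
        · exact Or.inl h2
        · exact Or.inr (Or.inr ⟨Reachable.refl _, h2⟩)

/-- adding an edge drops the component count by at most one -/
lemma ncc_ge_insert {S : Finset (Sym2 V)} {u v : V} :
    ncc (gg S) ≤ ncc (gg (insert s(u,v) S)) + 1 := by
  classical
  letI : Fintype (gg S).ConnectedComponent := Fintype.ofFinite _
  letI : Fintype (gg (insert s(u,v) S)).ConnectedComponent := Fintype.ofFinite _
  rw [ncc, ncc, Nat.card_eq_fintype_card, Nat.card_eq_fintype_card]
  have hmono : gg S ≤ gg (insert s(u,v) S) :=
    SimpleGraph.fromEdgeSet_mono (by exact_mod_cast Finset.subset_insert _ _)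
  set φ : (gg S).ConnectedComponent → (gg (insert s(u,v) S)).ConnectedComponent :=
    Quot.map id (fun a b hab => hab.mono hmono) with hφ
  have key : ∀ a b : (gg S).ConnectedComponent, φ a = φ b →
      a ≠ (gg S).connectedComponentMk u → b ≠ (gg S).connectedComponentMk u → a = b := by
    rintro ⟨x⟩ ⟨y⟩ hfab hau hbu
    have hxy : (gg (insert s(u,v) S)).Reachable x y := by
      rw [hφ] at hfab
      exact (SimpleGraph.ConnectedComponent.exact hfab)
    rcases reach_insert_split hxy with h | ⟨h1, _⟩ | ⟨_, h2⟩
    · exact ConnectedComponent.sound h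
    · exact absurd (ConnectedComponent.sound h1) hau
    · exact absurd (ConnectedComponent.sound h2.symm) hbu
  have hinj : Function.Injective (fun a : (gg S).ConnectedComponent =>
      if a = (gg S).connectedComponentMk u
        then (none : Option ((gg (insert s(u,v) S)).ConnectedComponent))
        else some (φ a)) := by
    intro a b hab
    by_cases ha : a = (gg S).connectedComponentMk u <;>
      by_cases hb : b = (gg S).connectedComponentMk u
    · rw [ha, hb]
    · simp [ha, hb] at hab
    · simp [ha, hb] at hab
    · simp only [ha, hb, if_false, Option.some_inj] at hab
      exact key a b hab ha hb
  calc Fintype.card (gg S).ConnectedComponent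
      ≤ Fintype.card (Option ((gg (insert s(u,v) S)).ConnectedComponent)) :=
        Fintype.card_le_of_injective _ hinj
    _ = _ + 1 := Fintype.card_option

/-- adding an edge between disconnected vertices drops the count by exactly (at least) one -/
lemma ncc_insert_lt {S : Finset (Sym2 V)} {u v : V} (hne : u ≠ v)
    (hnr : ¬ (gg S).Reachable u v) :
    ncc (gg (insert s(u,v) S)) + 1 ≤ ncc (gg S) := by
  classical
  letI : Fintype (gg S).ConnectedComponent := Fintype.ofFinite _
  letI : Fintype (gg (insert s(u,v) S)).ConnectedComponent := Fintype.ofFinite _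
  rw [ncc, ncc, Nat.card_eq_fintype_card, Nat.card_eq_fintype_card]
  have hmono : gg S ≤ gg (insert s(u,v) S) :=
    SimpleGraph.fromEdgeSet_mono (by exact_mod_cast Finset.subset_insert _ _)
  set φ : (gg S).ConnectedComponent → (gg (insert s(u,v) S)).ConnectedComponent :=
    Quot.map id (fun a b hab => hab.mono hmono) with hφ
  have hsur : Function.Surjective φ := by
    rintro ⟨x⟩; exact ⟨(gg S).connectedComponentMk x, rfl⟩
  have hninj : ¬ Function.Injective φ := by
    intro hinj
    have hadj : (gg (insert s(u,v) S)).Adj u v := by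
      rw [gg, SimpleGraph.fromEdgeSet_adj]
      exact ⟨by simp, hne⟩
    have : φ ((gg S).connectedComponentMk u) = φ ((gg S).connectedComponentMk v) :=
      ConnectedComponent.sound ⟨hadj.toWalk⟩
    exact hnr (ConnectedComponent.exact (hinj this))
  exact Nat.succ_le_of_lt (Fintype.card_lt_of_surjective_not_injective φ hsur hninj)

lemma ncc_bot : ncc (gg (∅ : Finset (Sym2 V))) = Fintype.card V := by
  classical
  have hbot : gg (∅ : Finset (Sym2 V)) = ⊥ := by
    rw [gg]; simp
  rw [ncc, hbot, ← Nat.card_eq_fintype_card]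
  refine (Nat.card_eq_of_bijective (fun v => (⊥ : SimpleGraph V).connectedComponentMk v)
    ⟨?_, ?_⟩).symm
  · intro a b hab
    simpa using (reachable_bot.mp (ConnectedComponent.exact hab))
  · rintro ⟨x⟩; exact ⟨x, rfl⟩

/-- rank bound: any edge set on V -/
lemma card_ncc_ge (S : Finset (Sym2 V)) :
    Fintype.card V ≤ S.card + ncc (gg S) := by
  classical
  induction S using Finset.induction with
  | empty => simp [ncc_bot]
  | @insert a S ha ih =>
      obtain ⟨u, v⟩ := a
      calc Fintype.card V ≤ S.card + ncc (gg S) := ih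
        _ ≤ S.card + (ncc (gg (insert s(u,v) S)) + 1) :=
            Nat.add_le_add_left ncc_ge_insert _
        _ = (insert s(u,v) S).card + ncc (gg (insert s(u,v) S)) := by
            rw [Finset.card_insert_of_notMem ha]; omega




/-- split a duplicate-free walk at an edge it contains -/
lemma walk_split_at_edge {A : SimpleGraph V} {a b : V} (w : A.Walk a b) {e : Sym2 V}
    (he : e ∈ w.edges) (hnd : w.edges.Nodup) :
    ∃ (x y : V) (w1 : A.Walk a x) (w2 : A.Walk y b), e = s(x, y) ∧
      w1.length + w2.length + 1 = w.length ∧ e ∉ w1.edges ∧ e ∉ w2.edges := by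
  induction w with
  | nil => simp at he
  | @cons c d b' h p ih =>
      rw [Walk.edges_cons] at he hnd
      rcases List.mem_cons.mp he with rfl | he'
      · refine ⟨c, d, Walk.nil, p, rfl, by simp, by simp, ?_⟩
        exact (List.nodup_cons.mp hnd).1
      · obtain ⟨x, y, w1, w2, hexy, hlen, hw1, hw2⟩ :=
          ih he' (List.nodup_cons.mp hnd).2
        refine ⟨x, y, Walk.cons h w1, w2, hexy, by simp [← hlen]; omega, ?_, hw2⟩
        rw [Walk.edges_cons, List.mem_cons]
        rintro (rfl | hmem)
        · exact (List.nodup_cons.mp hnd).1 he'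
        · exact hw1 hmem

def Good (k : ℕ) (S : Finset (Sym2 V)) : Prop :=
  ∀ (x : V) (c : (gg S).Walk x x), c.IsCycle → k + 2 ≤ c.length

lemma good_empty (k : ℕ) : Good k (∅ : Finset (Sym2 V)) := by
  intro x c hc
  exfalso
  have h3 : 3 ≤ c.length := hc.three_le_length
  cases c with
  | nil => simp at h3
  | cons h p =>
      have : gg (∅ : Finset (Sym2 V)) = ⊥ := by rw [gg]; simp
      rw [this] at h
      exact h.elim

lemma edge_mem_gg {S : Finset (Sym2 V)} {f : Sym2 V} (hf : f ∈ S) (hnd : ¬ f.IsDiag) :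
    f ∈ (gg S).edgeSet := by
  rw [gg, edgeSet_fromEdgeSet]
  exact ⟨by exact_mod_cast hf, hnd⟩

lemma gg_edge_sub {S : Finset (Sym2 V)} : (gg S).edgeSet ⊆ ↑S := by
  rw [gg, edgeSet_fromEdgeSet]; exact Set.diff_subset

/-- inserting an unspanned edge preserves high girth -/
lemma good_insert {k : ℕ} {S : Finset (Sym2 V)} {u v : V} (hne : u ≠ v)
    (hnk : ¬ (gg S).edist u v ≤ k) (hG : Good k S) : Good k (insert s(u,v) S) := by
  classical
  by_cases hmem : s(u,v) ∈ S
  · rwa [Finset.insert_eq_self.mpr hmem]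
  intro x c hc
  by_cases hce : s(u,v) ∈ c.edges
  · obtain ⟨a, b, w1, w2, hexy, hlen, hw1, hw2⟩ :=
      walk_split_at_edge c hce hc.edges_nodup
    -- detour from b to a avoiding the edge
    have hsub : ∀ f ∈ (w2.append w1).edges, f ∈ (gg S).edgeSet := by
      intro f hf
      rw [Walk.edges_append, List.mem_append] at hf
      have hfne : f ≠ s(u,v) := by
        rintro rfl
        rcases hf with hf | hf
        · exact hw2 hf
        · exact hw1 hf
      have hfe : f ∈ (gg (insert s(u,v) S)).edgeSet := by
        rcases hf with hf | hf
        · exact (w2.edges_subset_edgeSet) hf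
        · exact (w1.edges_subset_edgeSet) hf
      rw [gg, edgeSet_fromEdgeSet] at hfe
      obtain ⟨hfe1, hfe2⟩ := hfe
      rw [Finset.coe_insert, Set.mem_insert_iff] at hfe1
      rcases hfe1 with rfl | hfe1
      · exact absurd rfl hfne
      · rw [gg, edgeSet_fromEdgeSet]; exact ⟨hfe1, hfe2⟩
    have hdist : (gg S).edist b a ≤ (c.length - 1 : ℕ) := by
      have h := edist_le ((w2.append w1).transfer (gg S) hsub)
      rw [Walk.length_transfer, Walk.length_append] at h
      refine le_trans h ?_
      norm_cast
      omega
    have hdist2 : (gg S).edist u v ≤ (c.length - 1 : ℕ) := by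
      rw [Sym2.eq_iff] at hexy
      rcases hexy with ⟨rfl, rfl⟩ | ⟨rfl, rfl⟩
      · rwa [SimpleGraph.edist_comm]
      · exact hdist
    have hk : (k : ℕ∞) < (c.length - 1 : ℕ) := lt_of_lt_of_le (not_le.mp hnk) hdist2
    have : k < c.length - 1 := by exact_mod_cast hk
    have h3 : 3 ≤ c.length := hc.three_le_length
    omega
  · have hsub : ∀ f ∈ c.edges, f ∈ (gg S).edgeSet := by
      intro f hf
      have hfe : f ∈ (gg (insert s(u,v) S)).edgeSet := c.edges_subset_edgeSet hf
      rw [gg, edgeSet_fromEdgeSet] at hfe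
      obtain ⟨hfe1, hfe2⟩ := hfe
      rw [Finset.coe_insert, Set.mem_insert_iff] at hfe1
      rcases hfe1 with rfl | hfe1
      · exact absurd hf hce
      · rw [gg, edgeSet_fromEdgeSet]; exact ⟨hfe1, hfe2⟩
    have := hG x (c.transfer (gg S) hsub) (hc.transfer hsub)
    rwa [Walk.length_transfer] at this



lemma shortest_path_exists {A : SimpleGraph V} {u v : V} (hr : A.Reachable u v) :
    ∃ p : A.Walk u v, p.IsPath ∧ (p.length : ℕ∞) = A.edist u v := by
  obtain ⟨q, hq⟩ := hr.exists_walk_length_eq_edist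
  refine ⟨q.bypass, q.bypass_isPath, le_antisymm ?_ ?_⟩
  · rw [← hq]; exact_mod_cast q.length_bypass_le
  · exact edist_le _

lemma getVert_takeUntil {A : SimpleGraph V} {u v z : V} (p : A.Walk u v)
    (hz : z ∈ p.support) : p.getVert ((p.takeUntil z hz).length) = z := by
  have h2 : ((p.takeUntil z hz).append (p.dropUntil z hz)).getVert
      ((p.takeUntil z hz).length) = z := by
    rw [Walk.getVert_append]
    simp
  rwa [Walk.take_spec] at h2

lemma length_take_drop {A : SimpleGraph V} {u v z : V} (p : A.Walk u v)
    (hz : z ∈ p.support) :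
    (p.takeUntil z hz).length + (p.dropUntil z hz).length = p.length := by
  conv_rhs => rw [← Walk.take_spec p hz]
  rw [Walk.length_append]

/-- on a shortest path, the prefix length equals the distance from the start -/
lemma takeUntil_edist {A : SimpleGraph V} {u v z : V} (p : A.Walk u v)
    (hsh : (p.length : ℕ∞) = A.edist u v) (hz : z ∈ p.support) :
    ((p.takeUntil z hz).length : ℕ∞) = A.edist u z := by
  have hsum := length_take_drop p hz
  have h1 : A.edist u z ≤ (p.takeUntil z hz).length := edist_le _
  have h2 : A.edist z v ≤ (p.dropUntil z hz).length := edist_le _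
  have h3 : A.edist u v ≤ A.edist u z + A.edist z v := A.edist_triangle
  lift A.edist u z to ℕ using (h1.trans_lt (ENat.coe_lt_top _)).ne with m1 hm1
  lift A.edist z v to ℕ using (h2.trans_lt (ENat.coe_lt_top _)).ne with m2 hm2
  rw [← hsh] at h3
  have h1' : m1 ≤ (p.takeUntil z hz).length := by exact_mod_cast h1
  have h2' : m2 ≤ (p.dropUntil z hz).length := by exact_mod_cast h2
  have h3' : p.length ≤ m1 + m2 := by exact_mod_cast h3
  norm_cast
  omega

/-- MAIN COUNTING: a long cycle (path + chord) plus a long shortest path forces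
`3k + 4 ≤ 2n`, contradiction. -/
lemma step2 {k : ℕ} {A : SimpleGraph V}
    (hn : 2 * Fintype.card V < 3 * k)
    {u₁ v₁ : V} (hadj : A.Adj u₁ v₁) (p₁ : A.Walk u₁ v₁) (hp₁ : p₁.IsPath)
    (hlen₁ : k + 1 ≤ p₁.length)
    {u₂ v₂ : V} (hr : A.Reachable u₂ v₂)
    (hnk : ¬ A.edist u₂ v₂ ≤ k) : False := by
  classical
  obtain ⟨p₂, hp₂, hsh⟩ := shortest_path_exists hr
  have hlen₂ : k + 1 ≤ p₂.length := by
    have : (k : ℕ∞) < p₂.length := by rw [hsh]; exact not_le.mp hnk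
    exact_mod_cast this
  have hcardA : p₁.support.toFinset.card = p₁.length + 1 := by
    rw [List.toFinset_card_of_nodup hp₁.support_nodup, Walk.length_support]
  have hcardB : p₂.support.toFinset.card = p₂.length + 1 := by
    rw [List.toFinset_card_of_nodup hp₂.support_nodup, Walk.length_support]
  have hunion : (p₁.support.toFinset ∪ p₂.support.toFinset).card ≤ Fintype.card V :=
    Finset.card_le_univ _
  have hcui := Finset.card_union_add_card_inter p₁.support.toFinset p₂.support.toFinset
  by_cases hint : (p₁.support.toFinset ∩ p₂.support.toFinset).Nonempty
  · have hmemB : ∀ z ∈ p₁.support.toFinset ∩ p₂.support.toFinset, z ∈ p₂.support := by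
      intro z hz
      simp only [Finset.mem_inter, List.mem_toFinset] at hz
      exact hz.2
    have hmemA : ∀ z ∈ p₁.support.toFinset ∩ p₂.support.toFinset, z ∈ p₁.support := by
      intro z hz
      simp only [Finset.mem_inter, List.mem_toFinset] at hz
      exact hz.1
    set π : V → ℕ := fun z => if hz : z ∈ p₂.support then (p₂.takeUntil z hz).length else 0
      with hπ
    have hπ_edist : ∀ z (hz : z ∈ p₂.support), (π z : ℕ∞) = A.edist u₂ z := by
      intro z hz
      rw [hπ]; simp only [hz, dif_pos]
      exact takeUntil_edist p₂ hsh hz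
    have hπ_inj : ∀ z₁ ∈ p₁.support.toFinset ∩ p₂.support.toFinset,
        ∀ z₂ ∈ p₁.support.toFinset ∩ p₂.support.toFinset, π z₁ = π z₂ → z₁ = z₂ := by
      intro z₁ h1 z₂ h2 he
      have hz1 := hmemB _ h1
      have hz2 := hmemB _ h2
      rw [hπ] at he
      simp only [hz1, hz2, dif_pos] at he
      have e1 := getVert_takeUntil p₂ hz1
      have e2 := getVert_takeUntil p₂ hz2
      rw [he] at e1
      exact e1.symm.trans e2
    obtain ⟨x, hx, hxmin⟩ := Finset.exists_min_image _ π hint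
    obtain ⟨y, hy, hymax⟩ := Finset.exists_max_image _ π hint
    have hcardI : (p₁.support.toFinset ∩ p₂.support.toFinset).card ≤ π y - π x + 1 := by
      have hIcc : (p₁.support.toFinset ∩ p₂.support.toFinset).card ≤
          (Finset.Icc (π x) (π y)).card := by
        refine Finset.card_le_card_of_injOn π ?_ ?_
        · intro z hz
          rw [Finset.mem_coe, Finset.mem_Icc]
          exact ⟨hxmin z hz, hymax z hz⟩
        · intro z₁ h1 z₂ h2 he
          exact hπ_inj z₁ h1 z₂ h2 he
      rw [Nat.card_Icc] at hIcc
      omega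
    have hxyreach : A.Reachable x y := by
      have h1 : A.Reachable u₂ x := by
        rw [← edist_ne_top_iff_reachable, ← hπ_edist x (hmemB _ hx)]
        exact ENat.coe_ne_top _
      have h2 : A.Reachable u₂ y := by
        rw [← edist_ne_top_iff_reachable, ← hπ_edist y (hmemB _ hy)]
        exact ENat.coe_ne_top _
      exact h1.symm.trans h2
    lift A.edist x y to ℕ using edist_ne_top_iff_reachable.mpr hxyreach with dxy hdxy
    have hgap : π y ≤ π x + dxy := by
      have ht : A.edist u₂ y ≤ A.edist u₂ x + A.edist x y := A.edist_triangle
      rw [← hπ_edist x (hmemB _ hx), ← hπ_edist y (hmemB _ hy), ← hdxy] at ht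
      exact_mod_cast ht
    have hcycbound : 2 * dxy ≤ p₁.length + 1 := by
      have hxA : x ∈ p₁.support := hmemA _ hx
      have hyA : y ∈ p₁.support := hmemA _ hy
      have hsplit := length_take_drop p₁ hxA
      have hymem : y ∈ (p₁.takeUntil x hxA).support ∨ y ∈ (p₁.dropUntil x hxA).support := by
        rw [← Walk.mem_support_append_iff, Walk.take_spec]
        exact hyA
      rcases hymem with hyd | hyd
      · have hyt := length_take_drop (p₁.takeUntil x hxA) hyd
        have h1 : A.edist x y ≤ (((p₁.takeUntil x hxA).dropUntil y hyd).reverse).length :=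
          edist_le _
        have h2 : A.edist x y ≤ ((p₁.dropUntil x hxA).append
            (Walk.cons hadj.symm ((p₁.takeUntil x hxA).takeUntil y hyd))).length :=
          edist_le _
        rw [← hdxy] at h1 h2
        rw [Walk.length_reverse] at h1
        rw [Walk.length_append, Walk.length_cons] at h2
        have h1' : dxy ≤ ((p₁.takeUntil x hxA).dropUntil y hyd).length := by exact_mod_cast h1
        have h2' : dxy ≤ (p₁.dropUntil x hxA).length +
            (((p₁.takeUntil x hxA).takeUntil y hyd).length + 1) := by exact_mod_cast h2
        omega
      · have hyt := length_take_drop (p₁.dropUntil x hxA) hyd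
        have h1 : A.edist x y ≤ ((p₁.dropUntil x hxA).takeUntil y hyd).length := edist_le _
        have h2 : A.edist x y ≤ ((p₁.takeUntil x hxA).reverse.append
            (Walk.cons hadj (((p₁.dropUntil x hxA).dropUntil y hyd).reverse))).length :=
          edist_le _
        rw [← hdxy] at h1 h2
        rw [Walk.length_append, Walk.length_cons, Walk.length_reverse,
          Walk.length_reverse] at h2
        have h1' : dxy ≤ ((p₁.dropUntil x hxA).takeUntil y hyd).length := by exact_mod_cast h1
        have h2' : dxy ≤ (p₁.takeUntil x hxA).length +
            ((((p₁.dropUntil x hxA).dropUntil y hyd)).length + 1) := by exact_mod_cast h2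
        omega
    have hπxy : π x ≤ π y := hymax x hx
    omega
  · rw [Finset.not_nonempty_iff_eq_empty] at hint
    rw [hint, Finset.card_empty] at hcui
    omega


section S5
variable {V : Type*} [Fintype V] [DecidableEq V]

/-- "a long induced cycle has been created": a chord plus a long path avoiding it -/
def SC (k : ℕ) (S : Finset (Sym2 V)) : Prop :=
  ∃ (u v : V) (p : (gg S).Walk u v), (gg S).Adj u v ∧ p.IsPath ∧ k + 1 ≤ p.length ∧
    s(u, v) ∉ p.edges

lemma not_sc_empty (k : ℕ) : ¬ SC k (∅ : Finset (Sym2 V)) := by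
  rintro ⟨u, v, p, hadj, -⟩
  have : gg (∅ : Finset (Sym2 V)) = ⊥ := by rw [gg]; simp
  rw [this] at hadj
  exact hadj.elim

lemma sc_mono {k : ℕ} {S T : Finset (Sym2 V)} (h : S ⊆ T) (hsc : SC k S) : SC k T := by
  obtain ⟨u, v, p, hadj, hp, hlen, hne⟩ := hsc
  have hsub : ∀ f ∈ p.edges, f ∈ (gg T).edgeSet :=
    fun f hf => (edgeSet_mono (gg_mono h)) (p.edges_subset_edgeSet hf)
  refine ⟨u, v, p.transfer (gg T) hsub, gg_mono h hadj, hp.transfer _, ?_, ?_⟩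
  · rwa [Walk.length_transfer]
  · rwa [Walk.edges_transfer]

lemma sc_create {k : ℕ} {S : Finset (Sym2 V)} {u v : V} (hne : u ≠ v)
    (hmem : s(u,v) ∉ S)
    (hr : (gg S).Reachable u v) (hnk : ¬ (gg S).edist u v ≤ k) :
    SC k (insert s(u,v) S) := by
  obtain ⟨p, hp, hsh⟩ := shortest_path_exists hr
  have hlen : k + 1 ≤ p.length := by
    have : (k : ℕ∞) < p.length := by rw [hsh]; exact not_le.mp hnk
    exact_mod_cast this
  have hnotin : s(u,v) ∉ p.edges := by
    intro hmem'
    have := p.edges_subset_edgeSet hmem'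
    exact hmem (by exact_mod_cast gg_edge_sub this)
  have hsub : ∀ f ∈ p.edges, f ∈ (gg (insert s(u,v) S)).edgeSet :=
    fun f hf => (edgeSet_mono (gg_mono (Finset.subset_insert _ _)))
      (p.edges_subset_edgeSet hf)
  refine ⟨u, v, p.transfer _ hsub, ?_, hp.transfer _, ?_, ?_⟩
  · rw [gg, SimpleGraph.fromEdgeSet_adj]
    exact ⟨by simp, hne⟩
  · rwa [Walk.length_transfer]
  · rwa [Walk.edges_transfer]

/-- a non-cycleforming insertion cannot create the SC structure -/
lemma sc_insert_not_reach {k : ℕ} {S : Finset (Sym2 V)} {u v : V}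
    (hnr : ¬ (gg S).Reachable u v) (hsc : SC k (insert s(u,v) S)) : SC k S := by
  classical
  obtain ⟨a, b, p, hadj, hp, hlen, hnein⟩ := hsc
  have havoid : ∀ {x y : V} (w : (gg (insert s(u,v) S)).Walk x y), s(u,v) ∉ w.edges →
      ∀ f ∈ w.edges, f ∈ (gg S).edgeSet := by
    intro x y w hw f hf
    have hfe := w.edges_subset_edgeSet hf
    rw [gg, edgeSet_fromEdgeSet] at hfe
    obtain ⟨hfe1, hfe2⟩ := hfe
    rw [Finset.coe_insert, Set.mem_insert_iff] at hfe1
    rcases hfe1 with rfl | hfe1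
    · exact absurd hf hw
    · rw [gg, edgeSet_fromEdgeSet]; exact ⟨hfe1, hfe2⟩
  -- split on whether the chord is the new edge
  have hadj' := hadj
  rw [gg, SimpleGraph.fromEdgeSet_adj, Finset.coe_insert, Set.mem_insert_iff] at hadj'
  obtain ⟨hab_mem, hab_ne⟩ := hadj'
  rcases hab_mem with habe | habS
  · -- chord is the new edge; the path avoids it, so u,v reachable in gg S: contradiction
    exfalso
    have hne' : s(u,v) ∉ p.edges := by rwa [habe] at hnein
    have : (gg S).Reachable a b := ⟨p.transfer (gg S) (havoid p hne')⟩
    rw [Sym2.eq_iff] at habe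
    rcases habe with ⟨rfl, rfl⟩ | ⟨rfl, rfl⟩
    · exact hnr this
    · exact hnr this.symm
  · by_cases hpe : s(u,v) ∈ p.edges
    · -- path uses the new edge: both endpoints of it reach the chord, contradiction
      exfalso
      obtain ⟨x, y, w1, w2, hexy, hlen', hw1, hw2⟩ := walk_split_at_edge p hpe hp.edges_nodup
      have hadjS : (gg S).Adj a b := by
        rw [gg, SimpleGraph.fromEdgeSet_adj]; exact ⟨habS, hab_ne⟩
      have h1 : (gg S).Reachable a x := ⟨w1.transfer (gg S) (havoid w1 hw1)⟩
      have h2 : (gg S).Reachable y b := ⟨w2.transfer (gg S) (havoid w2 hw2)⟩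
      have hxy : (gg S).Reachable x y := (h1.symm.trans ⟨hadjS.toWalk⟩).trans h2.symm
      rw [Sym2.eq_iff] at hexy
      rcases hexy with ⟨rfl, rfl⟩ | ⟨rfl, rfl⟩
      · exact hnr hxy
      · exact hnr hxy.symm
    · -- everything avoids the new edge
      have hadjS : (gg S).Adj a b := by
        rw [gg, SimpleGraph.fromEdgeSet_adj]; exact ⟨habS, hab_ne⟩
      refine ⟨a, b, p.transfer (gg S) (havoid p hpe), hadjS, hp.transfer _, ?_, ?_⟩
      · rwa [Walk.length_transfer]
      · rwa [Walk.edges_transfer]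

/-- once SC holds, greedy adds only forest edges -/
lemma greedy_count_sc {k : ℕ} (hn : 2 * Fintype.card V < 3 * k)
    (l : List (Sym2 V)) (S : Finset (Sym2 V)) (hl : ∀ e ∈ l, ¬ e.IsDiag)
    (hsc : SC k S) :
    (greedy k l S).card + ncc (gg (greedy k l S)) ≤ S.card + ncc (gg S) ∧
      SC k (greedy k l S) := by
  classical
  induction l generalizing S with
  | nil => exact ⟨le_rfl, hsc⟩
  | cons e l ih =>
      rw [greedy_cons]
      by_cases hkeep : keep k S e
      · rw [if_pos hkeep]
        exact ih _ (fun f hf => hl f (List.mem_cons_of_mem _ hf)) hsc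
      · rw [if_neg hkeep]
        obtain ⟨u, v⟩ := e
        have hne : u ≠ v := fun h => hl _ (List.mem_cons_self) (by simp [h])
        have hnk : ¬ (gg S).edist u v ≤ k := fun h => hkeep (keep_iff.mpr h)
        have hnr : ¬ (gg S).Reachable u v := by
          intro hr
          obtain ⟨a', b', p₁, hadj₁, hp₁, hlen₁, -⟩ := hsc
          exact step2 hn hadj₁ p₁ hp₁ hlen₁ hr hnk
        have hstep := ih (insert s(u,v) S) (fun f hf => hl f (List.mem_cons_of_mem _ hf))
          (sc_mono (Finset.subset_insert _ _) hsc)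
        refine ⟨le_trans hstep.1 ?_, hstep.2⟩
        have hcard : (insert s(u,v) S).card ≤ S.card + 1 := Finset.card_insert_le _ _
        have hncc := ncc_insert_lt hne hnr
        omega

/-- the master count: at most one cycle-forming insertion ever happens -/
lemma greedy_count {k : ℕ} (hn : 2 * Fintype.card V < 3 * k)
    (l : List (Sym2 V)) (S : Finset (Sym2 V)) (hl : ∀ e ∈ l, ¬ e.IsDiag)
    (hsc : ¬ SC k S) :
    ((greedy k l S).card + ncc (gg (greedy k l S)) ≤ S.card + ncc (gg S) ∧
        ¬ SC k (greedy k l S)) ∨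
      (greedy k l S).card + ncc (gg (greedy k l S)) ≤ S.card + ncc (gg S) + 1 := by
  classical
  induction l generalizing S with
  | nil => exact Or.inl ⟨le_rfl, hsc⟩
  | cons e l ih =>
      rw [greedy_cons]
      by_cases hkeep : keep k S e
      · rw [if_pos hkeep]
        exact ih _ (fun f hf => hl f (List.mem_cons_of_mem _ hf)) hsc
      · rw [if_neg hkeep]
        obtain ⟨u, v⟩ := e
        rw [show (Quot.mk (Sym2.Rel V) (u, v) : Sym2 V) = s(u,v) from rfl]
        have hne : u ≠ v := fun h => hl _ (List.mem_cons_self) (by simp [h])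
        have hnk : ¬ (gg S).edist u v ≤ k := fun h => hkeep (keep_iff.mpr h)
        have h1k : 1 ≤ k := by omega
        have hmem : s(u,v) ∉ S := by
          intro hmem
          have hadj : (gg S).Adj u v := by
            rw [gg, SimpleGraph.fromEdgeSet_adj]
            exact ⟨by exact_mod_cast hmem, hne⟩
          exact hnk (le_trans (le_of_eq (edist_eq_one_iff_adj.mpr hadj))
            (by exact_mod_cast h1k))
        by_cases hr : (gg S).Reachable u v
        · -- the unique cycleforming insertion
          have hsc' : SC k (insert s(u,v) S) := sc_create hne hmem hr hnk
          have hstep := greedy_count_sc hn l (insert s(u,v) S)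
            (fun f hf => hl f (List.mem_cons_of_mem _ hf)) hsc'
          refine Or.inr (le_trans hstep.1 ?_)
          have hcard : (insert s(u,v) S).card ≤ S.card + 1 := Finset.card_insert_le _ _
          have hncc : ncc (gg (insert s(u,v) S)) ≤ ncc (gg S) :=
            ncc_le_of_le (gg_mono (Finset.subset_insert _ _))
          omega
        · -- forest insertion
          have hsc'' : ¬ SC k (insert s(u,v) S) := fun h => hsc (sc_insert_not_reach hr h)
          have hstep := ih (insert s(u,v) S) (fun f hf => hl f (List.mem_cons_of_mem _ hf))
            hsc''
          have hcard : (insert s(u,v) S).card = S.card + 1 :=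
            Finset.card_insert_of_notMem hmem
          have hncc := ncc_insert_lt hne hr
          rcases hstep with ⟨h1, h2⟩ | h1
          · exact Or.inl ⟨by omega, h2⟩
          · exact Or.inr (by omega)

end S5

section S6
variable {V : Type*} [Fintype V] [DecidableEq V]

lemma greedy_append (k : ℕ) (l₁ l₂ : List (Sym2 V)) (S : Finset (Sym2 V)) :
    greedy k (l₁ ++ l₂) S = greedy k l₂ (greedy k l₁ S) := by
  classical
  induction l₁ generalizing S with
  | nil => simp
  | cons e l ih => rw [List.cons_append, greedy_cons, greedy_cons, ih]

lemma greedy_good {k : ℕ} (l : List (Sym2 V)) (S : Finset (Sym2 V))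
    (hl : ∀ e ∈ l, ¬ e.IsDiag) (hG : Good k S) : Good k (greedy k l S) := by
  classical
  induction l generalizing S with
  | nil => exact hG
  | cons e l ih =>
      rw [greedy_cons]
      by_cases hkeep : keep k S e
      · rw [if_pos hkeep]
        exact ih _ (fun f hf => hl f (List.mem_cons_of_mem _ hf)) hG
      · rw [if_neg hkeep]
        obtain ⟨u, v⟩ := e
        rw [show (Quot.mk (Sym2.Rel V) (u, v) : Sym2 V) = s(u,v) from rfl]
        have hne : u ≠ v := fun h => hl _ (List.mem_cons_self) (by simp [h])
        have hnk : ¬ (gg S).edist u v ≤ k := fun h => hkeep (keep_iff.mpr h)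
        exact ih _ (fun f hf => hl f (List.mem_cons_of_mem _ hf)) (good_insert hne hnk hG)

def BAD (H : SimpleGraph V) : Prop :=
  ∃ u v : V, H.Adj u v ∧ (H.deleteEdges {s(u,v)}).Reachable u v

/-- during the H-phase, either some H-edge is skipped (witnessing a cycle in H),
or every H-edge is added -/
lemma phase1 {k : ℕ} (H : SimpleGraph V) (l : List (Sym2 V)) (S : Finset (Sym2 V))
    (hl : ∀ e ∈ l, e ∈ H.edgeSet) (hlnd : l.Nodup) (hS : ↑S ⊆ H.edgeSet)
    (hdisj : ∀ e ∈ l, e ∉ S) :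
    BAD H ∨ ∀ e ∈ l, e ∈ greedy k l S := by
  classical
  induction l generalizing S with
  | nil => exact Or.inr (by simp)
  | cons e l ih =>
      rw [greedy_cons]
      by_cases hkeep : keep k S e
      · -- a skipped H-edge: it lies on a cycle of H
        left
        obtain ⟨u, v, rfl, hd⟩ := hkeep
        have hadjH : H.Adj u v := by
          rw [← SimpleGraph.mem_edgeSet]
          exact hl _ (List.mem_cons_self)
        refine ⟨u, v, hadjH, ?_⟩
        have hr : (gg S).Reachable u v := by
          refine reachable_of_edist_ne_top ?_
          intro h
          rw [h] at hd
          exact absurd hd (by simp)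
        refine reach_trans ?_ hr
        intro a b hab
        rw [gg, SimpleGraph.fromEdgeSet_adj] at hab
        obtain ⟨habS, habne⟩ := hab
        have habH : s(a,b) ∈ H.edgeSet := hS habS
        have habne' : s(a,b) ≠ s(u,v) := by
          intro h
          exact hdisj _ (List.mem_cons_self) (by rw [← h]; exact_mod_cast habS)
        refine ⟨SimpleGraph.Adj.toWalk ?_⟩
        rw [SimpleGraph.deleteEdges_adj]
        exact ⟨H.mem_edgeSet.mp habH, by simpa using habne'⟩
      · rw [if_neg hkeep]
        have hS' : ↑(insert e S) ⊆ H.edgeSet := by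
          rw [Finset.coe_insert, Set.insert_subset_iff]
          exact ⟨hl _ (List.mem_cons_self), hS⟩
        have hdisj' : ∀ f ∈ l, f ∉ insert e S := by
          intro f hf
          rw [Finset.mem_insert]
          rintro (rfl | hfS)
          · exact (List.nodup_cons.mp hlnd).1 hf
          · exact hdisj f (List.mem_cons_of_mem _ hf) hfS
        rcases ih (insert e S) (fun f hf => hl f (List.mem_cons_of_mem _ hf))
          (List.nodup_cons.mp hlnd).2 hS' hdisj' with hb | hall
        · exact Or.inl hb
        · refine Or.inr ?_
          intro f hf
          rcases List.mem_cons.mp hf with rfl | hf'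
          · exact subset_greedy _ _ _ (Finset.mem_insert_self _ _)
          · exact hall f hf'

lemma phase2_noop {k : ℕ} (l : List (Sym2 V)) (S : Finset (Sym2 V))
    (hsp : ∀ e ∈ l, ∀ u v : V, e = s(u,v) → (gg S).edist u v ≤ k) :
    greedy k l S = S := by
  classical
  induction l with
  | nil => simp
  | cons e l ih =>
      rw [greedy_cons]
      have hkeep : keep k S e := by
        obtain ⟨u, v⟩ := e
        exact ⟨u, v, rfl, hsp _ (List.mem_cons_self) u v rfl⟩
      rw [if_pos hkeep]
      exact ih (fun f hf u v h => hsp f (List.mem_cons_of_mem _ hf) u v h)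

lemma edist_le_mul {R G : SimpleGraph V} {k : ℕ}
    (h : ∀ u v : V, G.Adj u v → R.edist u v ≤ k) {u v : V} (w : G.Walk u v) :
    R.edist u v ≤ (k : ℕ∞) * w.length := by
  induction w with
  | nil => simp [edist_self]
  | @cons a b c ha p ih =>
      refine le_trans R.edist_triangle (le_trans (add_le_add (h _ _ ha) ih) ?_)
      rw [Walk.length_cons]
      refine le_of_eq ?_
      push_cast
      ring

lemma spanner_of_edges {R G : SimpleGraph V} {k : ℕ} (hk : 1 ≤ k)
    (h : ∀ u v : V, G.Adj u v → R.edist u v ≤ k) :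
    ∀ u v : V, R.edist u v ≤ (k : ℕ∞) * G.edist u v := by
  intro u v
  by_cases hr : G.Reachable u v
  · obtain ⟨p, hp⟩ := hr.exists_walk_length_eq_edist
    rw [← hp]
    exact edist_le_mul h p
  · rw [edist_eq_top_of_not_reachable hr, ENat.mul_top]
    · exact le_top
    · exact_mod_cast Nat.one_le_iff_ne_zero.mp hk

lemma bad_count {H : SimpleGraph V} [DecidableRel H.Adj] (hb : BAD H) :
    Fintype.card V + 1 ≤ H.edgeFinset.card + ncc H := by
  classical
  obtain ⟨u, v, hadj, hreach⟩ := hb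
  set S' : Finset (Sym2 V) := H.edgeFinset.erase s(u,v) with hS'
  have hcard : S'.card + 1 = H.edgeFinset.card := by
    rw [hS', Finset.card_erase_of_mem (SimpleGraph.mem_edgeFinset.mpr (H.mem_edgeSet.mpr hadj))]
    have : 1 ≤ H.edgeFinset.card := Finset.card_pos.mpr
      ⟨_, SimpleGraph.mem_edgeFinset.mpr (H.mem_edgeSet.mpr hadj)⟩
    omega
  have hn := card_ncc_ge S'
  -- gg S' ≤ H.deleteEdges {s(u,v)}  and conversely components compare
  have hup : ncc (gg S') ≤ ncc H := by
    refine ncc_le ?_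
    intro a b hab
    by_cases he : s(a,b) = s(u,v)
    · -- this is the deleted edge: use the detour
      have : (H.deleteEdges {s(u,v)}).Reachable a b := by
        rw [Sym2.eq_iff] at he
        rcases he with ⟨rfl, rfl⟩ | ⟨rfl, rfl⟩
        · exact hreach
        · exact hreach.symm
      refine reach_trans ?_ this
      intro x y hxy
      rw [SimpleGraph.deleteEdges_adj] at hxy
      obtain ⟨hxyH, hxyne⟩ := hxy
      refine ⟨SimpleGraph.Adj.toWalk ?_⟩
      rw [gg, SimpleGraph.fromEdgeSet_adj]
      refine ⟨?_, hxyH.ne⟩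
      rw [hS']
      have hne2 : s(x,y) ≠ s(u,v) := by simpa using hxyne
      exact_mod_cast Finset.mem_erase.mpr
        ⟨hne2, SimpleGraph.mem_edgeFinset.mpr (H.mem_edgeSet.mpr hxyH)⟩
    · refine ⟨SimpleGraph.Adj.toWalk ?_⟩
      rw [gg, SimpleGraph.fromEdgeSet_adj]
      refine ⟨?_, hab.ne⟩
      rw [hS']
      exact_mod_cast Finset.mem_erase.mpr
        ⟨he, SimpleGraph.mem_edgeFinset.mpr (H.mem_edgeSet.mpr hab)⟩
  omega

end S6

section S7
variable {V : Type*} [Fintype V] [DecidableEq V]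

lemma ncard_gg {S : Finset (Sym2 V)} (h : ∀ e ∈ S, ¬ e.IsDiag) :
    (gg S).edgeSet.ncard = S.card := by
  have hset : (gg S).edgeSet = ↑S := by
    rw [gg, edgeSet_fromEdgeSet]
    ext e
    simp only [Set.mem_diff, Finset.mem_coe, Set.mem_setOf_eq]
    exact ⟨fun hh => hh.1, fun hh => ⟨hh, h e hh⟩⟩
  rw [hset, Set.ncard_coe_finset]

end S7

end Span6

/-- there is a constant `C` such that for all sufficiently large `n`
and every `k > (2/3)n + C`, for every `k`-spanner `H` of an `n`-vertex graph `G`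
there is a `k`-spanner `R` of `G` with girth at least `k+2` and at most as many
edges as `H`. -/
theorem exists_highGirth_spanner_no_blowup :
    ∃ C N : ℕ, ∀ n : ℕ, N ≤ n → ∀ k : ℕ, 2 * n + 3 * C < 3 * k →
      ∀ G H : SimpleGraph (Fin n), IsKSpanner G H k →
        ∃ R : SimpleGraph (Fin n), R ≤ G ∧ IsKSpanner G R k ∧
          (k + 2 : ℕ∞) ≤ R.egirth ∧ R.edgeSet.ncard ≤ H.edgeSet.ncard := by
  classical
  refine ⟨0, 0, ?_⟩
  rintro n - k hk G H ⟨hHG, hH⟩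
  letI : DecidableRel G.Adj := Classical.decRel _
  letI : DecidableRel H.Adj := Classical.decRel _
  have hcard : Fintype.card (Fin n) = n := Fintype.card_fin n
  have hn : 2 * Fintype.card (Fin n) < 3 * k := by omega
  have hk1 : 1 ≤ k := by omega
  set LH := H.edgeFinset.toList with hLH
  set LG := (G.edgeFinset \ H.edgeFinset).toList with hLGdef
  set L := LH ++ LG with hL
  have hLHsub : ∀ e ∈ LH, e ∈ H.edgeSet := by
    intro e he
    rw [hLH, Finset.mem_toList, SimpleGraph.mem_edgeFinset] at he
    exact he
  have hLsub : ∀ e ∈ L, e ∈ G.edgeSet := by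
    intro e he
    rw [hL, List.mem_append] at he
    rcases he with he | he
    · exact SimpleGraph.edgeSet_mono hHG (hLHsub e he)
    · rw [hLGdef, Finset.mem_toList, Finset.mem_sdiff] at he
      exact SimpleGraph.mem_edgeFinset.mp he.1
  have hLnd : ∀ e ∈ L, ¬ e.IsDiag := fun e he =>
    (G.not_isDiag_of_mem_edgeSet (hLsub e he))
  have hLall : ∀ e ∈ G.edgeFinset, e ∈ L := by
    intro e he
    rw [hL, List.mem_append]
    by_cases heH : e ∈ H.edgeFinset
    · exact Or.inl (by rw [hLH, Finset.mem_toList]; exact heH)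
    · exact Or.inr (by rw [hLGdef, Finset.mem_toList, Finset.mem_sdiff]; exact ⟨he, heH⟩)
  set T := Span6.greedy k L (∅ : Finset (Sym2 (Fin n))) with hT
  set R := Span6.gg T with hR
  have hTsub : ↑T ⊆ G.edgeSet := by
    intro e he
    have hmem := Span6.greedy_subset k L (∅ : Finset (Sym2 (Fin n))) (by exact_mod_cast he)
    rw [Finset.mem_union, List.mem_toFinset] at hmem
    rcases hmem with h | h
    · simp at h
    · exact hLsub e h
  have hRG : R ≤ G := by
    rw [hR, Span6.gg]
    calc SimpleGraph.fromEdgeSet ↑T ≤ SimpleGraph.fromEdgeSet G.edgeSet :=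
          SimpleGraph.fromEdgeSet_mono hTsub
      _ = G := SimpleGraph.fromEdgeSet_edgeSet G
  have hedge : ∀ u v : Fin n, G.Adj u v → R.edist u v ≤ k := by
    intro u v huv
    have hmem : s(u,v) ∈ L := hLall _ (SimpleGraph.mem_edgeFinset.mpr huv)
    exact Span6.greedy_spans k hk1 L ∅ hLnd _ hmem u v rfl
  have hspan : ∀ u v : Fin n, R.edist u v ≤ (k : ℕ∞) * G.edist u v :=
    Span6.spanner_of_edges hk1 hedge
  have hgood : Span6.Good k T := Span6.greedy_good L ∅ hLnd (Span6.good_empty k)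
  have hgirth : (k + 2 : ℕ∞) ≤ R.egirth := by
    rw [SimpleGraph.le_egirth]
    intro a w hw
    have := hgood a w hw
    exact_mod_cast this
  have hHcard : H.edgeSet.ncard = H.edgeFinset.card := by
    rw [← SimpleGraph.coe_edgeFinset, Set.ncard_coe_finset]
  have hRcard : R.edgeSet.ncard = T.card := by
    rw [hR]
    exact Span6.ncard_gg
      (fun e he => G.not_isDiag_of_mem_edgeSet (hTsub (Finset.mem_coe.mpr he)))
  refine ⟨R, hRG, ⟨hRG, hspan⟩, hgirth, ?_⟩
  rw [hRcard, hHcard]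
  rcases Span6.phase1 (k := k) H LH ∅ hLHsub (Finset.nodup_toList _) (by simp) (by simp)
    with hbad | hall
  · -- some H-edge skipped: H has a cycle and we can afford one extra edge
    have hcount := Span6.greedy_count hn L ∅ hLnd (Span6.not_sc_empty k)
    have hbase : (∅ : Finset (Sym2 (Fin n))).card +
        Span6.ncc (Span6.gg (∅ : Finset (Sym2 (Fin n)))) = 0 + Fintype.card (Fin n) := by
      rw [Finset.card_empty, Span6.ncc_bot]
    have h1 : T.card + Span6.ncc R ≤ Fintype.card (Fin n) + 1 := by
      rw [hR]
      rcases hcount with ⟨h, -⟩ | h <;> rw [← hT] at h <;> omega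
    have h2 := Span6.bad_count hbad
    have h3 : Span6.ncc H ≤ Span6.ncc R := by
      refine Span6.ncc_le ?_
      intro a b hab
      have hG : G.Adj a b := hRG hab
      have hHd := hH a b
      rw [SimpleGraph.edist_eq_one_iff_adj.mpr hG, mul_one] at hHd
      exact SimpleGraph.reachable_of_edist_ne_top (hHd.trans_lt (ENat.coe_lt_top k)).ne
    omega
  · -- every H-edge added: phase 2 adds nothing, so R ⊆ H
    set T₁ := Span6.greedy k LH (∅ : Finset (Sym2 (Fin n))) with hT₁
    have hHle : H ≤ Span6.gg T₁ := by
      have hsub : H.edgeSet ⊆ ↑T₁ := by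
        rw [← SimpleGraph.coe_edgeFinset]
        intro e he
        have he' : e ∈ H.edgeFinset := by exact_mod_cast he
        exact_mod_cast hall e (by rw [hLH, Finset.mem_toList]; exact he')
      calc H = SimpleGraph.fromEdgeSet H.edgeSet := (SimpleGraph.fromEdgeSet_edgeSet H).symm
        _ ≤ Span6.gg T₁ := SimpleGraph.fromEdgeSet_mono hsub
    have hnoop : Span6.greedy k LG T₁ = T₁ := by
      refine Span6.phase2_noop LG T₁ ?_
      rintro e he u v rfl
      have heG : s(u,v) ∈ G.edgeSet := hLsub _ (by rw [hL, List.mem_append]; exact Or.inr he)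
      have hGadj : G.Adj u v := (G.mem_edgeSet).mp heG
      have hHd := hH u v
      rw [SimpleGraph.edist_eq_one_iff_adj.mpr hGadj, mul_one] at hHd
      exact le_trans (SimpleGraph.edist_anti hHle) hHd
    have hTT : T = T₁ := by rw [hT, hL, Span6.greedy_append, ← hT₁, hnoop]
    have hT1sub : T₁ ⊆ H.edgeFinset := by
      intro e he
      have hmem := Span6.greedy_subset k LH ∅ he
      rw [Finset.mem_union, List.mem_toFinset] at hmem
      rcases hmem with h | h
      · simp at h
      · rw [hLH] at h
        exact Finset.mem_toList.mp h
    rw [hTT]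
    exact Finset.card_le_card hT1sub
end

section
/- There exists a constant C such that for all sufficiently large n and every integer k > (2/3)n + C, every simple graph G on n vertices has at least one minimum k-spanner whose girth is at least k+2 (i.e., (n,k) is a good pair). -/
open SimpleGraph

variable {V : Type*}

/-- along a walk, distances multiply -/
lemma edist_le_mul_walk {G H : SimpleGraph V} {k : ℕ}
    (hk : ∀ u v : V, G.Adj u v → H.edist u v ≤ (k : ℕ∞)) :
    ∀ {u v : V} (p : G.Walk u v), H.edist u v ≤ (k : ℕ∞) * p.length := by
  intro u v p
  induction p with
  | nil => simp
  | cons h p ih =>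
    rename_i a b c
    calc H.edist a c ≤ H.edist a b + H.edist b c := SimpleGraph.edist_triangle
    _ ≤ (k : ℕ∞) + (k : ℕ∞) * p.length := add_le_add (hk _ _ h) ih
    _ = (k : ℕ∞) * (p.length + 1) := by ring
    _ = (k : ℕ∞) * ((p.cons h).length) := by
        rw [SimpleGraph.Walk.length_cons]; push_cast; ring

lemma isKSpanner_of_edges {G H : SimpleGraph V} {k : ℕ} (hle : H ≤ G) (hk1 : 1 ≤ k)
    (hk : ∀ u v : V, G.Adj u v → H.edist u v ≤ (k : ℕ∞)) : IsKSpanner G H k := by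
  refine ⟨hle, fun u v => ?_⟩
  by_cases hr : G.Reachable u v
  · obtain ⟨p, hp⟩ := hr.exists_walk_length_eq_edist
    calc H.edist u v ≤ (k : ℕ∞) * p.length := edist_le_mul_walk hk p
    _ = (k : ℕ∞) * G.edist u v := by rw [hp]
  · rw [SimpleGraph.edist_eq_top_of_not_reachable hr, ENat.mul_top]
    · exact le_top
    · exact_mod_cast Nat.one_le_iff_ne_zero.mp hk1

lemma isKSpanner_self {G : SimpleGraph V} {k : ℕ} (hk1 : 1 ≤ k) : IsKSpanner G G k := by
  refine ⟨le_rfl, fun u v => ?_⟩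
  nth_rewrite 1 [← one_mul (G.edist u v)]
  exact mul_le_mul_left (by exact_mod_cast hk1) _

lemma spanner_reachable {G H : SimpleGraph V} {k : ℕ} (hS : IsKSpanner G H k)
    {u v : V} (h : G.Reachable u v) : H.Reachable u v := by
  rw [← SimpleGraph.edist_ne_top_iff_reachable] at h ⊢
  intro htop
  apply h
  have := hS.2 u v
  rw [htop] at this
  rcases eq_or_ne (G.edist u v) ⊤ with h'|h'
  · exact h'
  · exact absurd (top_le_iff.mp this) (WithTop.mul_ne_top (ENat.coe_ne_top k) h')

/-- existence of a minimum spanner -/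
lemma exists_min_spanner (G : SimpleGraph V) {k : ℕ} (hk1 : 1 ≤ k) :
    ∃ H, IsMinKSpanner G H k := by
  classical
  let S : Set ℕ := {m | ∃ H, IsKSpanner G H k ∧ H.edgeSet.ncard = m}
  have hne : S.Nonempty := ⟨_, G, isKSpanner_self hk1, rfl⟩
  obtain ⟨H, hH, hcard⟩ : ∃ H, IsKSpanner G H k ∧ H.edgeSet.ncard = sInf S :=
    Nat.sInf_mem hne
  exact ⟨H, hH, fun H' hH' => hcard ▸ Nat.sInf_le ⟨H', hH', rfl⟩⟩

variable {V : Type*} [Fintype V] [DecidableEq V]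

noncomputable def nc (Γ : SimpleGraph V) : ℕ := Nat.card Γ.ConnectedComponent

lemma nc_bot : nc (⊥ : SimpleGraph V) = Fintype.card V := by
  rw [nc, ← Nat.card_eq_fintype_card]
  symm
  apply Nat.card_eq_of_bijective (fun v => (⊥ : SimpleGraph V).connectedComponentMk v)
  constructor
  · intro a b h
    exact reachable_bot.mp (ConnectedComponent.exact h)
  · exact fun K => K.ind (fun v => ⟨v, rfl⟩)

/-- the canonical map on components induced by reachability inclusion -/
noncomputable def compMap {Γ Δ : SimpleGraph V}
    (h : ∀ u v, Γ.Reachable u v → Δ.Reachable u v) :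
    Γ.ConnectedComponent → Δ.ConnectedComponent :=
  ConnectedComponent.lift (fun v => Δ.connectedComponentMk v)
    (fun _ _ p _ => ConnectedComponent.sound (h _ _ p.reachable))

@[simp] lemma compMap_mk {Γ Δ : SimpleGraph V}
    (h : ∀ u v, Γ.Reachable u v → Δ.Reachable u v) (v : V) :
    compMap h (Γ.connectedComponentMk v) = Δ.connectedComponentMk v := rfl

lemma nc_le_of_reach {Γ Δ : SimpleGraph V}
    (h : ∀ u v, Γ.Reachable u v → Δ.Reachable u v) : nc Δ ≤ nc Γ :=
  Nat.card_le_card_of_surjective (compMap h)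
    (fun K => K.ind (fun v => ⟨Γ.connectedComponentMk v, rfl⟩))

lemma walk_delete_trichotomy (Γ : SimpleGraph V) (u v : V) {x y : V} (w : Γ.Walk x y) :
    (Γ.deleteEdges {s(u,v)}).Reachable x y ∨
      (((Γ.deleteEdges {s(u,v)}).Reachable x u ∨ (Γ.deleteEdges {s(u,v)}).Reachable x v) ∧
       ((Γ.deleteEdges {s(u,v)}).Reachable y u ∨ (Γ.deleteEdges {s(u,v)}).Reachable y v)) := by
  induction w with
  | nil => exact Or.inl (Reachable.refl _)
  | @cons a b c h p ih =>
    by_cases he : s(a,b) = s(u,v)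
    · have hab : (a = u ∧ b = v) ∨ (a = v ∧ b = u) := by
        rw [Sym2.eq_iff] at he; tauto
      have ha : (Γ.deleteEdges {s(u,v)}).Reachable a u ∨
          (Γ.deleteEdges {s(u,v)}).Reachable a v := by
        rcases hab with ⟨rfl, rfl⟩|⟨rfl, rfl⟩
        · exact Or.inl (Reachable.refl _)
        · exact Or.inr (Reachable.refl _)
      have hb : (Γ.deleteEdges {s(u,v)}).Reachable b u ∨
          (Γ.deleteEdges {s(u,v)}).Reachable b v := by
        rcases hab with ⟨rfl, rfl⟩|⟨rfl, rfl⟩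
        · exact Or.inr (Reachable.refl _)
        · exact Or.inl (Reachable.refl _)
      refine Or.inr ⟨ha, ?_⟩
      rcases ih with h2|⟨_, hy⟩
      · rcases hb with h3|h3
        · exact Or.inl (h2.symm.trans h3)
        · exact Or.inr (h2.symm.trans h3)
      · exact hy
    · have hadj : (Γ.deleteEdges {s(u,v)}).Adj a b := by
        rw [SimpleGraph.deleteEdges_adj]
        exact ⟨h, by simpa using he⟩
      rcases ih with h2|⟨hb', hy⟩
      · exact Or.inl (hadj.reachable.trans h2)
      · refine Or.inr ⟨?_, hy⟩
        rcases hb' with h1|h1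
        · exact Or.inl (hadj.reachable.trans h1)
        · exact Or.inr (hadj.reachable.trans h1)

lemma reach_delete_of_reach_endpoints {Γ : SimpleGraph V} {u v : V}
    (huv : (Γ.deleteEdges {s(u,v)}).Reachable u v) {x y : V} (h : Γ.Reachable x y) :
    (Γ.deleteEdges {s(u,v)}).Reachable x y := by
  obtain ⟨w⟩ := h
  rcases walk_delete_trichotomy Γ u v w with h1|⟨hx, hy⟩
  · exact h1
  · have hx' : (Γ.deleteEdges {s(u,v)}).Reachable x u := by
      rcases hx with h1|h1
      · exact h1
      · exact h1.trans huv.symm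
    have hy' : (Γ.deleteEdges {s(u,v)}).Reachable y u := by
      rcases hy with h1|h1
      · exact h1
      · exact h1.trans huv.symm
    exact hx'.trans hy'.symm

section psi
variable (Γ : SimpleGraph V) (u v : V)

open Classical in
private noncomputable def psi :
    (Γ.deleteEdges {s(u,v)}).ConnectedComponent → Γ.ConnectedComponent ⊕ Unit := fun K =>
  if K = (Γ.deleteEdges {s(u,v)}).connectedComponentMk v then Sum.inr ()
  else Sum.inl (compMap (fun _ _ h => h.mono (Γ.deleteEdges_le _)) K)

lemma psi_injective : Function.Injective (psi Γ u v) := by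
  intro K1 K2 h
  induction K1 using ConnectedComponent.ind with | _ x =>
  induction K2 using ConnectedComponent.ind with | _ y =>
  by_cases h1 : (Γ.deleteEdges {s(u,v)}).connectedComponentMk x =
      (Γ.deleteEdges {s(u,v)}).connectedComponentMk v <;>
    by_cases h2 : (Γ.deleteEdges {s(u,v)}).connectedComponentMk y =
      (Γ.deleteEdges {s(u,v)}).connectedComponentMk v <;>
    unfold psi at h
  · rw [h1, h2]
  · rw [if_pos h1, if_neg h2] at h; exact absurd h (by simp)
  · rw [if_neg h1, if_pos h2] at h; exact absurd h (by simp)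
  · rw [if_neg h1, if_neg h2] at h
    simp only [compMap_mk, Sum.inl.injEq] at h
    have hxy : Γ.Reachable x y := ConnectedComponent.exact h
    obtain ⟨w⟩ := hxy
    rcases walk_delete_trichotomy Γ u v w with h3|⟨hx, hy⟩
    · exact ConnectedComponent.sound h3
    · have hx' : (Γ.deleteEdges {s(u,v)}).Reachable x u := by
        rcases hx with h4|h4
        · exact h4
        · exact absurd (ConnectedComponent.sound h4) h1
      have hy' : (Γ.deleteEdges {s(u,v)}).Reachable y u := by
        rcases hy with h4|h4
        · exact h4
        · exact absurd (ConnectedComponent.sound h4) h2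
      exact ConnectedComponent.sound (hx'.trans hy'.symm)

lemma nc_deleteEdges_le : nc (Γ.deleteEdges {s(u,v)}) ≤ nc Γ + 1 := by
  have := Nat.card_le_card_of_injective _ (psi_injective Γ u v)
  rw [Nat.card_sum] at this
  have h1 : Nat.card Unit = 1 := Nat.card_unique
  rw [h1] at this
  exact this

lemma nc_deleteEdges_bridge (hadj : Γ.Adj u v)
    (hbr : ¬ (Γ.deleteEdges {s(u,v)}).Reachable u v) :
    nc Γ + 1 ≤ nc (Γ.deleteEdges {s(u,v)}) := by
  have hsurj : Function.Surjective (psi Γ u v) := by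
    rintro (K|⟨⟩)
    · induction K using ConnectedComponent.ind with | _ x =>
      by_cases hxv : (Γ.deleteEdges {s(u,v)}).Reachable x v
      · refine ⟨(Γ.deleteEdges {s(u,v)}).connectedComponentMk u, ?_⟩
        unfold psi
        rw [if_neg (fun h => hbr (ConnectedComponent.exact h))]
        simp only [compMap_mk, Sum.inl.injEq]
        exact ConnectedComponent.sound
          (hadj.reachable.trans ((hxv.mono (Γ.deleteEdges_le _)).symm))
      · refine ⟨(Γ.deleteEdges {s(u,v)}).connectedComponentMk x, ?_⟩
        unfold psi
        rw [if_neg (fun h => hxv (ConnectedComponent.exact h))]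
        simp
    · exact ⟨(Γ.deleteEdges {s(u,v)}).connectedComponentMk v, by unfold psi; simp⟩
  have := Nat.card_le_card_of_surjective _ hsurj
  rw [Nat.card_sum] at this
  have h1 : Nat.card Unit = 1 := Nat.card_unique
  rw [h1] at this
  exact this

end psi

lemma isAcyclic_mono {Γ Δ : SimpleGraph V} (h : Γ ≤ Δ) (ha : Δ.IsAcyclic) : Γ.IsAcyclic :=
  fun _ c hc => ha (c.mapLe h) (hc.mapLe h)

lemma card_le_ncard_add_nc : ∀ (m : ℕ) (Γ : SimpleGraph V), Γ.edgeSet.ncard = m →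
    Fintype.card V ≤ m + nc Γ := by
  intro m
  induction m using Nat.strong_induction_on with
  | _ m ih =>
    intro Γ hm
    rcases Nat.eq_zero_or_pos m with rfl|hpos
    · have hbot : Γ = ⊥ := by
        rw [← SimpleGraph.edgeSet_eq_empty]
        exact (Set.ncard_eq_zero (Set.toFinite _)).mp hm
      subst hbot
      rw [nc_bot]
      omega
    · have hne : Γ.edgeSet.Nonempty := by
        rw [Set.nonempty_iff_ne_empty]
        intro h
        rw [h, Set.ncard_empty] at hm
        omega
      obtain ⟨e, he⟩ := hne
      induction e using Sym2.ind with | _ u v =>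
      have hdel : (Γ.deleteEdges {s(u,v)}).edgeSet.ncard = m - 1 := by
        rw [SimpleGraph.edgeSet_deleteEdges,
          Set.ncard_diff_singleton_of_mem he, hm]
      have h2 := ih (m-1) (by omega) _ hdel
      have h3 := nc_deleteEdges_le Γ u v
      omega

lemma acyclic_ncard_add_nc_le : ∀ (m : ℕ) (Γ : SimpleGraph V), Γ.IsAcyclic →
    Γ.edgeSet.ncard = m → m + nc Γ ≤ Fintype.card V := by
  intro m
  induction m using Nat.strong_induction_on with
  | _ m ih =>
    intro Γ hac hm
    rcases Nat.eq_zero_or_pos m with rfl|hpos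
    · have hbot : Γ = ⊥ := by
        rw [← SimpleGraph.edgeSet_eq_empty]
        exact (Set.ncard_eq_zero (Set.toFinite _)).mp hm
      subst hbot
      rw [nc_bot]
      omega
    · have hne : Γ.edgeSet.Nonempty := by
        rw [Set.nonempty_iff_ne_empty]
        intro h
        rw [h, Set.ncard_empty] at hm
        omega
      obtain ⟨e, he⟩ := hne
      induction e using Sym2.ind with | _ u v =>
      have hbridge : Γ.IsBridge s(u,v) := isAcyclic_iff_forall_edge_isBridge.mp hac he
      rw [isBridge_iff] at hbridge
      have hbr : ¬ (Γ.deleteEdges {s(u,v)}).Reachable u v := hbridge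
      have hdel : (Γ.deleteEdges {s(u,v)}).edgeSet.ncard = m - 1 := by
        rw [SimpleGraph.edgeSet_deleteEdges,
          Set.ncard_diff_singleton_of_mem he, hm]
      have hac' : (Γ.deleteEdges {s(u,v)}).IsAcyclic :=
        isAcyclic_mono (Γ.deleteEdges_le _) hac
      have h2 := ih (m-1) (by omega) _ hac' hdel
      have h3 := nc_deleteEdges_bridge Γ u v ((SimpleGraph.mem_edgeSet Γ).mp he) hbr
      omega

/-- the graphic-matroid fact: a forest has at most as many edges as any graph with
larger reachability. -/
lemma acyclic_ncard_le {A B : SimpleGraph V} (hA : A.IsAcyclic)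
    (h : ∀ u v, A.Reachable u v → B.Reachable u v) :
    A.edgeSet.ncard ≤ B.edgeSet.ncard := by
  have h1 := acyclic_ncard_add_nc_le _ A hA rfl
  have h2 := card_le_ncard_add_nc _ B rfl
  have h3 := nc_le_of_reach h
  omega

section edgeadd
variable {F : SimpleGraph V} {x y : V}

lemma edgeSet_sup_edge (hnadj : ¬ F.Adj x y) (hxy : x ≠ y) :
    (F ⊔ fromEdgeSet {s(x,y)}).edgeSet = insert s(x,y) F.edgeSet := by
  rw [SimpleGraph.edgeSet_sup, SimpleGraph.edgeSet_fromEdgeSet]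
  have : ({s(x,y)} : Set (Sym2 V)) \ {e | e.IsDiag} = {s(x,y)} := by
    ext e
    simp only [Set.mem_diff, Set.mem_singleton_iff, Set.mem_setOf_eq, and_iff_left_iff_imp]
    rintro rfl
    exact fun h => hxy (Sym2.mk_isDiag_iff.mp h)
  rw [show ({s(x,y)} : Set (Sym2 V)) \ Sym2.diagSet = {s(x,y)} from this, Set.union_singleton]

lemma ncard_sup_edge (hnadj : ¬ F.Adj x y) (hxy : x ≠ y) :
    (F ⊔ fromEdgeSet {s(x,y)}).edgeSet.ncard = F.edgeSet.ncard + 1 := by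
  rw [edgeSet_sup_edge hnadj hxy]
  rw [Set.ncard_insert_of_notMem (fun h => hnadj ((SimpleGraph.mem_edgeSet F).mp h))
    (Set.toFinite _)]

lemma sup_edge_deleteEdges (hnadj : ¬ F.Adj x y) :
    (F ⊔ fromEdgeSet {s(x,y)}).deleteEdges {s(x,y)} = F := by
  ext a b
  simp only [SimpleGraph.deleteEdges_adj, SimpleGraph.sup_adj, SimpleGraph.fromEdgeSet_adj,
    Set.mem_singleton_iff]
  constructor
  · rintro ⟨h1 | ⟨h1, h2⟩, h3⟩
    · exact h1
    · exact absurd h1 h3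
  · intro h
    refine ⟨Or.inl h, fun hc => hnadj ?_⟩
    rw [Sym2.eq_iff] at hc
    rcases hc with ⟨rfl, rfl⟩ | ⟨rfl, rfl⟩
    · exact h
    · exact h.symm

lemma walk_avoid_to_base {u v : V} (hnadj : ¬ F.Adj x y)
    (w : (F ⊔ fromEdgeSet {s(x,y)}).Walk u v) (he : ∀ e ∈ w.edges, e ≠ s(x,y)) :
    ∀ e ∈ w.edges, e ∈ F.edgeSet := by
  intro e hee
  have h1 := w.edges_subset_edgeSet hee
  rw [SimpleGraph.edgeSet_sup, SimpleGraph.edgeSet_fromEdgeSet] at h1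
  rcases h1 with h1 | ⟨h1, _⟩
  · exact h1
  · exact absurd (Set.mem_singleton_iff.mp h1) (he e hee)

lemma isAcyclic_sup_edge (hF : F.IsAcyclic) (hxy : x ≠ y)
    (hnr : ¬ F.Reachable x y) : (F ⊔ fromEdgeSet {s(x,y)}).IsAcyclic := by
  have hnadj : ¬ F.Adj x y := fun h => hnr h.reachable
  intro a c hc
  by_cases he : s(x,y) ∈ c.edges
  · have h1 := SimpleGraph.adj_and_reachable_delete_edges_iff_exists_cycle.mpr ⟨a, c, hc, he⟩
    apply hnr
    have heq : (F ⊔ fromEdgeSet {s(x,y)}).deleteEdges {s(x,y)} = F :=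
      sup_edge_deleteEdges hnadj
    rw [heq] at h1
    exact h1.2
  · have hF' : ∀ e ∈ c.edges, e ∈ F.edgeSet :=
      walk_avoid_to_base hnadj c (fun e hee h => he (h ▸ hee))
    exact hF _ (hc.transfer hF')

end edgeadd

lemma reach_of_adj_reach {G F : SimpleGraph V}
    (h : ∀ a b, G.Adj a b → F.Reachable a b) {u v : V} (hr : G.Reachable u v) :
    F.Reachable u v := by
  obtain ⟨w⟩ := hr
  induction w with
  | nil => exact Reachable.refl _
  | @cons a b c hab p ih => exact (h a b hab).trans ih

/-- existence of a spanning forest (maximal acyclic subgraph) -/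
lemma exists_spanning_forest (G : SimpleGraph V) :
    ∃ F, F ≤ G ∧ F.IsAcyclic ∧ ∀ u v, G.Reachable u v → F.Reachable u v := by
  classical
  obtain ⟨F, hF, hmax⟩ := Set.Finite.exists_maximalFor (fun F => F.edgeSet.ncard)
    {F | F ≤ G ∧ F.IsAcyclic} (Set.toFinite _) ⟨⊥, bot_le, SimpleGraph.isAcyclic_bot⟩
  refine ⟨F, hF.1, hF.2, ?_⟩
  apply reach_of_adj_reach
  intro a b hab
  by_contra hnr
  have hxy : a ≠ b := hab.ne
  have hF' : (F ⊔ fromEdgeSet {s(a,b)}) ∈ {F | F ≤ G ∧ F.IsAcyclic} := by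
    constructor
    · apply sup_le hF.1
      intro c d hcd
      rw [SimpleGraph.fromEdgeSet_adj, Set.mem_singleton_iff, Sym2.eq_iff] at hcd
      rcases hcd.1 with ⟨rfl, rfl⟩ | ⟨rfl, rfl⟩
      · exact hab
      · exact hab.symm
    · exact isAcyclic_sup_edge hF.2 hxy hnr
  have hcard := ncard_sup_edge (fun h => hnr h.reachable) hxy
  have := hmax hF' (by beta_reduce; omega)
  beta_reduce at this
  omega

lemma length_rotate' {Γ : SimpleGraph V} {a x : V} (w : Γ.Walk a a) (hx : x ∈ w.support) :
    (w.rotate x hx).length = w.length := by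
  have h := congrArg SimpleGraph.Walk.length (w.take_spec hx)
  rw [SimpleGraph.Walk.length_append] at h
  rw [SimpleGraph.Walk.rotate, SimpleGraph.Walk.length_append]
  omega

lemma egirth_sup_edge {F : SimpleGraph V} {x y : V} {k : ℕ} (hF : F.IsAcyclic)
    (hxy : x ≠ y) (hnadj : ¬ F.Adj x y) (hdist : ((k:ℕ∞)+1) ≤ F.edist x y) :
    ((k:ℕ∞)+2) ≤ (F ⊔ fromEdgeSet {s(x,y)}).egirth := by
  rw [SimpleGraph.le_egirth]
  intro a w hw
  by_cases he : s(x,y) ∈ w.edges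
  swap
  · exact absurd (hw.transfer (walk_avoid_to_base hnadj w (fun e hee h => he (h ▸ hee))))
      (hF _)
  · have hxs : x ∈ w.support := w.fst_mem_support_of_mem_edges he
    set c := w.rotate x hxs with hc_def
    have hc : c.IsCycle := hw.rotate hxs
    have hlen : c.length = w.length := length_rotate' w hxs
    have hey : s(x,y) ∈ c.edges := (w.rotate_edges x hxs).mem_iff.mpr he
    have hys : y ∈ c.support := c.snd_mem_support_of_mem_edges hey
    set q1 := c.takeUntil y hys with hq1
    set q2 := c.dropUntil y hys with hq2
    have hspec : q1.append q2 = c := c.take_spec hys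
    have hedges : q1.edges ++ q2.edges = c.edges := by
      rw [← SimpleGraph.Walk.edges_append, hspec]
    have hnodup : (q1.edges ++ q2.edges).Nodup := by
      rw [hedges]; exact hc.isTrail.edges_nodup
    have hlen2 : q1.length + q2.length = c.length := by
      have := congrArg SimpleGraph.Walk.length hspec
      rwa [SimpleGraph.Walk.length_append] at this
    have hdisj := List.disjoint_of_nodup_append hnodup
    have key : (k:ℕ∞) + 2 ≤ (q1.length + q2.length : ℕ) := by
      rw [← hedges, List.mem_append] at hey
      rcases hey with h1 | h1
      · -- edge in q1 (x → y piece? q1 : x → y? c : Walk x x, takeUntil y : x → y)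
        -- q2 : y → x avoids the edge
        have hq2F : ∀ e ∈ q2.edges, e ∈ F.edgeSet :=
          walk_avoid_to_base hnadj q2 (fun e hee h => absurd hee (fun hee' => hdisj (h.symm ▸ h1) hee'))
        have hwF : F.edist x y ≤ q2.length := by
          have := SimpleGraph.edist_le ((q2.transfer F hq2F).reverse)
          rwa [SimpleGraph.Walk.length_reverse, SimpleGraph.Walk.length_transfer] at this
        have h1len : 1 ≤ q1.length := by
          have hne : q1.edges ≠ [] := fun hnil => by rw [hnil] at h1; exact List.not_mem_nil h1
          have hl := SimpleGraph.Walk.length_edges q1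
          rcases List.exists_cons_of_ne_nil hne with ⟨hd, tl, hq⟩
          rw [hq] at hl
          simp at hl
          omega
        have : (k:ℕ∞) + 1 ≤ q2.length := le_trans hdist hwF
        calc (k:ℕ∞) + 2 ≤ (q2.length : ℕ∞) + 1 := by
              rw [show (k:ℕ∞) + 2 = ((k:ℕ∞)+1) + 1 by ring]
              exact add_le_add_left this 1
        _ ≤ (q1.length + q2.length : ℕ) := by
              push_cast
              rw [add_comm (q1.length : ℕ∞)]
              exact add_le_add_right (by exact_mod_cast h1len) _
      · -- edge in q2, q1 : x → y avoids it
        have hq1F : ∀ e ∈ q1.edges, e ∈ F.edgeSet :=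
          walk_avoid_to_base hnadj q1 (fun e hee h => absurd hee (fun hee' => hdisj hee' (h.symm ▸ h1)))
        have hwF : F.edist x y ≤ q1.length := by
          have := SimpleGraph.edist_le (q1.transfer F hq1F)
          rwa [SimpleGraph.Walk.length_transfer] at this
        have h1len : 1 ≤ q2.length := by
          have hne : q2.edges ≠ [] := fun hnil => by rw [hnil] at h1; exact List.not_mem_nil h1
          have hl := SimpleGraph.Walk.length_edges q2
          rcases List.exists_cons_of_ne_nil hne with ⟨hd, tl, hq⟩
          rw [hq] at hl
          simp at hl
          omega
        have : (k:ℕ∞) + 1 ≤ q1.length := le_trans hdist hwF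
        calc (k:ℕ∞) + 2 ≤ (q1.length : ℕ∞) + 1 := by
              rw [show (k:ℕ∞) + 2 = ((k:ℕ∞)+1) + 1 by ring]
              exact add_le_add_left this 1
        _ ≤ (q1.length + q2.length : ℕ) := by
              push_cast
              exact add_le_add_right (by exact_mod_cast h1len) _
    rw [hlen2, hlen] at key
    exact key

lemma exists_first_hit {Γ : SimpleGraph V} {u v : V} (P : Γ.Walk u v) (T : Set V)
    (hT : ∃ z ∈ P.support, z ∈ T) :
    ∃ (a : V) (P1 : Γ.Walk u a) (P2 : Γ.Walk a v), a ∈ T ∧ P1.append P2 = P ∧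
      ∀ z ∈ P1.support, z ∈ T → z = a := by
  induction P with
  | nil =>
    obtain ⟨z, hz, hzT⟩ := hT
    rw [SimpleGraph.Walk.support_nil, List.mem_singleton] at hz
    subst hz
    exact ⟨z, SimpleGraph.Walk.nil, SimpleGraph.Walk.nil, hzT, rfl, by simp⟩
  | @cons a b c h p ih =>
    by_cases ha : a ∈ T
    · exact ⟨a, SimpleGraph.Walk.nil, SimpleGraph.Walk.cons h p, ha, rfl, by simp⟩
    · have hT' : ∃ z ∈ p.support, z ∈ T := by
        obtain ⟨z, hz, hzT⟩ := hT
        rw [SimpleGraph.Walk.support_cons, List.mem_cons] at hz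
        rcases hz with rfl | hz
        · exact absurd hzT ha
        · exact ⟨z, hz, hzT⟩
      obtain ⟨a', P1, P2, h1, h2, h3⟩ := ih hT'
      refine ⟨a', SimpleGraph.Walk.cons h P1, P2, h1,
        by rw [SimpleGraph.Walk.cons_append, h2], ?_⟩
      intro z hz hzT
      rw [SimpleGraph.Walk.support_cons, List.mem_cons] at hz
      rcases hz with rfl | hz
      · exact absurd hzT ha
      · exact h3 z hz hzT

section geom
variable {F : SimpleGraph V} {x y : V}

lemma edist_sup_edge_le_walk {p q : V} (w : F.Walk p q) :
    (F ⊔ fromEdgeSet {s(x,y)}).edist p q ≤ (w.length : ℕ∞) := by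
  have h := SimpleGraph.edist_le (w.mapLe (le_sup_left : F ≤ F ⊔ fromEdgeSet {s(x,y)}))
  rwa [SimpleGraph.Walk.mapLe, SimpleGraph.Walk.length_map] at h

lemma two_edist_le (hxy : x ≠ y) {a b : V} {Q : F.Walk x y}
    (ha : a ∈ Q.support) (hb : b ∈ Q.support) :
    2 * (F ⊔ fromEdgeSet {s(x,y)}).edist a b ≤ (Q.length : ℕ∞) + 1 := by
  set S := F ⊔ fromEdgeSet {s(x,y)} with hS
  have hSxy : S.Adj x y := by
    rw [hS, SimpleGraph.sup_adj, SimpleGraph.fromEdgeSet_adj]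
    exact Or.inr ⟨rfl, hxy⟩
  have hexy : S.edist x y ≤ 1 := le_of_eq (SimpleGraph.edist_eq_one_iff_adj.mpr hSxy)
  have hQlen : (Q.takeUntil a ha).length + (Q.dropUntil a ha).length = Q.length := by
    have := congrArg SimpleGraph.Walk.length (Q.take_spec ha)
    rwa [SimpleGraph.Walk.length_append] at this
  have hb' : b ∈ (Q.takeUntil a ha).support ∨ b ∈ (Q.dropUntil a ha).support := by
    rw [← Q.take_spec ha, SimpleGraph.Walk.mem_support_append_iff] at hb
    exact hb
  rcases hb' with hb1 | hb2
  · -- b on the x→a piece : route1 b→a ; route2 a→y, y→x, x→b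
    set Q1 := Q.takeUntil a ha with hQ1
    set W1 := Q1.takeUntil b hb1 with hW1   -- x → b
    set W2 := Q1.dropUntil b hb1 with hW2   -- b → a
    have hWlen : W1.length + W2.length = Q1.length := by
      have := congrArg SimpleGraph.Walk.length (Q1.take_spec hb1)
      rwa [SimpleGraph.Walk.length_append] at this
    have h1 : S.edist a b ≤ (W2.length : ℕ∞) := by
      have := edist_sup_edge_le_walk (F := F) (x := x) (y := y) W2.reverse
      rwa [SimpleGraph.Walk.length_reverse] at this
    have h2 : S.edist a b ≤ ((Q.dropUntil a ha).length : ℕ∞) + 1 + W1.length := by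
      calc S.edist a b ≤ S.edist a y + S.edist y b := SimpleGraph.edist_triangle
      _ ≤ S.edist a y + (S.edist y x + S.edist x b) :=
          add_le_add_right SimpleGraph.edist_triangle _
      _ ≤ ((Q.dropUntil a ha).length : ℕ∞) + (1 + (W1.length : ℕ∞)) := by
          apply add_le_add
          · exact edist_sup_edge_le_walk (Q.dropUntil a ha)
          · exact add_le_add (by rwa [SimpleGraph.edist_comm]) (edist_sup_edge_le_walk W1)
      _ = ((Q.dropUntil a ha).length : ℕ∞) + 1 + W1.length := by ring
    calc 2 * S.edist a b = S.edist a b + S.edist a b := two_mul _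
    _ ≤ ((W2.length : ℕ∞)) + (((Q.dropUntil a ha).length : ℕ∞) + 1 + W1.length) :=
        add_le_add h1 h2
    _ = ((W1.length + W2.length + (Q.dropUntil a ha).length : ℕ) : ℕ∞) + 1 := by
        push_cast; ring
    _ = (Q.length : ℕ∞) + 1 := by rw [hWlen, hQlen]
  · -- b on the a→y piece : route1 a→b ; route2 a→x, x→y, y→b
    set Q2 := Q.dropUntil a ha with hQ2
    set W1 := Q2.takeUntil b hb2 with hW1   -- a → b
    set W2 := Q2.dropUntil b hb2 with hW2   -- b → y
    have hWlen : W1.length + W2.length = Q2.length := by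
      have := congrArg SimpleGraph.Walk.length (Q2.take_spec hb2)
      rwa [SimpleGraph.Walk.length_append] at this
    have h1 : S.edist a b ≤ (W1.length : ℕ∞) := edist_sup_edge_le_walk W1
    have h2 : S.edist a b ≤ ((Q.takeUntil a ha).length : ℕ∞) + 1 + W2.length := by
      calc S.edist a b ≤ S.edist a x + S.edist x b := SimpleGraph.edist_triangle
      _ ≤ S.edist a x + (S.edist x y + S.edist y b) :=
          add_le_add_right SimpleGraph.edist_triangle _
      _ ≤ ((Q.takeUntil a ha).length : ℕ∞) + (1 + (W2.length : ℕ∞)) := by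
          apply add_le_add
          · have := edist_sup_edge_le_walk (F := F) (x := x) (y := y)
              (Q.takeUntil a ha).reverse
            rw [SimpleGraph.Walk.length_reverse] at this
            exact this
          · refine add_le_add hexy ?_
            have := edist_sup_edge_le_walk (F := F) (x := x) (y := y) W2.reverse
            rwa [SimpleGraph.Walk.length_reverse] at this
      _ = ((Q.takeUntil a ha).length : ℕ∞) + 1 + W2.length := by ring
    calc 2 * S.edist a b = S.edist a b + S.edist a b := two_mul _
    _ ≤ ((W1.length : ℕ∞)) + (((Q.takeUntil a ha).length : ℕ∞) + 1 + W2.length) :=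
        add_le_add h1 h2
    _ = (((Q.takeUntil a ha).length + (W1.length + W2.length) : ℕ) : ℕ∞) + 1 := by
        push_cast; ring
    _ = (Q.length : ℕ∞) + 1 := by rw [hWlen, hQlen]

end geom

lemma sup_edge_spanner {G F : SimpleGraph V} {x y : V} {k : ℕ}
    (hreach : ∀ u v : V, G.Reachable u v → F.Reachable u v)
    (hxy : G.Adj x y) (hdx : ¬ F.edist x y ≤ (k : ℕ∞))
    (hk : 2 * Fintype.card V < 3 * k) :
    ∀ u v : V, G.Adj u v → (F ⊔ fromEdgeSet {s(x,y)}).edist u v ≤ (k : ℕ∞) := by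
  classical
  set S := F ⊔ fromEdgeSet {s(x,y)} with hSdef
  have hxyne : x ≠ y := hxy.ne
  obtain ⟨Q0⟩ := hreach x y hxy.reachable
  set Q := Q0.bypass with hQdef
  have hQpath : Q.IsPath := Q0.bypass_isPath
  have hQlen : k + 1 ≤ Q.length := by
    have h1 : (k:ℕ∞) + 1 ≤ F.edist x y := by
      rcases lt_or_ge (k : ℕ∞) (F.edist x y) with h | h
      · exact Order.add_one_le_of_lt h
      · exact absurd h hdx
    have h2 := SimpleGraph.edist_le Q
    have h3 := le_trans h1 h2
    exact_mod_cast h3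
  intro u v huv
  by_contra hbad
  have hreachS : S.Reachable u v :=
    ((hreach u v huv.reachable).mono (le_sup_left : F ≤ S))
  obtain ⟨P0, hP0⟩ := hreachS.exists_walk_length_eq_edist
  set P := P0.bypass with hPdef
  have hPpath : P.IsPath := P0.bypass_isPath
  have hPd : S.edist u v = (P.length : ℕ∞) := by
    have h1 := SimpleGraph.edist_le P
    have h2 : (P.length : ℕ∞) ≤ (P0.length : ℕ∞) := by
      exact_mod_cast P0.length_bypass_le
    exact le_antisymm h1 (le_trans h2 (le_of_eq hP0))
  have hdk : k + 1 ≤ P.length := by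
    rcases lt_or_ge (k:ℕ∞) (S.edist u v) with h | h
    · rw [hPd] at h
      have := Order.add_one_le_of_lt h
      exact_mod_cast this
    · exact absurd h hbad
  set B : Finset V := Q.support.toFinset with hBdef
  have hBcard : B.card = Q.length + 1 := by
    rw [hBdef, List.toFinset_card_of_nodup hQpath.support_nodup,
      SimpleGraph.Walk.length_support]
  by_cases hhit : ∃ z ∈ P.support, z ∈ {z : V | z ∈ Q.support}
  · obtain ⟨a, P1, P2, haT, hPsplit, hP1only⟩ := exists_first_hit P _ hhit
    have hrevhit : ∃ z ∈ P2.reverse.support, z ∈ {z : V | z ∈ Q.support} := by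
      refine ⟨a, ?_, haT⟩
      rw [SimpleGraph.Walk.support_reverse, List.mem_reverse]
      exact P2.start_mem_support
    obtain ⟨b, R1, R2, hbT, hRsplit, hR1only⟩ := exists_first_hit P2.reverse _ hrevhit
    have haQ : a ∈ Q.support := haT
    have hbQ : b ∈ Q.support := hbT
    have hedistab : 2 * S.edist a b ≤ (Q.length : ℕ∞) + 1 := two_edist_le hxyne haQ hbQ
    have hDne : S.edist a b ≠ ⊤ := by
      intro htop
      rw [htop] at hedistab
      rw [ENat.mul_top (by norm_num : (2:ℕ∞) ≠ 0)] at hedistab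
      have h3 : ((Q.length + 1 : ℕ) : ℕ∞) = ⊤ := by
        push_cast
        exact top_le_iff.mp hedistab
      exact ENat.coe_ne_top _ h3
    lift S.edist a b to ℕ using hDne with D hD
    have hPlen : P1.length + P2.length = P.length := by
      have := congrArg SimpleGraph.Walk.length hPsplit
      rwa [SimpleGraph.Walk.length_append] at this
    have hP2len : R1.length + R2.length = P2.length := by
      have := congrArg SimpleGraph.Walk.length hRsplit
      rwa [SimpleGraph.Walk.length_append, SimpleGraph.Walk.length_reverse] at this
    have htD : R2.length ≤ D := by
      have h1 : (P.length : ℕ∞) ≤ (P1.length : ℕ∞) + D + R1.length := by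
        rw [← hPd]
        calc S.edist u v ≤ S.edist u a + S.edist a v := SimpleGraph.edist_triangle
        _ ≤ S.edist u a + (S.edist a b + S.edist b v) :=
            add_le_add_right SimpleGraph.edist_triangle _
        _ ≤ (P1.length : ℕ∞) + ((D : ℕ∞) + R1.length) := by
            refine add_le_add (SimpleGraph.edist_le P1) (add_le_add (le_of_eq hD.symm) ?_)
            have := SimpleGraph.edist_le R1.reverse
            rwa [SimpleGraph.Walk.length_reverse] at this
        _ = (P1.length : ℕ∞) + D + R1.length := by ring
      have h2 : P.length ≤ P1.length + D + R1.length := by exact_mod_cast h1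
      omega
    have h2D : 2 * D ≤ Q.length + 1 := by
      exact_mod_cast hedistab
    have hPnodup := hPpath.support_nodup
    have hsupp : P.support = P1.support ++ P2.support.tail := by
      rw [← hPsplit, SimpleGraph.Walk.support_append]
    rw [hsupp] at hPnodup
    have hP1nodup : P1.support.Nodup := hPnodup.of_append_left
    have hdisjP : List.Disjoint P1.support P2.support.tail :=
      List.disjoint_of_nodup_append hPnodup
    have hP2nodup : P2.support.Nodup := by
      rw [P2.support_eq_cons]
      refine List.Nodup.cons ?_ hPnodup.of_append_right
      intro hmem
      exact hdisjP P1.end_mem_support hmem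
    have hR1nodup : R1.support.Nodup := by
      have : P2.reverse.support.Nodup := by
        rw [SimpleGraph.Walk.support_reverse]
        exact List.nodup_reverse.mpr hP2nodup
      rw [← hRsplit, SimpleGraph.Walk.support_append] at this
      exact this.of_append_left
    set A1 : Finset V := P1.support.toFinset \ B with hA1def
    set A2 : Finset V := R1.support.toFinset \ B with hA2def
    have hA1card : P1.length ≤ A1.card := by
      have hsub : P1.support.toFinset.erase a ⊆ A1 := by
        intro z hz
        rw [Finset.mem_erase] at hz
        rw [hA1def, Finset.mem_sdiff]
        refine ⟨hz.2, fun hzB => hz.1 ?_⟩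
        exact hP1only z (List.mem_toFinset.mp hz.2) (List.mem_toFinset.mp hzB)
      have h1 := Finset.card_le_card hsub
      rw [Finset.card_erase_of_mem (List.mem_toFinset.mpr P1.end_mem_support),
        List.toFinset_card_of_nodup hP1nodup, SimpleGraph.Walk.length_support] at h1
      omega
    have hA2card : R1.length ≤ A2.card := by
      have hsub : R1.support.toFinset.erase b ⊆ A2 := by
        intro z hz
        rw [Finset.mem_erase] at hz
        rw [hA2def, Finset.mem_sdiff]
        refine ⟨hz.2, fun hzB => hz.1 ?_⟩
        exact hR1only z (List.mem_toFinset.mp hz.2) (List.mem_toFinset.mp hzB)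
      have h1 := Finset.card_le_card hsub
      rw [Finset.card_erase_of_mem (List.mem_toFinset.mpr R1.end_mem_support),
        List.toFinset_card_of_nodup hR1nodup, SimpleGraph.Walk.length_support] at h1
      omega
    have hd1 : Disjoint A1 B := Finset.sdiff_disjoint
    have hd2 : Disjoint A2 B := Finset.sdiff_disjoint
    have hd12 : Disjoint A1 A2 := by
      rw [Finset.disjoint_left]
      intro z hz1 hz2
      rw [hA1def, Finset.mem_sdiff] at hz1
      rw [hA2def, Finset.mem_sdiff] at hz2
      have hzP1 : z ∈ P1.support := List.mem_toFinset.mp hz1.1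
      have hzR1 : z ∈ R1.support := List.mem_toFinset.mp hz2.1
      have hza : z ≠ a := by
        intro h
        exact hz1.2 (h ▸ (List.mem_toFinset.mpr haQ))
      have hzP2 : z ∈ P2.support := by
        have h1 : z ∈ P2.reverse.support := by
          rw [← hRsplit]
          exact SimpleGraph.Walk.subset_support_append_left _ _ hzR1
        rwa [SimpleGraph.Walk.support_reverse, List.mem_reverse] at h1
      have hzt : z ∈ P2.support.tail := by
        rw [P2.support_eq_cons, List.mem_cons] at hzP2
        rcases hzP2 with h | h
        · exact absurd h hza
        · exact h
      exact hdisjP hzP1 hzt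
    have hcard : A1.card + A2.card + B.card ≤ Fintype.card V := by
      have h1 : (A1 ∪ A2 ∪ B).card = A1.card + A2.card + B.card := by
        rw [Finset.card_union_of_disjoint (by
          rw [Finset.disjoint_union_left]
          exact ⟨hd1, hd2⟩),
          Finset.card_union_of_disjoint hd12]
      calc A1.card + A2.card + B.card = (A1 ∪ A2 ∪ B).card := h1.symm
      _ ≤ Fintype.card V := Finset.card_le_univ _
    omega
  · push_neg at hhit
    have hdisj : Disjoint P.support.toFinset B := by
      rw [Finset.disjoint_left]
      intro z hz hzB
      exact hhit z (List.mem_toFinset.mp hz) (List.mem_toFinset.mp hzB)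
    have hPcard : P.support.toFinset.card = P.length + 1 := by
      rw [List.toFinset_card_of_nodup hPpath.support_nodup, SimpleGraph.Walk.length_support]
    have h1 : (P.support.toFinset ∪ B).card ≤ Fintype.card V := Finset.card_le_univ _
    rw [Finset.card_union_of_disjoint hdisj] at h1
    omega

/-- there is a constant `C` such that for all sufficiently large `n`
and every `k > (2/3)n + C`, every `n`-vertex graph has a minimum `k`-spanner of
girth at least `k+2` (i.e. `(n,k)` is a good pair). -/
theorem good_pair_upperBound :
    ∃ C N : ℕ, ∀ n : ℕ, N ≤ n → ∀ k : ℕ, 2 * n + 3 * C < 3 * k →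
      ∀ G : SimpleGraph (Fin n), ∃ H : SimpleGraph (Fin n),
        IsMinKSpanner G H k ∧ (k + 2 : ℕ∞) ≤ H.egirth := by
  refine ⟨0, 1, fun n hn k hkn G => ?_⟩
  classical
  have hcard : Fintype.card (Fin n) = n := Fintype.card_fin n
  have hk1 : 1 ≤ k := by omega
  obtain ⟨H0, hH0⟩ := exists_min_spanner G hk1
  by_cases hac : H0.IsAcyclic
  · refine ⟨H0, hH0, ?_⟩
    rw [hac.egirth_eq_top]
    exact le_top
  · -- extract a cycle edge from H0
    rw [SimpleGraph.IsAcyclic] at hac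
    push_neg at hac
    obtain ⟨w, c, hcyc⟩ := hac
    have hne : c.edges ≠ [] := by
      intro hnil
      have h3 := hcyc.three_le_length
      have hl := SimpleGraph.Walk.length_edges c
      rw [hnil] at hl
      simp at hl
      omega
    obtain ⟨e, he⟩ := List.exists_mem_of_ne_nil _ hne
    induction e using Sym2.ind with | _ p q =>
    have hpq_adj : H0.Adj p q := (SimpleGraph.mem_edgeSet H0).mp (c.edges_subset_edgeSet he)
    have hreach' : (H0.deleteEdges {s(p,q)}).Reachable p q :=
      (SimpleGraph.adj_and_reachable_delete_edges_iff_exists_cycle.mpr ⟨w, c, hcyc, he⟩).2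
    have hreachH0' : ∀ a b : Fin n, H0.Reachable a b →
        (H0.deleteEdges {s(p,q)}).Reachable a b :=
      fun a b h => reach_delete_of_reach_endpoints hreach' h
    have hH0'count : (H0.deleteEdges {s(p,q)}).edgeSet.ncard = H0.edgeSet.ncard - 1 := by
      rw [SimpleGraph.edgeSet_deleteEdges,
        Set.ncard_diff_singleton_of_mem ((SimpleGraph.mem_edgeSet H0).mpr hpq_adj)]
    have hH0pos : 1 ≤ H0.edgeSet.ncard := by
      rw [Nat.one_le_iff_ne_zero]
      intro h0
      rw [Set.ncard_eq_zero (Set.toFinite _)] at h0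
      have := ((SimpleGraph.mem_edgeSet H0).mpr hpq_adj)
      rw [h0] at this
      exact this
    obtain ⟨F, hFG, hFac, hFreach⟩ := exists_spanning_forest G
    -- F has at most (# edges of H0) - 1 edges
    have hm : F.edgeSet.ncard ≤ (H0.deleteEdges {s(p,q)}).edgeSet.ncard := by
      apply acyclic_ncard_le hFac
      intro a b h
      exact hreachH0' a b (spanner_reachable hH0.1 (h.mono hFG))
    -- F itself is not a k-spanner
    have hFnotspan : ∃ x y : Fin n, G.Adj x y ∧ ¬ F.edist x y ≤ (k : ℕ∞) := by
      by_contra hcon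
      push_neg at hcon
      have hFspan : IsKSpanner G F k := isKSpanner_of_edges hFG hk1 hcon
      have := hH0.2 F hFspan
      omega
    obtain ⟨x, y, hxyadj, hxyfar⟩ := hFnotspan
    have hxyne : x ≠ y := hxyadj.ne
    have hnadj : ¬ F.Adj x y := by
      intro h
      apply hxyfar
      rw [SimpleGraph.edist_eq_one_iff_adj.mpr h]
      exact_mod_cast hk1
    have hSle : F ⊔ fromEdgeSet {s(x,y)} ≤ G := by
      apply sup_le hFG
      intro cc dd hcd
      rw [SimpleGraph.fromEdgeSet_adj, Set.mem_singleton_iff, Sym2.eq_iff] at hcd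
      rcases hcd.1 with ⟨rfl, rfl⟩ | ⟨rfl, rfl⟩
      · exact hxyadj
      · exact hxyadj.symm
    have hSspan : IsKSpanner G (F ⊔ fromEdgeSet {s(x,y)}) k := by
      apply isKSpanner_of_edges hSle hk1
      apply sup_edge_spanner hFreach hxyadj hxyfar
      rw [hcard]
      omega
    have hSn : (F ⊔ fromEdgeSet {s(x,y)}).edgeSet.ncard = F.edgeSet.ncard + 1 :=
      ncard_sup_edge hnadj hxyne
    have hdist' : ((k : ℕ∞) + 1) ≤ F.edist x y := Order.add_one_le_of_lt (not_le.mp hxyfar)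
    refine ⟨F ⊔ fromEdgeSet {s(x,y)}, ⟨hSspan, ?_⟩, ?_⟩
    · intro H' hH'
      have h1 := hH0.2 H' hH'
      omega
    · have := egirth_sup_edge hFac hxyne hnadj hdist'
      calc ((k : ℕ∞) + 2) ≤ _ := this
end

section
/- There exists a constant C such that for all sufficiently large n and every integer k > (4/7)n + C, every connected simple graph G on n vertices has a k-spanner H of girth at least k+2 satisfying |E_H| − n ≤ 2(OPT − n) + 1, where OPT denotes the number of edges in a minimum k-spanner of G (i.e., (n,k) is a (2,O(1))-approx good pair). -/
open SimpleGraph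
open scoped symmDiff

variable {V : Type*}

/-- In a path, an edge containing the initial vertex is the first edge. -/
lemma exists_firstEdge {G : SimpleGraph V} {a b c : V} {p : G.Walk a b}
    (hp : p.IsPath) (he : s(a, c) ∈ p.edges) :
    ∃ (h : G.Adj a c) (q : G.Walk c b), p = SimpleGraph.Walk.cons h q ∧ s(a, c) ∉ q.edges := by
  cases p with
  | nil => simp at he
  | cons h q =>
    rename_i y
    rw [SimpleGraph.Walk.edges_cons, List.mem_cons] at he
    rcases he with he | he
    · have hcy : c = y := by
        rw [Sym2.eq_iff] at he
        rcases he with ⟨-, rfl⟩ | ⟨hay, -⟩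
        · rfl
        · exact absurd hay h.ne
      subst hcy
      refine ⟨h, q, rfl, ?_⟩
      have := hp.isTrail
      rw [SimpleGraph.Walk.isTrail_cons] at this
      exact this.2
    · exfalso
      have : a ∈ q.support := SimpleGraph.Walk.fst_mem_support_of_mem_edges q he
      rw [SimpleGraph.Walk.cons_isPath_iff] at hp
      exact hp.2 this

/-- From a cycle through an edge `s(u,v)`, extract a walk from `u` to `v`
avoiding that edge, one shorter than the cycle. -/
lemma cycle_detour [DecidableEq V] {G : SimpleGraph V} {a u v : V} {c : G.Walk a a}
    (hc : c.IsCycle) (he : s(u, v) ∈ c.edges) :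
    ∃ p : G.Walk u v, s(u, v) ∉ p.edges ∧ p.length + 1 = c.length := by
  have huv : G.Adj u v := c.adj_of_mem_edges he
  have hu : u ∈ c.support := c.fst_mem_support_of_mem_edges he
  set d := c.rotate u hu with hd_def
  have hd : d.IsCycle := hc.rotate hu
  have hde : s(u, v) ∈ d.edges := by
    rw [(c.rotate_edges u hu).mem_iff]; exact he
  have hdlen : d.length = c.length := by
    rw [← SimpleGraph.Walk.length_edges, ← SimpleGraph.Walk.length_edges]
    exact (c.rotate_edges u hu).perm.length_eq
  clear_value d
  obtain ⟨y, h, q, rfl⟩ := SimpleGraph.Walk.not_nil_iff.mp hd.not_nil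
  rw [SimpleGraph.Walk.cons_isCycle_iff] at hd
  obtain ⟨hq, hne⟩ := hd
  rw [SimpleGraph.Walk.edges_cons, List.mem_cons] at hde
  rw [SimpleGraph.Walk.length_cons] at hdlen
  rcases hde with hde | hde
  · have hvy : v = y := by
      rw [Sym2.eq_iff] at hde
      rcases hde with ⟨-, rfl⟩ | ⟨huy, -⟩
      · rfl
      · exact absurd huy h.ne
    subst hvy
    refine ⟨q.reverse, ?_, ?_⟩
    · rw [SimpleGraph.Walk.edges_reverse, List.mem_reverse]; exact hne
    · rw [SimpleGraph.Walk.length_reverse]; exact hdlen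
  · -- the edge is inside q; it must be the last edge of q
    have hqr : q.reverse.IsPath := hq.reverse
    have her : s(u, v) ∈ q.reverse.edges := by
      rw [SimpleGraph.Walk.edges_reverse, List.mem_reverse]; exact hde
    obtain ⟨h2, r, hqrev, hnr⟩ := exists_firstEdge hqr her
    have hvy : v ≠ y := by
      rintro rfl
      exact hne hde
    refine ⟨(r.concat h.symm).reverse, ?_, ?_⟩
    · rw [SimpleGraph.Walk.edges_reverse, List.mem_reverse,
        SimpleGraph.Walk.edges_concat, List.concat_eq_append, List.mem_append]
      rintro (hmem | hmem)
      · exact hnr hmem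
      · simp only [List.mem_singleton] at hmem
        rw [Sym2.eq_iff] at hmem
        rcases hmem with ⟨huy, -⟩ | ⟨-, hvy'⟩
        · exact h.ne huy
        · exact hvy hvy'
    · have hql : q.length = r.length + 1 := by
        have := congrArg SimpleGraph.Walk.length hqrev
        rw [SimpleGraph.Walk.length_reverse, SimpleGraph.Walk.length_cons] at this
        omega
      rw [SimpleGraph.Walk.length_reverse, SimpleGraph.Walk.length_concat]
      omega

lemma edist_le_len {G H : SimpleGraph V} {k : ℕ}
    (hadj : ∀ u v : V, G.Adj u v → H.edist u v ≤ (k : ℕ∞)) :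
    ∀ {u v : V} (p : G.Walk u v), H.edist u v ≤ (k : ℕ∞) * p.length := by
  intro u v p
  induction p with
  | nil => simp [SimpleGraph.edist_self]
  | cons h q ih =>
    rename_i x y z
    calc H.edist x z ≤ H.edist x y + H.edist y z := SimpleGraph.edist_triangle
    _ ≤ (k : ℕ∞) + (k : ℕ∞) * q.length := add_le_add (hadj _ _ h) ih
    _ = (k : ℕ∞) * (q.length + 1) := by ring
    _ = (k : ℕ∞) * ((SimpleGraph.Walk.cons h q).length) := by
        rw [SimpleGraph.Walk.length_cons]; push_cast; ring

lemma spanner_of_adj {G H : SimpleGraph V} {k : ℕ} (hk : 1 ≤ k) (hle : H ≤ G)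
    (hadj : ∀ u v : V, G.Adj u v → H.edist u v ≤ (k : ℕ∞)) :
    IsKSpanner G H k := by
  refine ⟨hle, fun u v => ?_⟩
  rcases eq_or_ne (G.edist u v) ⊤ with htop | htop
  · rw [htop, ENat.mul_top]
    · exact le_top
    · exact_mod_cast Nat.one_le_iff_ne_zero.mp hk
  · obtain ⟨p, hp⟩ := SimpleGraph.exists_walk_of_edist_ne_top htop
    calc H.edist u v ≤ (k : ℕ∞) * p.length := edist_le_len hadj p
    _ = (k : ℕ∞) * G.edist u v := by rw [← hp]

open Classical in
noncomputable def greedy [DecidableEq V] (k : ℕ) : List (V × V) → SimpleGraph V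
  | [] => ⊥
  | p :: l =>
    if (greedy k l).edist p.1 p.2 ≤ (k : ℕ∞) then greedy k l
    else greedy k l ⊔ SimpleGraph.fromEdgeSet {s(p.1, p.2)}

variable [DecidableEq V]

lemma greedy_mono {k : ℕ} (p : V × V) (l : List (V × V)) :
    greedy k l ≤ greedy k (p :: l) := by
  rw [greedy]
  split_ifs
  · exact le_refl _
  · exact le_sup_left

lemma greedy_le {G : SimpleGraph V} {k : ℕ} {l : List (V × V)}
    (hl : ∀ p ∈ l, G.Adj p.1 p.2) : greedy k l ≤ G := by
  induction l with
  | nil => exact bot_le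
  | cons p l ih =>
    have ih' := ih (fun q hq => hl q (List.mem_cons_of_mem _ hq))
    rw [greedy]
    split_ifs
    · exact ih'
    · refine sup_le ih' ?_
      intro x y hxy
      rw [SimpleGraph.fromEdgeSet_adj] at hxy
      obtain ⟨hmem, -⟩ := hxy
      rw [Set.mem_singleton_iff, Sym2.eq_iff] at hmem
      have := hl p List.mem_cons_self
      rcases hmem with ⟨rfl, rfl⟩ | ⟨rfl, rfl⟩
      · exact this
      · exact this.symm

lemma greedy_edist {G : SimpleGraph V} {k : ℕ} (hk : 1 ≤ k) {l : List (V × V)}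
    (hl : ∀ p ∈ l, G.Adj p.1 p.2) :
    ∀ p ∈ l, (greedy k l).edist p.1 p.2 ≤ (k : ℕ∞) := by
  induction l with
  | nil => intro p hp; simp at hp
  | cons q l ih =>
    intro p hp
    rcases List.mem_cons.mp hp with rfl | hp
    · rw [greedy]
      split_ifs with hd
      · exact hd
      · have hadj : (greedy k l ⊔ SimpleGraph.fromEdgeSet {s(p.1, p.2)}).Adj p.1 p.2 := by
          refine Or.inr ?_
          rw [SimpleGraph.fromEdgeSet_adj]
          exact ⟨rfl, (hl p List.mem_cons_self).ne⟩
        calc (greedy k l ⊔ SimpleGraph.fromEdgeSet {s(p.1, p.2)}).edist p.1 p.2 = 1 :=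
              SimpleGraph.edist_eq_one_iff_adj.mpr hadj
        _ ≤ (k : ℕ∞) := by exact_mod_cast hk
    · exact le_trans (SimpleGraph.edist_anti (greedy_mono q l))
        (ih (fun r hr => hl r (List.mem_cons_of_mem _ hr)) p hp)

lemma greedy_cycles {k : ℕ} {l : List (V × V)} :
    ∀ (a : V) (c : (greedy k l).Walk a a), c.IsCycle → k + 2 ≤ c.length := by
  induction l with
  | nil =>
    intro a c hc
    exact absurd hc (SimpleGraph.isAcyclic_bot c)
  | cons p l ih =>
    intro a
    by_cases hd : (greedy k l).edist p.1 p.2 ≤ (k : ℕ∞)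
    · have hEq : greedy k (p :: l) = greedy k l := by
        rw [greedy]; split_ifs; rfl
      rw [hEq]
      exact ih a
    · have hEq : greedy k (p :: l) = greedy k l ⊔ SimpleGraph.fromEdgeSet {s(p.1, p.2)} := by
        rw [greedy]; split_ifs; rfl
      rw [hEq]
      intro c hc
      by_cases he : s(p.1, p.2) ∈ c.edges
      · obtain ⟨q, hq, hqlen⟩ := cycle_detour hc he
        have hqe : ∀ e ∈ q.edges, e ∈ (greedy k l).edgeSet := by
          intro e hee
          have : e ∈ (greedy k l ⊔ SimpleGraph.fromEdgeSet {s(p.1, p.2)}).edgeSet :=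
            q.edges_subset_edgeSet hee
          rw [SimpleGraph.edgeSet_sup] at this
          rcases this with h1 | h1
          · exact h1
          · exfalso
            rw [SimpleGraph.edgeSet_fromEdgeSet] at h1
            obtain ⟨h1, -⟩ := h1
            rw [Set.mem_singleton_iff] at h1
            exact hq (h1 ▸ hee)
        have hdist : (greedy k l).edist p.1 p.2 ≤ q.length := by
          have := SimpleGraph.edist_le (q.transfer (greedy k l) hqe)
          rwa [SimpleGraph.Walk.length_transfer] at this
        have hklt : (k : ℕ∞) < q.length := lt_of_lt_of_le (lt_of_not_ge hd) hdist
        have : k < q.length := by exact_mod_cast hklt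
        omega
      · have hce : ∀ e ∈ c.edges, e ∈ (greedy k l).edgeSet := by
          intro e hee
          have : e ∈ (greedy k l ⊔ SimpleGraph.fromEdgeSet {s(p.1, p.2)}).edgeSet :=
            c.edges_subset_edgeSet hee
          rw [SimpleGraph.edgeSet_sup] at this
          rcases this with h1 | h1
          · exact h1
          · exfalso
            rw [SimpleGraph.edgeSet_fromEdgeSet] at h1
            obtain ⟨h1, -⟩ := h1
            rw [Set.mem_singleton_iff] at h1
            exact he (h1 ▸ hee)
        have := ih a (c.transfer (greedy k l) hce) (hc.transfer hce)
        rwa [SimpleGraph.Walk.length_transfer] at this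

lemma filter_toFinset_card {α : Type*} [DecidableEq α] {l : List α} (hl : l.Nodup)
    (p : α → Prop) [DecidablePred p] :
    (l.toFinset.filter p).card = l.countP (fun a => decide (p a)) := by
  rw [List.countP_eq_length_filter]
  have h1 : (l.filter (fun a => decide (p a))).toFinset = l.toFinset.filter p := by
    rw [List.toFinset_filter]
    apply Finset.filter_congr
    intro x _
    simp
  rw [← h1, List.toFinset_card_of_nodup (hl.filter _)]

lemma even_card_filter_symmDiff {α : Type*} [DecidableEq α] {s t : Finset α}
    (p : α → Prop) [DecidablePred p]
    (hs : Even ((s.filter p).card)) (ht : Even ((t.filter p).card)) :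
    Even (((s ∆ t).filter p).card) := by
  have hft : (s ∆ t).filter p = (s.filter p) ∆ (t.filter p) := by
    ext a
    simp only [Finset.mem_filter, Finset.mem_symmDiff]
    tauto
  rw [hft]
  set A := s.filter p
  set B := t.filter p
  have h1 : A ∆ B = (A ∪ B) \ (A ∩ B) := by
    ext a
    simp only [Finset.mem_symmDiff, Finset.mem_sdiff, Finset.mem_union, Finset.mem_inter]
    tauto
  have h2 : (A ∩ B) ⊆ (A ∪ B) := (Finset.inter_subset_left).trans Finset.subset_union_left
  have h3 : (A ∆ B).card = (A ∪ B).card - (A ∩ B).card := by rw [h1, Finset.card_sdiff_of_subset h2]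
  have h4 := Finset.card_union_add_card_inter A B
  have h5 : (A ∩ B).card ≤ (A ∪ B).card := Finset.card_le_card h2
  rw [Nat.even_iff] at *
  omega

lemma even_finset_card_ge [Fintype V] {H : SimpleGraph V} {g : ℕ}
    (hg : ∀ (a : V) (c : H.Walk a a), c.IsCycle → g ≤ c.length)
    (Z : Finset (Sym2 V)) (hZ : ↑Z ⊆ H.edgeSet)
    (heven : ∀ x : V, Even ((Z.filter (fun e => x ∈ e)).card))
    (hne : Z.Nonempty) : g ≤ Z.card := by
  classical
  set K := SimpleGraph.fromEdgeSet (↑Z : Set (Sym2 V)) with hK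
  have hKadj : ∀ x y : V, K.Adj x y ↔ s(x, y) ∈ Z := by
    intro x y
    rw [hK, SimpleGraph.fromEdgeSet_adj]
    constructor
    · exact fun h => by exact_mod_cast h.1
    · intro h
      exact ⟨by exact_mod_cast h, ((SimpleGraph.mem_edgeSet (G := H)).mp (hZ h)).ne⟩
  set S : Set ℕ := {m | ∃ (x y : V) (p : K.Walk x y), p.IsPath ∧ p.length = m} with hS
  obtain ⟨e0, he0⟩ := hne
  induction e0 using Sym2.ind with
  | _ x0 y0 =>
  have hadj0 : K.Adj x0 y0 := (hKadj _ _).mpr he0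
  have h1S : (1 : ℕ) ∈ S := by
    refine ⟨x0, y0, ↑(SimpleGraph.Path.singleton hadj0), (SimpleGraph.Path.singleton hadj0).2, ?_⟩
    simp [SimpleGraph.Path.singleton]
  have hbdd : BddAbove S := by
    refine ⟨Fintype.card V, ?_⟩
    rintro m ⟨x, y, p, hp, rfl⟩
    exact le_of_lt hp.length_lt
  obtain ⟨a, b, p, hp, hplen⟩ := Nat.sSup_mem ⟨1, h1S⟩ hbdd
  have hmax : ∀ m ∈ S, m ≤ sSup S := fun m hm => le_csSup hbdd hm
  have hp1 : 1 ≤ p.length := by rw [hplen]; exact hmax 1 h1S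
  have hpnil : ¬ p.Nil := by rw [SimpleGraph.Walk.nil_iff_length_eq]; omega
  obtain ⟨y1, h1, q1, rfl⟩ := SimpleGraph.Walk.not_nil_iff.mp hpnil
  have hfe : s(a, y1) ∈ Z.filter (fun e => a ∈ e) :=
    Finset.mem_filter.mpr ⟨(hKadj _ _).mp h1, by simp⟩
  have hcard2 : 1 < (Z.filter (fun e => a ∈ e)).card := by
    obtain ⟨t, ht⟩ := heven a
    have hpos : 0 < (Z.filter (fun e => a ∈ e)).card := Finset.card_pos.mpr ⟨_, hfe⟩
    omega
  obtain ⟨e2, he2f, he2ne⟩ := Finset.exists_mem_ne hcard2 s(a, y1)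
  obtain ⟨he2Z, he2a⟩ := Finset.mem_filter.mp he2f
  obtain ⟨c, rfl⟩ := Sym2.mem_iff_exists.mp he2a
  have hadj2 : K.Adj a c := (hKadj _ _).mpr he2Z
  have hcy1 : c ≠ y1 := fun h => he2ne (by rw [h])
  by_cases hcs : c ∈ (SimpleGraph.Walk.cons h1 q1).support
  · -- c on the path: we get a cycle
    set q := (SimpleGraph.Walk.cons h1 q1).takeUntil c hcs with hq_def
    have hq : q.IsPath := hp.takeUntil hcs
    have hqe_sub : q.edges ⊆ (SimpleGraph.Walk.cons h1 q1).edges :=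
      SimpleGraph.Walk.edges_takeUntil_subset _ hcs
    have hsca : s(c, a) ∉ q.edges := by
      intro habs
      have habs' : s(a, c) ∈ (SimpleGraph.Walk.cons h1 q1).edges := by
        apply hqe_sub
        rwa [Sym2.eq_swap] at habs
      obtain ⟨hadj'', q'', heq, -⟩ := exists_firstEdge hp habs'
      have hgv := congrArg (fun w => SimpleGraph.Walk.getVert w 1) heq
      simp only [SimpleGraph.Walk.getVert_cons_succ, SimpleGraph.Walk.getVert_zero] at hgv
      exact hcy1 hgv.symm
    have hcycle : (SimpleGraph.Walk.cons hadj2.symm q).IsCycle := by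
      rw [SimpleGraph.Walk.cons_isCycle_iff]
      exact ⟨hq, hsca⟩
    have hsubZ : ∀ e ∈ (SimpleGraph.Walk.cons hadj2.symm q).edges, e ∈ Z := by
      intro e hee
      have : e ∈ K.edgeSet := (SimpleGraph.Walk.cons hadj2.symm q).edges_subset_edgeSet hee
      rw [hK, SimpleGraph.edgeSet_fromEdgeSet] at this
      exact_mod_cast this.1
    have hsubH : ∀ e ∈ (SimpleGraph.Walk.cons hadj2.symm q).edges, e ∈ H.edgeSet :=
      fun e hee => hZ (hsubZ e hee)
    set w := (SimpleGraph.Walk.cons hadj2.symm q).transfer H hsubH with hw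
    have hwc : w.IsCycle := hcycle.transfer hsubH
    have hglen : g ≤ w.length := hg c w hwc
    have hwlen : w.length = (SimpleGraph.Walk.cons hadj2.symm q).length :=
      SimpleGraph.Walk.length_transfer _ _
    have hnodup : (SimpleGraph.Walk.cons hadj2.symm q).edges.Nodup := hcycle.edges_nodup
    have hcard : (SimpleGraph.Walk.cons hadj2.symm q).length ≤ Z.card := by
      rw [← SimpleGraph.Walk.length_edges, ← List.toFinset_card_of_nodup hnodup]
      apply Finset.card_le_card
      intro e hee
      exact hsubZ e (List.mem_toFinset.mp hee)
    omega
  · -- extend the path: contradiction with maximality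
    exfalso
    have hp' : (SimpleGraph.Walk.cons hadj2.symm (SimpleGraph.Walk.cons h1 q1)).IsPath := by
      rw [SimpleGraph.Walk.cons_isPath_iff]
      exact ⟨hp, hcs⟩
    have : (SimpleGraph.Walk.cons h1 q1).length + 1 ∈ S :=
      ⟨c, b, _, hp', by rw [SimpleGraph.Walk.length_cons]⟩
    have := hmax _ this
    omega

lemma reachable_delete_of_cycle_edge {G : SimpleGraph V} {u v : V}
    (hr : (G \ SimpleGraph.fromEdgeSet {s(u, v)}).Reachable u v) :
    ∀ x y : V, G.Reachable x y → (G \ SimpleGraph.fromEdgeSet {s(u, v)}).Reachable x y := by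
  intro x y hxy
  obtain ⟨p⟩ := hxy
  induction p with
  | nil => exact SimpleGraph.Reachable.refl _
  | cons h q ih =>
    rename_i s t r
    refine SimpleGraph.Reachable.trans ?_ ih
    by_cases heq : s(s, t) = s(u, v)
    · rw [Sym2.eq_iff] at heq
      rcases heq with ⟨rfl, rfl⟩ | ⟨rfl, rfl⟩
      · exact hr
      · exact hr.symm
    · refine SimpleGraph.Adj.reachable ?_
      rw [SimpleGraph.sdiff_adj]
      refine ⟨h, fun habs => ?_⟩
      rw [SimpleGraph.fromEdgeSet_adj] at habs
      exact heq (Set.mem_singleton_iff.mp habs.1)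

lemma exists_spanning_tree [Fintype V] {H : SimpleGraph V} (hconn : H.Connected) :
    ∃ T : SimpleGraph V, T ≤ H ∧ T.IsTree := by
  classical
  obtain ⟨m, hm⟩ : ∃ m, H.edgeSet.ncard = m := ⟨_, rfl⟩
  induction m using Nat.strong_induction_on generalizing H with
  | _ m ih =>
    by_cases hac : H.IsAcyclic
    · exact ⟨H, le_refl H, ⟨hconn, hac⟩⟩
    · rw [SimpleGraph.IsAcyclic] at hac
      push_neg at hac
      obtain ⟨a, c, hc⟩ := hac
      have hlen := hc.three_le_length
      have hce : c.edges ≠ [] := by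
        intro habs
        rw [← SimpleGraph.Walk.length_edges, habs] at hlen
        simp at hlen
      obtain ⟨e, he⟩ := List.exists_mem_of_ne_nil _ hce
      have heH : e ∈ H.edgeSet := c.edges_subset_edgeSet he
      induction e using Sym2.ind with
      | _ u v =>
      have hr : (H \ SimpleGraph.fromEdgeSet {s(u, v)}).Reachable u v := by
        have := SimpleGraph.adj_and_reachable_delete_edges_iff_exists_cycle.mpr ⟨a, c, hc, he⟩
        exact this.2
      have hconn' : (H \ SimpleGraph.fromEdgeSet {s(u, v)}).Connected := by
        rw [SimpleGraph.connected_iff]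
        exact ⟨fun x y => reachable_delete_of_cycle_edge hr x y (hconn x y), hconn.nonempty⟩
      have hsub : (H \ SimpleGraph.fromEdgeSet {s(u, v)}).edgeSet = H.edgeSet \ {s(u, v)} := by
        rw [SimpleGraph.edgeSet_sdiff, SimpleGraph.edgeSet_fromEdgeSet]
        ext f
        simp only [Set.mem_diff, Set.mem_singleton_iff, Set.mem_setOf_eq, not_and, not_not]
        constructor
        · rintro ⟨hf, hf2⟩
          refine ⟨hf, fun habs => ?_⟩
          have hdiag := hf2 habs
          rw [habs] at hdiag
          exact ((SimpleGraph.mem_edgeSet (G := H)).mp heH).ne (Sym2.mk_isDiag_iff.mp hdiag)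
        · rintro ⟨hf, hf2⟩
          exact ⟨hf, fun h => absurd h hf2⟩
      have hlt : (H \ SimpleGraph.fromEdgeSet {s(u, v)}).edgeSet.ncard < m := by
        rw [hsub, ← hm]
        exact Set.ncard_diff_singleton_lt_of_mem heH (Set.toFinite _)
      obtain ⟨T, hT1, hT2⟩ := ih _ hlt hconn' rfl
      exact ⟨T, le_trans hT1 sdiff_le, hT2⟩

lemma isTree_ncard [Fintype V] {T : SimpleGraph V} (hT : T.IsTree) :
    T.edgeSet.ncard + 1 = Fintype.card V := by
  classical
  haveI : Fintype T.edgeSet := Fintype.ofFinite _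
  have h1 : T.edgeSet.ncard = T.edgeFinset.card := by
    rw [Set.ncard_eq_toFinset_card']; rfl
  rw [h1]
  exact hT.card_edgeFinset

/-- Edge set of a fundamental cycle of a non-tree edge. -/
lemma fund_cycle [Fintype V] {T H : SimpleGraph V} (hTH : T ≤ H) (hT : T.IsTree)
    {e : Sym2 V} (heH : e ∈ H.edgeSet) (heT : e ∉ T.edgeSet) :
    ∃ Z : Finset (Sym2 V), e ∈ Z ∧ (↑Z : Set (Sym2 V)) ⊆ insert e T.edgeSet ∧
      (∀ x : V, Even ((Z.filter (fun e' => x ∈ e')).card)) := by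
  classical
  induction e using Sym2.ind with
  | _ u v =>
  have huv : u ≠ v := ((SimpleGraph.mem_edgeSet (G := H)).mp heH).ne
  obtain ⟨P, hP, -⟩ := hT.existsUnique_path u v
  refine ⟨insert s(u, v) P.edges.toFinset, Finset.mem_insert_self _ _, ?_, ?_⟩
  · intro f hf
    rcases Finset.mem_insert.mp hf with rfl | hf
    · exact Set.mem_insert _ _
    · exact Set.mem_insert_of_mem _ (P.edges_subset_edgeSet (List.mem_toFinset.mp hf))
  · intro x
    have hnotin : s(u, v) ∉ P.edges.toFinset := by
      intro habs
      exact heT (P.edges_subset_edgeSet (List.mem_toFinset.mp habs))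
    have hcount := (hP.isTrail.even_countP_edges_iff x)
    have hcc : (P.edges.toFinset.filter (fun e' => x ∈ e')).card
        = P.edges.countP (fun e' => decide (x ∈ e')) :=
      filter_toFinset_card hP.isTrail.edges_nodup _
    rw [Finset.filter_insert]
    by_cases hx : x ∈ s(u, v)
    · rw [if_pos hx, Finset.card_insert_of_notMem (fun habs => hnotin (Finset.mem_of_mem_filter _ habs))]
      have hodd : ¬ Even (P.edges.countP (fun e' => decide (x ∈ e'))) := by
        rw [hcount]
        push_neg
        refine ⟨huv, fun hxu => ?_⟩
        rw [Sym2.mem_iff] at hx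
        tauto
      rw [Nat.even_add_one, hcc]
      exact hodd
    · rw [if_neg hx, hcc, hcount]
      intro _
      rw [Sym2.mem_iff] at hx
      push_neg at hx
      exact hx

lemma card_eq_sum_indicator {α : Type*} [DecidableEq α] {Z W : Finset α} (h : Z ⊆ W) :
    Z.card = ∑ f ∈ W, if f ∈ Z then 1 else 0 := by
  rw [← Finset.card_filter, Finset.filter_mem_eq_inter, Finset.inter_eq_right.mpr h]

lemma girth_edge_bound [Fintype V] {H : SimpleGraph V} (hconn : H.Connected) {g : ℕ}
    (hg : ∀ (a : V) (c : H.Walk a a), c.IsCycle → g ≤ c.length)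
    (hcard : Fintype.card V + 2 ≤ H.edgeSet.ncard) :
    7 * g ≤ 4 * (Fintype.card V + 2) := by
  classical
  obtain ⟨T, hTH, hT⟩ := exists_spanning_tree hconn
  have hTn : T.edgeSet.ncard + 1 = Fintype.card V := isTree_ncard hT
  haveI : Fintype (T.edgeSet : Set (Sym2 V)) := Fintype.ofFinite _
  haveI : Fintype (H.edgeSet : Set (Sym2 V)) := Fintype.ofFinite _
  set ET := (T.edgeSet : Set (Sym2 V)).toFinset with hET
  set EH := (H.edgeSet : Set (Sym2 V)).toFinset with hEH
  have hsubF : ET ⊆ EH := by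
    intro f hf
    rw [hEH, Set.mem_toFinset]
    exact SimpleGraph.edgeSet_mono hTH (by rwa [hET, Set.mem_toFinset] at hf)
  have hETcard : ET.card + 1 = Fintype.card V := by
    rwa [hET, ← Set.ncard_eq_toFinset_card']
  have hEHcard : Fintype.card V + 2 ≤ EH.card := by
    rwa [hEH, ← Set.ncard_eq_toFinset_card']
  have hdiff : 2 < (EH \ ET).card := by
    rw [Finset.card_sdiff_of_subset hsubF]
    omega
  obtain ⟨e1, he1, e2, he2, e3, he3, h12, h13, h23⟩ := Finset.two_lt_card.mp hdiff
  have hmem : ∀ e ∈ EH \ ET, e ∈ H.edgeSet ∧ e ∉ T.edgeSet := by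
    intro e he
    obtain ⟨heh, het⟩ := Finset.mem_sdiff.mp he
    rw [hEH, Set.mem_toFinset] at heh
    rw [hET, Set.mem_toFinset] at het
    exact ⟨heh, het⟩
  obtain ⟨he1H, he1T⟩ := hmem e1 he1
  obtain ⟨he2H, he2T⟩ := hmem e2 he2
  obtain ⟨he3H, he3T⟩ := hmem e3 he3
  obtain ⟨Z1, hZ1m, hZ1s, hZ1e⟩ := fund_cycle hTH hT he1H he1T
  obtain ⟨Z2, hZ2m, hZ2s, hZ2e⟩ := fund_cycle hTH hT he2H he2T
  obtain ⟨Z3, hZ3m, hZ3s, hZ3e⟩ := fund_cycle hTH hT he3H he3T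
  set W : Finset (Sym2 V) := ET ∪ {e1, e2, e3} with hW
  have hWsub : ∀ (Z : Finset (Sym2 V)) (e : Sym2 V), e ∈ ({e1, e2, e3} : Finset (Sym2 V)) →
      (↑Z : Set (Sym2 V)) ⊆ insert e T.edgeSet → Z ⊆ W := by
    intro Z e hemem hZs f hf
    rcases Set.mem_insert_iff.mp (hZs hf) with rfl | hfT
    · exact Finset.mem_union_right _ hemem
    · exact Finset.mem_union_left _ (by rw [hET, Set.mem_toFinset]; exact hfT)
  have hZ1W : Z1 ⊆ W := hWsub Z1 e1 (by simp) hZ1s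
  have hZ2W : Z2 ⊆ W := hWsub Z2 e2 (by simp) hZ2s
  have hZ3W : Z3 ⊆ W := hWsub Z3 e3 (by simp) hZ3s
  have hWH : (↑W : Set (Sym2 V)) ⊆ H.edgeSet := by
    intro f hf
    rcases Finset.mem_union.mp hf with hf | hf
    · exact SimpleGraph.edgeSet_mono hTH (by rwa [hET, Set.mem_toFinset] at hf)
    · simp only [Finset.mem_insert, Finset.mem_singleton] at hf
      rcases hf with rfl | rfl | rfl
      · exact he1H
      · exact he2H
      · exact he3H
  -- membership facts
  have hnotin : ∀ (Z : Finset (Sym2 V)) (e f : Sym2 V),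
      (↑Z : Set (Sym2 V)) ⊆ insert e T.edgeSet → f ∉ T.edgeSet → f ≠ e → f ∉ Z := by
    intro Z e f hZs hfT hfe habs
    rcases Set.mem_insert_iff.mp (hZs habs) with h | h
    · exact hfe h
    · exact hfT h
  have h1n2 : e1 ∉ Z2 := hnotin Z2 e2 e1 hZ2s he1T h12
  have h1n3 : e1 ∉ Z3 := hnotin Z3 e3 e1 hZ3s he1T h13
  have h2n3 : e2 ∉ Z3 := hnotin Z3 e3 e2 hZ3s he2T h23
  have h2n1 : e2 ∉ Z1 := hnotin Z1 e1 e2 hZ1s he2T h12.symm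
  -- the seven sets
  have hbound : ∀ Z : Finset (Sym2 V), Z ⊆ W →
      (∀ x : V, Even ((Z.filter (fun e' => x ∈ e')).card)) → Z.Nonempty → g ≤ Z.card := by
    intro Z hZW hZe hZne
    exact even_finset_card_ge hg Z (fun f hf => hWH (hZW hf)) hZe hZne
  have hg1 : g ≤ Z1.card := hbound Z1 hZ1W hZ1e ⟨e1, hZ1m⟩
  have hg2 : g ≤ Z2.card := hbound Z2 hZ2W hZ2e ⟨e2, hZ2m⟩
  have hg3 : g ≤ Z3.card := hbound Z3 hZ3W hZ3e ⟨e3, hZ3m⟩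
  have hsdW : ∀ A B : Finset (Sym2 V), A ⊆ W → B ⊆ W → A ∆ B ⊆ W := by
    intro A B hA hB f hf
    rcases Finset.mem_symmDiff.mp hf with ⟨h, -⟩ | ⟨h, -⟩
    · exact hA h
    · exact hB h
  have h12m : e1 ∈ Z1 ∆ Z2 := Finset.mem_symmDiff.mpr (Or.inl ⟨hZ1m, h1n2⟩)
  have hg12 : g ≤ (Z1 ∆ Z2).card :=
    hbound _ (hsdW _ _ hZ1W hZ2W) (fun x => even_card_filter_symmDiff _ (hZ1e x) (hZ2e x))
      ⟨e1, h12m⟩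
  have hg13 : g ≤ (Z1 ∆ Z3).card :=
    hbound _ (hsdW _ _ hZ1W hZ3W) (fun x => even_card_filter_symmDiff _ (hZ1e x) (hZ3e x))
      ⟨e1, Finset.mem_symmDiff.mpr (Or.inl ⟨hZ1m, h1n3⟩)⟩
  have hg23 : g ≤ (Z2 ∆ Z3).card :=
    hbound _ (hsdW _ _ hZ2W hZ3W) (fun x => even_card_filter_symmDiff _ (hZ2e x) (hZ3e x))
      ⟨e2, Finset.mem_symmDiff.mpr (Or.inl ⟨hZ2m, h2n3⟩)⟩
  have hg123 : g ≤ ((Z1 ∆ Z2) ∆ Z3).card :=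
    hbound _ (hsdW _ _ (hsdW _ _ hZ1W hZ2W) hZ3W)
      (fun x => even_card_filter_symmDiff _ (even_card_filter_symmDiff _ (hZ1e x) (hZ2e x)) (hZ3e x))
      ⟨e1, Finset.mem_symmDiff.mpr (Or.inl ⟨h12m, h1n3⟩)⟩
  -- counting
  have hsum : Z1.card + Z2.card + Z3.card + (Z1 ∆ Z2).card + (Z1 ∆ Z3).card
      + (Z2 ∆ Z3).card + ((Z1 ∆ Z2) ∆ Z3).card ≤ 4 * W.card := by
    rw [card_eq_sum_indicator hZ1W, card_eq_sum_indicator hZ2W, card_eq_sum_indicator hZ3W,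
      card_eq_sum_indicator (hsdW _ _ hZ1W hZ2W), card_eq_sum_indicator (hsdW _ _ hZ1W hZ3W),
      card_eq_sum_indicator (hsdW _ _ hZ2W hZ3W),
      card_eq_sum_indicator (hsdW _ _ (hsdW _ _ hZ1W hZ2W) hZ3W),
      ← Finset.sum_add_distrib, ← Finset.sum_add_distrib, ← Finset.sum_add_distrib,
      ← Finset.sum_add_distrib, ← Finset.sum_add_distrib, ← Finset.sum_add_distrib]
    calc _ ≤ ∑ _f ∈ W, 4 := by
            apply Finset.sum_le_sum
            intro f _
            by_cases hf1 : f ∈ Z1 <;> by_cases hf2 : f ∈ Z2 <;> by_cases hf3 : f ∈ Z3 <;>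
              simp [Finset.mem_symmDiff, hf1, hf2, hf3]
    _ = 4 * W.card := by rw [Finset.sum_const, smul_eq_mul, mul_comm]
  have hWcard : W.card ≤ Fintype.card V + 2 := by
    calc W.card ≤ ET.card + ({e1, e2, e3} : Finset (Sym2 V)).card := Finset.card_union_le _ _
    _ ≤ ET.card + 3 := by
        have : ({e1, e2, e3} : Finset (Sym2 V)).card ≤ 3 := by
          apply le_trans (Finset.card_insert_le _ _)
          apply Nat.succ_le_succ
          apply le_trans (Finset.card_insert_le _ _)
          simp
        omega
    _ ≤ Fintype.card V + 2 := by omega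
  omega

lemma spanner_connected {G H' : SimpleGraph V} {k : ℕ} (hk : 1 ≤ k) (hG : G.Connected)
    (hs : IsKSpanner G H' k) : H'.Connected := by
  rw [SimpleGraph.connected_iff]
  refine ⟨fun u v => ?_, hG.nonempty⟩
  have h1 := hs.2 u v
  have h2 : G.edist u v ≠ ⊤ := SimpleGraph.edist_ne_top_iff_reachable.mpr (hG u v)
  have h3 : (k : ℕ∞) * G.edist u v ≠ ⊤ := WithTop.mul_ne_top (by exact_mod_cast (ENat.coe_ne_top k)) h2
  apply SimpleGraph.reachable_of_edist_ne_top
  intro htop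
  rw [htop] at h1
  exact h3 (top_le_iff.mp h1)

lemma connected_ncard_lower [Fintype V] {H : SimpleGraph V} (hconn : H.Connected) :
    Fintype.card V ≤ H.edgeSet.ncard + 1 := by
  obtain ⟨T, hTH, hT⟩ := exists_spanning_tree hconn
  have h1 := isTree_ncard hT
  have h2 : T.edgeSet.ncard ≤ H.edgeSet.ncard :=
    Set.ncard_le_ncard (SimpleGraph.edgeSet_mono hTH) (Set.toFinite _)
  omega

/-- there is a constant `C` such that for all sufficiently large `n`
and every `k > (4/7)n + C`, every connected `n`-vertex graph `G` has a
`k`-spanner `H` of girth at least `k+2` with `|E_H| - n ≤ 2(OPT - n) + 1`,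
where `OPT` is the size of a minimum `k`-spanner of `G`
(i.e. `(n,k)` is `(2,O(1))`-approx good). -/
theorem approx_good_2 :
    ∃ C N : ℕ, ∀ n : ℕ, N ≤ n → ∀ k : ℕ, 4 * n + 7 * C < 7 * k →
      ∀ G : SimpleGraph (Fin n), G.Connected →
        ∃ H : SimpleGraph (Fin n), IsKSpanner G H k ∧ (k + 2 : ℕ∞) ≤ H.egirth ∧
          ∀ Hopt : SimpleGraph (Fin n), IsMinKSpanner G Hopt k →
            (H.edgeSet.ncard : ℤ) - n ≤ 2 * ((Hopt.edgeSet.ncard : ℤ) - n) + 1 := by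
  classical
  refine ⟨0, 0, fun n _ k hk G hG => ?_⟩
  have hn1 : 1 ≤ n := by
    have := hG.nonempty
    have := Fin.pos_iff_nonempty.mpr this
    omega
  have hk1 : 1 ≤ k := by omega
  by_cases hex : ∃ H0 : SimpleGraph (Fin n), IsKSpanner G H0 k ∧ H0.edgeSet.ncard < n
  · -- some spanner is a tree
    obtain ⟨H0, hs0, hc0⟩ := hex
    have hconn0 : H0.Connected := spanner_connected hk1 hG hs0
    obtain ⟨T, hTH, hT⟩ := exists_spanning_tree hconn0
    have hTn : T.edgeSet.ncard + 1 = n := by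
      have := isTree_ncard hT
      rwa [Fintype.card_fin] at this
    have hmono : T.edgeSet.ncard ≤ H0.edgeSet.ncard :=
      Set.ncard_le_ncard (SimpleGraph.edgeSet_mono hTH) (Set.toFinite _)
    have heq : T.edgeSet = H0.edgeSet :=
      Set.eq_of_subset_of_ncard_le (SimpleGraph.edgeSet_mono hTH) (by omega) (Set.toFinite _)
    have hH0T : T = H0 := SimpleGraph.edgeSet_inj.mp heq
    have hac : H0.IsAcyclic := hH0T ▸ hT.IsAcyclic
    refine ⟨H0, hs0, ?_, ?_⟩
    · rw [hac.egirth_eq_top]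
      exact le_top
    · intro Hopt hmin
      have hoptconn : Hopt.Connected := spanner_connected hk1 hG hmin.1
      have hopt := connected_ncard_lower hoptconn
      rw [Fintype.card_fin] at hopt
      have hH0n : H0.edgeSet.ncard + 1 = n := by rw [← heq]; exact hTn
      omega
  · -- greedy spanner
    push_neg at hex
    have hall : ∀ H' : SimpleGraph (Fin n), IsKSpanner G H' k → n ≤ H'.edgeSet.ncard :=
      fun H' h => Nat.not_lt.mp (fun hlt => absurd hlt (Nat.not_lt.mpr (hex H' h)))
    set l := ((Finset.univ : Finset (Fin n × Fin n)).filter (fun p => G.Adj p.1 p.2)).toList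
      with hl_def
    have hl : ∀ p ∈ l, G.Adj p.1 p.2 := by
      intro p hp
      rw [hl_def, Finset.mem_toList, Finset.mem_filter] at hp
      exact hp.2
    have hcov : ∀ u v : Fin n, G.Adj u v → (u, v) ∈ l := by
      intro u v h
      rw [hl_def, Finset.mem_toList, Finset.mem_filter]
      exact ⟨Finset.mem_univ _, h⟩
    set H := greedy k l with hH_def
    have hHG : H ≤ G := greedy_le hl
    have hadj : ∀ u v : Fin n, G.Adj u v → H.edist u v ≤ (k : ℕ∞) :=
      fun u v h => greedy_edist hk1 hl (u, v) (hcov u v h)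
    have hspan : IsKSpanner G H k := spanner_of_adj hk1 hHG hadj
    have hcyc : ∀ (a : Fin n) (c : H.Walk a a), c.IsCycle → k + 2 ≤ c.length := greedy_cycles
    refine ⟨H, hspan, ?_, ?_⟩
    · rw [SimpleGraph.le_egirth]
      intro a w hw
      have := hcyc a w hw
      exact_mod_cast this
    · intro Hopt hmin
      have hoptn : n ≤ Hopt.edgeSet.ncard := hall Hopt hmin.1
      have hconnH : H.Connected := spanner_connected hk1 hG hspan
      have hle : H.edgeSet.ncard ≤ n + 1 := by
        by_contra hgt
        push_neg at hgt
        have hb := girth_edge_bound hconnH (g := k + 2) hcyc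
          (by rw [Fintype.card_fin]; omega)
        rw [Fintype.card_fin] at hb
        omega
      omega
end

section
/- Let G be a simple graph on n vertices, k a positive integer, and H a k-spanner of G. Let C be a cycle of H whose length L equals the girth of H, and suppose 2(n − k) ≤ L ≤ k + 1. Then there exists an edge e of C such that the graph H with the edge e removed is still a k-spanner of G. -/
set_option linter.unusedSectionVars false
set_option linter.unusedVariables false
set_option maxHeartbeats 1000000

namespace SpannerAux
open SimpleGraph Finset

variable {V : Type*} [DecidableEq V]

lemma walk_getVert_support {G : SimpleGraph V} {u v : V} (p : G.Walk u v) :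
    ∀ i (hi : i ≤ p.length),
      p.getVert i = p.support[i]'(by rw [SimpleGraph.Walk.length_support]; omega) := by
  induction p with
  | nil =>
    intro i hi
    have h0 : i = 0 := by simpa using hi
    subst h0; simp
  | cons h q ih =>
    intro i hi
    cases i with
    | zero => simp
    | succ j =>
      simp only [SimpleGraph.Walk.getVert_cons_succ, SimpleGraph.Walk.support_cons]
      rw [ih j (by simpa using hi)]
      simp

lemma walk_edges_getElem {G : SimpleGraph V} {u v : V} (p : G.Walk u v) :
    ∀ i (h : i < p.length),
      p.edges[i]'(by rw [SimpleGraph.Walk.length_edges]; omega)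
        = s(p.getVert i, p.getVert (i+1)) := by
  induction p with
  | nil => intro i hi; simp at hi
  | cons h q ih =>
    intro i hi
    cases i with
    | zero => simp [SimpleGraph.Walk.edges_cons, SimpleGraph.Walk.getVert_cons_succ]
    | succ j =>
      simp only [SimpleGraph.Walk.edges_cons, SimpleGraph.Walk.getVert_cons_succ]
      rw [List.getElem_cons_succ]
      exact ih j (by simpa using hi)

/-- Injectivity of `getVert` on `[0, length)` for cycles. -/
lemma cycle_getVert_inj {G : SimpleGraph V} {v : V} {c : G.Walk v v} (hc : c.IsCycle)
    {i j : ℕ} (hi : i < c.length) (hj : j < c.length) (hij : c.getVert i = c.getVert j) :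
    i = j := by
  have hlen : c.support.length = c.length + 1 := by
    rw [SimpleGraph.Walk.length_support]
  have htail : c.support.tail.Nodup := hc.2
  have hts : c.support.tail.length = c.length := by
    rw [List.length_tail, hlen]; omega
  have hget : ∀ t (ht : t < c.length), c.support.tail[t]'(by omega) = c.getVert (t+1) := by
    intro t ht
    rw [walk_getVert_support c (t+1) (by omega)]
    rw [List.getElem_tail]
  have hL3 := hc.three_le_length
  have hlast : c.support.tail[c.length - 1]'(by omega) = v := by
    rw [hget (c.length - 1) (by omega)]
    have h1 : c.length - 1 + 1 = c.length := by omega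
    rw [h1, SimpleGraph.Walk.getVert_length]
  rcases Nat.eq_zero_or_pos i with h0 | hipos
  · subst h0
    rcases Nat.eq_zero_or_pos j with h0' | hjpos
    · omega
    · exfalso
      have hj1 : c.getVert j = c.support.tail[j-1]'(by omega) := by
        rw [hget (j-1) (by omega)]; congr 1; omega
      have he : c.support.tail[j-1]'(by omega) = c.support.tail[c.length-1]'(by omega) := by
        rw [← hj1, hlast, ← hij, SimpleGraph.Walk.getVert_zero]
      have := (htail.getElem_inj_iff).1 he
      omega
  · rcases Nat.eq_zero_or_pos j with h0' | hjpos
    · exfalso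
      subst h0'
      have hi1 : c.getVert i = c.support.tail[i-1]'(by omega) := by
        rw [hget (i-1) (by omega)]; congr 1; omega
      have he : c.support.tail[i-1]'(by omega) = c.support.tail[c.length-1]'(by omega) := by
        rw [← hi1, hlast, hij, SimpleGraph.Walk.getVert_zero]
      have := (htail.getElem_inj_iff).1 he
      omega
    · have hi1 : c.getVert i = c.support.tail[i-1]'(by omega) := by
        rw [hget (i-1) (by omega)]; congr 1; omega
      have hj1 : c.getVert j = c.support.tail[j-1]'(by omega) := by
        rw [hget (j-1) (by omega)]; congr 1; omega
      have he : c.support.tail[i-1]'(by omega) = c.support.tail[j-1]'(by omega) := by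
        rw [← hi1, ← hj1, hij]
      have := (htail.getElem_inj_iff).1 he
      omega



/-- Core combinatorial lemma: on a cycle of length `L` with vertex weights `R` of total
`T ≤ L/2 + cc - 1`, some edge (gap) `j` is on no arc `[i, i+σ)` with `σ + cc ≤ R(i) + R(i+σ)`. -/
lemma arc_uncovered (L cc T : ℕ) (hL : 3 ≤ L) (R : ℕ → ℕ)
    (hT : ∑ i ∈ Finset.range L, R i = T) (hbud : T + 1 ≤ L / 2 + cc) :
    ∃ j < L, ∀ i σ, i < L → 1 ≤ σ → σ ≤ L - 1 →
      σ + cc ≤ R i + R ((i + σ) % L) → ∀ t, t < σ → (i + t) % L ≠ j := by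
  by_contra hcon
  push_neg at hcon
  classical
  set P : Finset (ℕ × ℕ) :=
    (Finset.range L ×ˢ Finset.Icc 1 (L-1)).filter
      (fun q => q.2 + cc ≤ R q.1 + R ((q.1 + q.2) % L)) with hP
  have covP : ∀ j, j < L → ∃ q ∈ P, ∃ t, t < q.2 ∧ (q.1 + t) % L = j := by
    intro j hj
    obtain ⟨i, σ, hiL, hσ1, hσL, hw, t, ht, hhit⟩ := hcon j hj
    exact ⟨(i, σ), by simp [hP, Finset.mem_filter, Finset.mem_product, hiL, hσ1, hσL, hw],
      t, ht, hhit⟩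
  set B : Finset (ℕ × ℕ) := P.filter (fun q => ∀ q' ∈ P, q'.1 = q.1 → q'.2 ≤ q.2) with hB
  have covB : ∀ j, j < L → ∃ q ∈ B, ∃ t, t < q.2 ∧ (q.1 + t) % L = j := by
    intro j hj
    obtain ⟨q, hq, t, ht, hhit⟩ := covP j hj
    obtain ⟨qb, hqb, hmax⟩ := Finset.exists_max_image (P.filter (fun q' => q'.1 = q.1))
      Prod.snd ⟨q, by simp [Finset.mem_filter, hq]⟩
    rw [Finset.mem_filter] at hqb
    refine ⟨qb, ?_, t, lt_of_lt_of_le ht (hmax q (by simp [Finset.mem_filter, hq])), ?_⟩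
    · rw [hB, Finset.mem_filter]
      refine ⟨hqb.1, fun q' hq' hq'1 => hmax q' ?_⟩
      simp [Finset.mem_filter, hq', hq'1, hqb.2]
    · rw [hqb.2]; exact hhit
  set Cfam : Finset (ℕ × ℕ) :=
    B.filter (fun q => ∀ q' ∈ B, (q'.1 + q'.2) % L = (q.1 + q.2) % L → q'.2 ≤ q.2) with hC
  have covC : ∀ j, j < L → ∃ q ∈ Cfam, ∃ t, t < q.2 ∧ (q.1 + t) % L = j := by
    intro j hj
    obtain ⟨q, hq, t, ht, hhit⟩ := covB j hj
    obtain ⟨qc, hqc, hmax⟩ := Finset.exists_max_image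
      (B.filter (fun q' => (q'.1 + q'.2) % L = (q.1 + q.2) % L)) Prod.snd
      ⟨q, by simp [Finset.mem_filter, hq]⟩
    rw [Finset.mem_filter] at hqc
    have hle : q.2 ≤ qc.2 := hmax q (by simp [Finset.mem_filter, hq])
    refine ⟨qc, ?_, qc.2 - q.2 + t, by omega, ?_⟩
    · rw [hC, Finset.mem_filter]
      refine ⟨hqc.1, fun q' hq' hq'1 => hmax q' ?_⟩
      rw [Finset.mem_filter]
      exact ⟨hq', by rw [hq'1, hqc.2]⟩
    · have key : (qc.1 + qc.2) % L = (q.1 + q.2) % L := hqc.2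
      have e1 : qc.1 + (qc.2 - q.2 + t) + (q.2 - t) = qc.1 + qc.2 := by omega
      have e2 : q.1 + t + (q.2 - t) = q.1 + q.2 := by omega
      have hmod : (qc.1 + (qc.2 - q.2 + t) + (q.2 - t)) % L
          = (q.1 + t + (q.2 - t)) % L := by rw [e1, e2]; exact key
      have := Nat.ModEq.add_right_cancel' (q.2 - t) hmod
      rw [← hhit]
      exact this
  -- injectivity of endpoints on Cfam
  have hCsubP : Cfam ⊆ P := fun q hq => (Finset.mem_filter.1 ((Finset.mem_filter.1 hq).1)).1
  have hCleft : ∀ q ∈ Cfam, ∀ q' ∈ Cfam, q.1 = q'.1 → q = q' := by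
    intro q hq q' hq' h1
    have hqB := (Finset.mem_filter.1 hq).1
    have hq'B := (Finset.mem_filter.1 hq').1
    have h2 := (Finset.mem_filter.1 hqB).2 q' (Finset.mem_filter.1 hq'B).1 h1.symm
    have h3 := (Finset.mem_filter.1 hq'B).2 q (Finset.mem_filter.1 hqB).1 h1
    exact Prod.ext h1 (le_antisymm h3 h2)
  have hCright : ∀ q ∈ Cfam, ∀ q' ∈ Cfam, (q.1 + q.2) % L = (q'.1 + q'.2) % L → q = q' := by
    intro q hq q' hq' h1
    have h2 := (Finset.mem_filter.1 hq).2 q' (Finset.mem_filter.1 hq').1 h1.symm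
    have h3 := (Finset.mem_filter.1 hq').2 q (Finset.mem_filter.1 hq).1 h1
    have hs : q.2 = q'.2 := le_antisymm h3 h2
    -- then left endpoints equal mod L, and both < L
    have hqP := hCsubP hq
    have hq'P := hCsubP hq'
    rw [hP, Finset.mem_filter, Finset.mem_product] at hqP hq'P
    have hq1 : q.1 < L := by simpa using hqP.1.1
    have hq'1 : q'.1 < L := by simpa using hq'P.1.1
    have : (q.1 + q.2) % L = (q'.1 + q.2) % L := by rw [h1, hs]
    have hmeq := Nat.ModEq.add_right_cancel' q.2 this
    have : q.1 % L = q'.1 % L := hmeq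
    rw [Nat.mod_eq_of_lt hq1, Nat.mod_eq_of_lt hq'1] at this
    exact Prod.ext this hs
  -- counting
  have hcover : Finset.range L ⊆
      Cfam.biUnion (fun q => (Finset.range q.2).image (fun t => (q.1 + t) % L)) := by
    intro j hj
    rw [Finset.mem_range] at hj
    obtain ⟨q, hq, t, ht, hhit⟩ := covC j hj
    exact Finset.mem_biUnion.2 ⟨q, hq, Finset.mem_image.2 ⟨t, Finset.mem_range.2 ht, hhit⟩⟩
  have hLle : L ≤ ∑ q ∈ Cfam, q.2 := by
    calc L = (Finset.range L).card := (Finset.card_range L).symm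
    _ ≤ (Cfam.biUnion (fun q => (Finset.range q.2).image (fun t => (q.1 + t) % L))).card :=
        Finset.card_le_card hcover
    _ ≤ ∑ q ∈ Cfam, ((Finset.range q.2).image (fun t => (q.1 + t) % L)).card :=
        Finset.card_biUnion_le
    _ ≤ ∑ q ∈ Cfam, q.2 := by
        refine Finset.sum_le_sum fun q _ => ?_
        calc ((Finset.range q.2).image (fun t => (q.1 + t) % L)).card
            ≤ (Finset.range q.2).card := Finset.card_image_le
          _ = q.2 := Finset.card_range _
  have hsumL : ∑ q ∈ Cfam, R q.1 ≤ T := by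
    rw [← hT]
    calc ∑ q ∈ Cfam, R q.1
        = ∑ i ∈ Cfam.image Prod.fst, R i :=
          (Finset.sum_image (fun q hq q' hq' h => hCleft q hq q' hq' h)).symm
      _ ≤ ∑ i ∈ Finset.range L, R i := by
          refine Finset.sum_le_sum_of_subset ?_
          intro i hi
          rw [Finset.mem_image] at hi
          obtain ⟨q, hq, rfl⟩ := hi
          have := hCsubP hq
          rw [hP, Finset.mem_filter, Finset.mem_product] at this
          exact this.1.1
  have hsumR : ∑ q ∈ Cfam, R ((q.1 + q.2) % L) ≤ T := by
    rw [← hT]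
    calc ∑ q ∈ Cfam, R ((q.1 + q.2) % L)
        = ∑ i ∈ Cfam.image (fun q => (q.1 + q.2) % L), R i :=
          (Finset.sum_image (fun q hq q' hq' h => hCright q hq q' hq' h)).symm
      _ ≤ ∑ i ∈ Finset.range L, R i := by
          refine Finset.sum_le_sum_of_subset ?_
          intro i hi
          rw [Finset.mem_image] at hi
          obtain ⟨q, hq, rfl⟩ := hi
          exact Finset.mem_range.2 (Nat.mod_lt _ (by omega))
  have hwt : ∑ q ∈ Cfam, (q.2 + cc) ≤ 2 * T := by
    calc ∑ q ∈ Cfam, (q.2 + cc) ≤ ∑ q ∈ Cfam, (R q.1 + R ((q.1 + q.2) % L)) := by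
          refine Finset.sum_le_sum fun q hq => ?_
          have := hCsubP hq
          rw [hP, Finset.mem_filter] at this
          exact this.2
      _ = (∑ q ∈ Cfam, R q.1) + ∑ q ∈ Cfam, R ((q.1 + q.2) % L) := Finset.sum_add_distrib
      _ ≤ 2 * T := by omega
  have hsplit : ∑ q ∈ Cfam, (q.2 + cc) = (∑ q ∈ Cfam, q.2) + Cfam.card * cc := by
    rw [Finset.sum_add_distrib, Finset.sum_const, smul_eq_mul]
  rcases Nat.lt_or_ge Cfam.card 2 with hp | hp
  · interval_cases h : Cfam.card
    · obtain ⟨q, hq, -⟩ := covC 0 (by omega)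
      have := Finset.card_eq_zero.1 h
      rw [this] at hq
      simp at hq
    · obtain ⟨q, hq1⟩ := Finset.card_eq_one.1 h
      have hq2 : ∑ q ∈ Cfam, q.2 ≤ L - 1 := by
        rw [hq1, Finset.sum_singleton]
        have : q ∈ Cfam := by rw [hq1]; exact Finset.mem_singleton_self q
        have := hCsubP this
        rw [hP, Finset.mem_filter, Finset.mem_product] at this
        have := this.1.2
        rw [Finset.mem_Icc] at this
        exact this.2
      omega
  · have h2c : 2 * cc ≤ Cfam.card * cc := Nat.mul_le_mul_right cc hp
    omega








section Bush

variable (H : SimpleGraph V) (W : Finset V)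

noncomputable def rv (x : V) : ℕ∞ := W.inf (fun z => H.edist x z)

variable {H W}

lemma rv_le {x z : V} (hz : z ∈ W) : rv H W x ≤ H.edist x z := Finset.inf_le hz

lemma rv_exists (hW : W.Nonempty) (x : V) : ∃ z ∈ W, rv H W x = H.edist x z := by
  obtain ⟨z, hz, h⟩ := Finset.exists_mem_eq_inf W hW (fun z => H.edist x z)
  exact ⟨z, hz, h⟩

lemma rv_eq_zero_iff (hW : W.Nonempty) {x : V} : rv H W x = 0 ↔ x ∈ W := by
  constructor
  · intro h
    obtain ⟨z, hz, hzeq⟩ := rv_exists hW x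
    rw [h] at hzeq
    have := (SimpleGraph.edist_eq_zero_iff.1 hzeq.symm)
    rwa [this]
  · intro h
    refine le_antisymm ?_ zero_le
    calc rv H W x ≤ H.edist x x := rv_le h
      _ = 0 := SimpleGraph.edist_self

lemma rv_adj_le (hW : W.Nonempty) {x y : V} (h : H.Adj x y) :
    rv H W x ≤ rv H W y + 1 := by
  obtain ⟨z, hz, hzeq⟩ := rv_exists hW y
  calc rv H W x ≤ H.edist x z := rv_le hz
    _ ≤ H.edist x y + H.edist y z := SimpleGraph.edist_triangle
    _ ≤ 1 + rv H W y := by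
        rw [hzeq]
        gcongr
        calc H.edist x y ≤ (h.toWalk.length : ℕ∞) := SimpleGraph.edist_le _
          _ = 1 := by simp
    _ = rv H W y + 1 := by rw [add_comm]

lemma exists_parent (hW : W.Nonempty) {x : V} (hx : rv H W x ≠ ⊤) (hx0 : rv H W x ≠ 0) :
    ∃ y, H.Adj x y ∧ rv H W y + 1 = rv H W x := by
  obtain ⟨z, hz, hzeq⟩ := rv_exists hW x
  have hne : H.edist x z ≠ ⊤ := by rw [← hzeq]; exact hx
  obtain ⟨p, hp⟩ := SimpleGraph.exists_walk_of_edist_ne_top hne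
  cases p with
  | nil =>
    exfalso
    apply hx0
    rw [hzeq, ← hp]
    simp
  | @cons _ y _ hadj q =>
    refine ⟨y, hadj, ?_⟩
    refine le_antisymm ?_ (rv_adj_le hW hadj)
    have h1 : rv H W y ≤ (q.length : ℕ∞) := le_trans (rv_le hz) (SimpleGraph.edist_le q)
    rw [hzeq, ← hp]
    calc rv H W y + 1 ≤ (q.length : ℕ∞) + 1 := by gcongr
      _ = ((SimpleGraph.Walk.cons hadj q).length : ℕ∞) := by
          rw [SimpleGraph.Walk.length_cons]; push_cast; ring

variable (H W) in
noncomputable def parent (hW : W.Nonempty) (x : V) : V :=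
  if h : rv H W x ≠ ⊤ ∧ rv H W x ≠ 0 then (exists_parent hW h.1 h.2).choose else x

variable (H W) in
noncomputable def rr (x : V) : ℕ := (rv H W x).toNat

lemma parent_spec (hW : W.Nonempty) {x : V} (hx : rv H W x ≠ ⊤) (hx0 : rv H W x ≠ 0) :
    H.Adj x (parent H W hW x) ∧ rv H W (parent H W hW x) + 1 = rv H W x := by
  rw [parent, dif_pos ⟨hx, hx0⟩]
  exact (exists_parent hW hx hx0).choose_spec

lemma rr_ne_zero (hW : W.Nonempty) {x : V} (hx : rv H W x ≠ ⊤) (hx0 : rr H W x ≠ 0) :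
    rv H W x ≠ 0 := by
  intro h
  apply hx0
  rw [rr, h]
  simp

lemma parent_rr (hW : W.Nonempty) {x : V} (hx : rv H W x ≠ ⊤) (hx0 : rr H W x ≠ 0) :
    H.Adj x (parent H W hW x) ∧ rv H W (parent H W hW x) ≠ ⊤ ∧
      rr H W (parent H W hW x) + 1 = rr H W x := by
  have hx0' := rr_ne_zero hW hx hx0
  obtain ⟨hadj, heq⟩ := parent_spec hW hx hx0'
  have hpt : rv H W (parent H W hW x) ≠ ⊤ := by
    intro h; rw [h] at heq; simp at heq; exact hx heq.symm
  refine ⟨hadj, hpt, ?_⟩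
  have := congrArg ENat.toNat heq
  rwa [ENat.toNat_add hpt (by simp : (1:ℕ∞) ≠ ⊤)] at this

lemma iter_spec (hW : W.Nonempty) {x : V} (hx : rv H W x ≠ ⊤) :
    ∀ j, j ≤ rr H W x → rv H W ((parent H W hW)^[j] x) ≠ ⊤ ∧
      rr H W ((parent H W hW)^[j] x) = rr H W x - j := by
  intro j
  induction j with
  | zero =>
    intro _
    rw [Function.iterate_zero_apply]
    exact ⟨hx, by omega⟩
  | succ i ih =>
    intro hj
    obtain ⟨h1, h2⟩ := ih (by omega)
    have h3 : rr H W ((parent H W hW)^[i] x) ≠ 0 := by omega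
    obtain ⟨-, h4, h5⟩ := parent_rr hW h1 h3
    rw [Function.iterate_succ_apply']
    exact ⟨h4, by omega⟩

variable (H W) in
noncomputable def root (hW : W.Nonempty) (x : V) : V := (parent H W hW)^[rr H W x] x

lemma root_mem (hW : W.Nonempty) {x : V} (hx : rv H W x ≠ ⊤) : root H W hW x ∈ W := by
  obtain ⟨h1, h2⟩ := iter_spec hW hx (rr H W x) le_rfl
  rw [← rv_eq_zero_iff hW]
  have : rr H W ((parent H W hW)^[rr H W x] x) = 0 := by omega
  rw [rr] at this
  rw [root]
  exact (ENat.toNat_eq_zero.1 this).resolve_right h1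

lemma root_iter (hW : W.Nonempty) {x : V} (hx : rv H W x ≠ ⊤) {j : ℕ} (hj : j ≤ rr H W x) :
    root H W hW ((parent H W hW)^[j] x) = root H W hW x := by
  obtain ⟨h1, h2⟩ := iter_spec hW hx j hj
  rw [root, h2, ← Function.iterate_add_apply]
  rw [root]
  congr 1
  omega

lemma iter_walk (hW : W.Nonempty) (e : Sym2 V) (he : ∀ a b : V, s(a,b) = e → a ∈ W ∧ b ∈ W)
    {x : V} (hx : rv H W x ≠ ⊤) :
    ∀ j, j ≤ rr H W x →
      ∃ p : (H.deleteEdges {e}).Walk x ((parent H W hW)^[j] x), p.length = j := by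
  intro j
  induction j with
  | zero => exact fun _ => ⟨SimpleGraph.Walk.nil, rfl⟩
  | succ i ih =>
    intro hj
    obtain ⟨p, hp⟩ := ih (by omega)
    obtain ⟨h1, h2⟩ := iter_spec hW hx i (by omega)
    have h3 : rr H W ((parent H W hW)^[i] x) ≠ 0 := by omega
    obtain ⟨hadj, -, -⟩ := parent_rr hW h1 h3
    have hnotW : (parent H W hW)^[i] x ∉ W := by
      intro hmem
      exact (rr_ne_zero hW h1 h3) ((rv_eq_zero_iff (H := H) hW).2 hmem)
    have hadj' : (H.deleteEdges {e}).Adj ((parent H W hW)^[i] x)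
        (parent H W hW ((parent H W hW)^[i] x)) := by
      rw [SimpleGraph.deleteEdges_adj]
      refine ⟨hadj, ?_⟩
      intro hmem
      rw [Set.mem_singleton_iff] at hmem
      exact hnotW (he _ _ hmem).1
    refine ⟨(p.concat hadj').copy rfl (by rw [Function.iterate_succ_apply']), ?_⟩
    rw [SimpleGraph.Walk.length_copy, SimpleGraph.Walk.length_concat, hp]

variable (H W) in
noncomputable def chain (hW : W.Nonempty) (x : V) : Finset V :=
  (Finset.range (rr H W x)).image (fun j => (parent H W hW)^[j] x)

lemma mem_chain {hW : W.Nonempty} {x y : V} :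
    y ∈ chain H W hW x ↔ ∃ j < rr H W x, (parent H W hW)^[j] x = y := by
  simp [chain, Finset.mem_image, Finset.mem_range]

lemma card_chain (hW : W.Nonempty) {x : V} (hx : rv H W x ≠ ⊤) :
    (chain H W hW x).card = rr H W x := by
  rw [chain, Finset.card_image_of_injOn, Finset.card_range]
  intro i hi j hj hij
  rw [Finset.mem_coe, Finset.mem_range] at hi hj
  have h1 := (iter_spec hW hx i (by omega)).2
  have h2 := (iter_spec hW hx j (by omega)).2
  have hij' : (parent H W hW)^[i] x = (parent H W hW)^[j] x := hij
  rw [hij'] at h1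
  omega

lemma card_iter_image (hW : W.Nonempty) {x : V} (hx : rv H W x ≠ ⊤) {t : ℕ} (ht : t ≤ rr H W x) :
    ((Finset.range t).image (fun j => (parent H W hW)^[j] x)).card = t := by
  rw [Finset.card_image_of_injOn, Finset.card_range]
  intro i hi j hj hij
  rw [Finset.mem_coe, Finset.mem_range] at hi hj
  have h1 := (iter_spec hW hx i (by omega)).2
  have h2 := (iter_spec hW hx j (by omega)).2
  have hij' : (parent H W hW)^[i] x = (parent H W hW)^[j] x := hij
  rw [hij'] at h1
  omega

lemma chain_props (hW : W.Nonempty) {x y : V} (hx : rv H W x ≠ ⊤)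
    (hy : y ∈ chain H W hW x) :
    rv H W y ≠ ⊤ ∧ rr H W y ≠ 0 ∧ y ∉ W ∧ root H W hW y = root H W hW x := by
  obtain ⟨j, hj, rfl⟩ := mem_chain.1 hy
  obtain ⟨h1, h2⟩ := iter_spec hW hx j (by omega)
  refine ⟨h1, by omega, ?_, root_iter hW hx (by omega)⟩
  intro hmem
  exact (rr_ne_zero hW h1 (by omega)) ((rv_eq_zero_iff (H := H) hW).2 hmem)

lemma chain_sub (hW : W.Nonempty) {x : V} (hx : rv H W x ≠ ⊤) {j : ℕ} (hj : j ≤ rr H W x) :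
    chain H W hW ((parent H W hW)^[j] x) ⊆ chain H W hW x := by
  intro y hy
  obtain ⟨i, hi, rfl⟩ := mem_chain.1 hy
  have h2 := (iter_spec hW hx j hj).2
  rw [← Function.iterate_add_apply]
  exact mem_chain.2 ⟨i + j, by omega, rfl⟩

end Bush






lemma walk_avoid {G : SimpleGraph V} (Wset : Finset V) (e : Sym2 V)
    (he : ∀ a b : V, s(a,b) = e → a ∈ Wset ∧ b ∈ Wset) {x y : V} (p : G.Walk x y)
    (hp : ∀ z ∈ p.support, z ∉ Wset) :
    ∃ q : (G.deleteEdges {e}).Walk x y, q.length = p.length := by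
  induction p with
  | nil => exact ⟨SimpleGraph.Walk.nil, rfl⟩
  | @cons u w _ hadj p ih =>
    obtain ⟨q, hq⟩ := ih (fun z hz => hp z (by simp [SimpleGraph.Walk.support_cons, hz]))
    have hadj' : (G.deleteEdges {e}).Adj u w := by
      rw [SimpleGraph.deleteEdges_adj]
      refine ⟨hadj, ?_⟩
      intro hmem
      rw [Set.mem_singleton_iff] at hmem
      exact hp u (by simp [SimpleGraph.Walk.support_cons]) (he _ _ hmem).1
    exact ⟨SimpleGraph.Walk.cons hadj' q, by simp [SimpleGraph.Walk.length_cons, hq]⟩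

-- from p1 (assumed available): walk_edges_getElem, cycle_getVert_inj
lemma walk_edges_getElem' {G : SimpleGraph V} {u v : V} (p : G.Walk u v) :
    ∀ i (h : i < p.length),
      p.edges[i]'(by rw [SimpleGraph.Walk.length_edges]; omega)
        = s(p.getVert i, p.getVert (i+1)) := by
  induction p with
  | nil => intro i hi; simp at hi
  | cons h q ih =>
    intro i hi
    cases i with
    | zero => simp [SimpleGraph.Walk.edges_cons, SimpleGraph.Walk.getVert_cons_succ]
    | succ j =>
      simp only [SimpleGraph.Walk.edges_cons, SimpleGraph.Walk.getVert_cons_succ]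
      rw [List.getElem_cons_succ]
      exact ih j (by simpa using hi)

lemma arc_walk {G : SimpleGraph V} {v : V} (c : G.Walk v v) (hc : c.IsCycle)
    (jst : ℕ) (hjst : jst < c.length) :
    ∀ (start len : ℕ), start < c.length →
    (∀ t, t < len → (start + t) % c.length ≠ jst) →
    ∃ p : (G.deleteEdges {s(c.getVert jst, c.getVert (jst+1))}).Walk
        (c.getVert start) (c.getVert ((start + len) % c.length)), p.length = len := by
  have hL0 : 0 < c.length := by have := hc.three_le_length; omega
  intro start len
  induction len with
  | zero =>
    intro hstart _
    have h0 : (start + 0) % c.length = start := by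
      rw [Nat.add_zero, Nat.mod_eq_of_lt hstart]
    rw [h0]
    exact ⟨SimpleGraph.Walk.nil, rfl⟩
  | succ m ih =>
    intro hstart havoid
    obtain ⟨p, hp⟩ := ih hstart (fun t ht => havoid t (by omega))
    have hiL : (start + m) % c.length < c.length := Nat.mod_lt _ hL0
    have hine : (start + m) % c.length ≠ jst := havoid m (by omega)
    have hadjG : G.Adj (c.getVert ((start + m) % c.length))
        (c.getVert ((start + m) % c.length + 1)) := c.adj_getVert_succ hiL
    have hedge : s(c.getVert ((start + m) % c.length), c.getVert ((start + m) % c.length + 1))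
        ≠ s(c.getVert jst, c.getVert (jst+1)) := by
      rw [← walk_edges_getElem' c _ hiL, ← walk_edges_getElem' c jst hjst]
      have hnd : c.edges.Nodup := hc.isCircuit.isTrail.edges_nodup
      intro h
      exact hine (hnd.getElem_inj_iff.1 h)
    have hadj' : (G.deleteEdges {s(c.getVert jst, c.getVert (jst+1))}).Adj
        (c.getVert ((start + m) % c.length)) (c.getVert ((start + m) % c.length + 1)) := by
      rw [SimpleGraph.deleteEdges_adj]
      exact ⟨hadjG, by simpa using hedge⟩
    have hnext : c.getVert ((start + (m+1)) % c.length)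
        = c.getVert ((start + m) % c.length + 1) := by
      have h1 : (start + (m+1)) % c.length = ((start + m) % c.length + 1) % c.length := by
        rw [show start + (m+1) = (start + m) + 1 by ring]
        rw [Nat.mod_add_mod]
      rw [h1]
      rcases Nat.lt_or_ge ((start + m) % c.length + 1) c.length with h | h
      · rw [Nat.mod_eq_of_lt h]
      · have h2 : (start + m) % c.length + 1 = c.length := by omega
        have hgl : c.getVert c.length = v := SimpleGraph.Walk.getVert_length c
        rw [h2, Nat.mod_self, SimpleGraph.Walk.getVert_zero]
        exact hgl.symm
    refine ⟨(p.concat hadj').copy rfl hnext.symm, ?_⟩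
    rw [SimpleGraph.Walk.length_copy, SimpleGraph.Walk.length_concat, hp]



end SpannerAux

open SpannerAux

/-- if `H` is a `k`-spanner of an `n`-vertex graph `G`, and `c` is a
cycle of `H` whose length `L` equals the girth of `H` with `2(n-k) ≤ L ≤ k+1`,
then some edge `e` of `c` can be removed with `H` remaining a `k`-spanner. -/
theorem exists_removable_cycle_edge {n : ℕ} (G H : SimpleGraph (Fin n)) (k : ℕ)
    (hk : 0 < k) (hH : IsKSpanner G H k) (v : Fin n) (c : H.Walk v v)
    (hc : c.IsCycle) (hgirth : (c.length : ℕ∞) = H.egirth)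
    (hlb : 2 * ((n : ℤ) - k) ≤ (c.length : ℤ)) (hub : c.length ≤ k + 1) :
    ∃ e ∈ c.edges, IsKSpanner G (H.deleteEdges {e}) k := by
  classical
  have hL3 : 3 ≤ c.length := hc.three_le_length
  set L := c.length with hLdef
  set φ : ℕ → Fin n := c.getVert with hφ
  set W : Finset (Fin n) := (Finset.range L).image φ with hWdef
  have hφmem : ∀ i, i < L → φ i ∈ W := fun i hi =>
    Finset.mem_image.2 ⟨i, Finset.mem_range.2 hi, rfl⟩
  have hWne : W.Nonempty := ⟨φ 0, hφmem 0 (by omega)⟩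
  have hφinj : ∀ i j, i < L → j < L → φ i = φ j → i = j := fun i j hi hj h =>
    cycle_getVert_inj hc hi hj h
  have hWcard : W.card = L := by
    rw [hWdef, Finset.card_image_of_injOn, Finset.card_range]
    intro i hi j hj h
    exact hφinj i j (Finset.mem_range.1 hi) (Finset.mem_range.1 hj) h
  have hLn : L ≤ n := by
    calc L = W.card := hWcard.symm
    _ ≤ (Finset.univ : Finset (Fin n)).card := Finset.card_le_univ W
    _ = n := by simp
  have h2n : 2 * n ≤ 2 * k + L := by
    have h : (2 * n : ℤ) ≤ 2 * k + L := by linarith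
    exact_mod_cast h
  have hLk : L ≤ k + 1 := hub
  set Rf : ℕ → ℕ := fun i =>
    (Finset.univ.filter (fun x => rv H W x ≠ ⊤ ∧ root H W hWne x = φ i)).sup (rr H W)
    with hRfdef
  have hRfle : ∀ (x : Fin n) i, rv H W x ≠ ⊤ → root H W hWne x = φ i → rr H W x ≤ Rf i := by
    intro x i h1 h2
    exact Finset.le_sup (Finset.mem_filter.2 ⟨Finset.mem_univ x, h1, h2⟩)
  have hRsum : ∑ i ∈ Finset.range L, Rf i ≤ n - L := by
    have hwit : ∀ i, ∃ x : Fin n, i ∈ (Finset.range L).filter (fun i => Rf i ≠ 0) →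
        ((rv H W x ≠ ⊤ ∧ root H W hWne x = φ i) ∧ rr H W x = Rf i) := by
      intro i
      by_cases hi : i ∈ (Finset.range L).filter (fun i => Rf i ≠ 0)
      · rw [Finset.mem_filter] at hi
        have hne : (Finset.univ.filter
            (fun x => rv H W x ≠ ⊤ ∧ root H W hWne x = φ i)).Nonempty := by
          by_contra hcon
          rw [Finset.not_nonempty_iff_eq_empty] at hcon
          apply hi.2
          rw [hRfdef]
          simp only [hcon, Finset.sup_empty]
          rfl
        obtain ⟨x, hx, hsup⟩ := Finset.exists_mem_eq_sup _ hne (rr H W)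
        rw [Finset.mem_filter] at hx
        exact ⟨x, fun _ => ⟨hx.2, hsup.symm⟩⟩
      · exact ⟨v, fun h => absurd h hi⟩
    choose xf hxf using hwit
    have hTsub : ∀ i ∈ (Finset.range L).filter (fun i => Rf i ≠ 0),
        chain H W hWne (xf i) ⊆ Finset.univ \ W := by
      intro i hi y hy
      rw [Finset.mem_sdiff]
      exact ⟨Finset.mem_univ y,
        (chain_props hWne (hxf i hi).1.1 hy).2.2.1⟩
    calc ∑ i ∈ Finset.range L, Rf i
        = ∑ i ∈ (Finset.range L).filter (fun i => Rf i ≠ 0), Rf i :=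
          (Finset.sum_filter_ne_zero _).symm
      _ = ∑ i ∈ (Finset.range L).filter (fun i => Rf i ≠ 0), (chain H W hWne (xf i)).card := by
          refine Finset.sum_congr rfl fun i hi => ?_
          rw [card_chain hWne (hxf i hi).1.1, (hxf i hi).2]
      _ = (((Finset.range L).filter (fun i => Rf i ≠ 0)).biUnion
            (fun i => chain H W hWne (xf i))).card := by
          rw [Finset.card_biUnion]
          intro i hi j hj hij
          rw [Function.onFun, Finset.disjoint_left]
          intro y hyi hyj
          apply hij
          have h1 := (chain_props hWne (hxf i hi).1.1 hyi).2.2.2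
          have h2 := (chain_props hWne (hxf j hj).1.1 hyj).2.2.2
          rw [(hxf i hi).1.2] at h1
          rw [(hxf j hj).1.2] at h2
          rw [Finset.mem_coe, Finset.mem_filter, Finset.mem_range] at hi hj
          exact hφinj i j hi.1 hj.1 (by rw [← h1, ← h2])
      _ ≤ (Finset.univ \ W).card := by
          refine Finset.card_le_card ?_
          intro y hy
          rw [Finset.mem_biUnion] at hy
          obtain ⟨i, hi, hyi⟩ := hy
          exact hTsub i hi hyi
      _ = n - L := by
          rw [Finset.card_sdiff_of_subset (Finset.subset_univ W), Finset.card_univ,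
            Fintype.card_fin, hWcard]
  obtain ⟨jst, hjstL, huncov⟩ := arc_uncovered L (k + 1 - L) (∑ i ∈ Finset.range L, Rf i)
      hL3 Rf rfl (by omega)
  set e : Sym2 (Fin n) := s(φ jst, φ (jst + 1)) with hedef
  have hemem : e ∈ c.edges := by
    have h := walk_edges_getElem c jst hjstL
    rw [hedef, hφ, ← h]
    exact List.getElem_mem _
  have hφLmem : φ (jst + 1) ∈ W := by
    rcases Nat.lt_or_ge (jst + 1) L with h | h
    · exact hφmem _ h
    · have hj1 : jst + 1 = L := by omega
      have h2 : φ (jst + 1) = φ 0 := by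
        rw [hφ, SimpleGraph.Walk.getVert_zero, hj1, hLdef]
        exact c.getVert_length
      rw [h2]
      exact hφmem 0 (by omega)
  have heW : ∀ a b : Fin n, s(a, b) = e → a ∈ W ∧ b ∈ W := by
    intro x y hxy
    rw [hedef, Sym2.eq_iff] at hxy
    rcases hxy with ⟨h1, h2⟩ | ⟨h1, h2⟩
    · rw [h1, h2]; exact ⟨hφmem jst hjstL, hφLmem⟩
    · rw [h1, h2]; exact ⟨hφLmem, hφmem jst hjstL⟩
  refine ⟨e, hemem, le_trans (SimpleGraph.deleteEdges_le _) hH.1, ?_⟩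
  intro a b
  by_cases hab : a = b
  · subst hab; simp
  by_cases hGtop : G.edist a b = ⊤
  · rw [hGtop, ENat.mul_top (by exact_mod_cast hk.ne')]
    exact le_top
  have hG1 : 1 ≤ G.edist a b :=
    Order.one_le_iff_pos.2 (SimpleGraph.edist_pos_of_ne hab)
  suffices hmain : (H.deleteEdges {e}).edist a b ≤ (k : ℕ∞) by
    calc (H.deleteEdges {e}).edist a b ≤ (k:ℕ∞) := hmain
      _ = (k:ℕ∞) * 1 := (mul_one _).symm
      _ ≤ (k:ℕ∞) * G.edist a b := mul_le_mul' le_rfl hG1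
  have hHtop : H.edist a b ≠ ⊤ := by
    intro h
    have h2 := hH.2 a b
    rw [h] at h2
    exact (WithTop.mul_ne_top (ENat.coe_ne_top k) hGtop) (top_le_iff.1 h2)
  have hmLk : n - L ≤ k := by omega
  by_cases hrva : rv H W a = ⊤
  · -- a's component misses the cycle entirely
    obtain ⟨w0, hw0len⟩ := SimpleGraph.exists_walk_of_edist_ne_top hHtop
    have hqpath : w0.bypass.IsPath := SimpleGraph.Walk.bypass_isPath w0
    have hsup : ∀ x ∈ w0.bypass.support, x ∉ W := by
      intro x hx hxW
      have hreach : H.Reachable a x := ⟨w0.bypass.takeUntil x hx⟩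
      have h1 : rv H W a ≤ H.edist a x := rv_le hxW
      rw [hrva] at h1
      exact (SimpleGraph.edist_ne_top_iff_reachable.2 hreach) (top_le_iff.1 h1)
    have hcard : w0.bypass.length + 1 ≤ n - L := by
      have h1 : w0.bypass.support.toFinset ⊆ Finset.univ \ W := by
        intro x hx
        rw [Finset.mem_sdiff]
        exact ⟨Finset.mem_univ x, hsup x (List.mem_toFinset.1 hx)⟩
      have h2 := Finset.card_le_card h1
      rw [List.toFinset_card_of_nodup hqpath.support_nodup,
        SimpleGraph.Walk.length_support] at h2
      rwa [Finset.card_sdiff_of_subset (Finset.subset_univ W), Finset.card_univ,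
        Fintype.card_fin, hWcard] at h2
    obtain ⟨q', hq'⟩ := walk_avoid W e heW w0.bypass hsup
    calc (H.deleteEdges {e}).edist a b ≤ (q'.length : ℕ∞) := SimpleGraph.edist_le q'
      _ ≤ (k : ℕ∞) := by
          rw [hq']
          exact_mod_cast (by omega : w0.bypass.length ≤ k)
  · -- both endpoints attached to the cycle via bushes
    have hrvb : rv H W b ≠ ⊤ := by
      obtain ⟨z, hz, hzeq⟩ := rv_exists hWne a
      intro htop
      have h1 : rv H W b ≤ H.edist b a + H.edist a z :=
        le_trans (rv_le hz) SimpleGraph.edist_triangle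
      rw [htop] at h1
      have h2 : H.edist b a + H.edist a z ≠ ⊤ := by
        apply WithTop.add_ne_top.2
        constructor
        · rw [SimpleGraph.edist_comm]; exact hHtop
        · rw [← hzeq]; exact hrva
      exact h2 (top_le_iff.1 h1)
    have hwa : (H.deleteEdges {e}).edist a (root H W hWne a) ≤ (rr H W a : ℕ∞) := by
      obtain ⟨p, hp⟩ := iter_walk hWne e heW hrva (rr H W a) le_rfl
      have h := SimpleGraph.edist_le p
      rw [hp] at h
      exact h
    have hwb : (H.deleteEdges {e}).edist b (root H W hWne b) ≤ (rr H W b : ℕ∞) := by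
      obtain ⟨p, hp⟩ := iter_walk hWne e heW hrvb (rr H W b) le_rfl
      have h := SimpleGraph.edist_le p
      rw [hp] at h
      exact h
    obtain ⟨ia, hiaL, hφia⟩ : ∃ i, i < L ∧ φ i = root H W hWne a := by
      obtain ⟨i, hi, h2⟩ := Finset.mem_image.1 (root_mem hWne hrva)
      exact ⟨i, Finset.mem_range.1 hi, h2⟩
    obtain ⟨ib, hibL, hφib⟩ : ∃ i, i < L ∧ φ i = root H W hWne b := by
      obtain ⟨i, hi, h2⟩ := Finset.mem_image.1 (root_mem hWne hrvb)
      exact ⟨i, Finset.mem_range.1 hi, h2⟩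
    have hRa : rr H W a ≤ Rf ia := hRfle a ia hrva hφia.symm
    have hRb : rr H W b ≤ Rf ib := hRfle b ib hrvb hφib.symm
    by_cases hroots : root H W hWne a = root H W hWne b
    · by_cases hshare : ∃ y, y ∈ chain H W hWne a ∧ y ∈ chain H W hWne b
      · -- chains share a vertex: splice through the first shared vertex
        have hSne : ((Finset.range (rr H W a)).filter
            (fun j => (parent H W hWne)^[j] a ∈ chain H W hWne b)).Nonempty := by
          obtain ⟨y, hy1, hy2⟩ := hshare
          obtain ⟨j, hj, rfl⟩ := mem_chain.1 hy1
          exact ⟨j, Finset.mem_filter.2 ⟨Finset.mem_range.2 hj, hy2⟩⟩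
        have hj1S := Finset.min'_mem _ hSne
        rw [Finset.mem_filter, Finset.mem_range] at hj1S
        obtain ⟨hj1lt, hj1chain⟩ := hj1S
        obtain ⟨j2, hj2lt, hj2eq⟩ := mem_chain.1 hj1chain
        -- distance bound
        obtain ⟨p1, hp1⟩ := iter_walk hWne e heW hrva _ (le_of_lt hj1lt)
        obtain ⟨p2, hp2⟩ := iter_walk hWne e heW hrvb _ (le_of_lt hj2lt)
        have hd1 := SimpleGraph.edist_le p1
        have hd2 := SimpleGraph.edist_le p2
        rw [hp1] at hd1
        rw [hp2] at hd2
        rw [hj2eq] at hd2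
        set jm := ((Finset.range (rr H W a)).filter
            (fun j => (parent H W hWne)^[j] a ∈ chain H W hWne b)).min' hSne with hjm
        have hdd : (H.deleteEdges {e}).edist a b ≤ ((jm : ℕ∞) + j2) := by
          calc (H.deleteEdges {e}).edist a b
              ≤ (H.deleteEdges {e}).edist a ((parent H W hWne)^[jm] a)
                + (H.deleteEdges {e}).edist ((parent H W hWne)^[jm] a) b :=
                SimpleGraph.edist_triangle
            _ ≤ (jm : ℕ∞) + j2 := by
                refine add_le_add hd1 ?_
                rw [SimpleGraph.edist_comm]
                exact hd2
        -- counting: jm + j2 ≤ n - L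
        have hAB : Disjoint ((Finset.range jm).image (fun j => (parent H W hWne)^[j] a))
            ((Finset.range j2).image (fun j => (parent H W hWne)^[j] b)) := by
          rw [Finset.disjoint_left]
          intro y hyA hyB
          rw [Finset.mem_image] at hyA
          obtain ⟨j, hj, rfl⟩ := hyA
          rw [Finset.mem_range] at hj
          have hymem : (parent H W hWne)^[j] a ∈ chain H W hWne b := by
            rw [Finset.mem_image] at hyB
            obtain ⟨j', hj', hj'eq⟩ := hyB
            rw [Finset.mem_range] at hj'
            rw [← hj'eq]
            exact mem_chain.2 ⟨j', by omega, rfl⟩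
          have hjin : j ∈ (Finset.range (rr H W a)).filter
              (fun j => (parent H W hWne)^[j] a ∈ chain H W hWne b) :=
            Finset.mem_filter.2 ⟨Finset.mem_range.2 (by omega), hymem⟩
          have := Finset.min'_le _ j hjin
          omega
        have hsub : ((Finset.range jm).image (fun j => (parent H W hWne)^[j] a))
            ∪ ((Finset.range j2).image (fun j => (parent H W hWne)^[j] b))
            ⊆ Finset.univ \ W := by
          intro y hy
          rw [Finset.mem_union] at hy
          rw [Finset.mem_sdiff]
          refine ⟨Finset.mem_univ y, ?_⟩
          rcases hy with hy | hy
          · rw [Finset.mem_image] at hy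
            obtain ⟨j, hj, rfl⟩ := hy
            rw [Finset.mem_range] at hj
            exact (chain_props hWne hrva (mem_chain.2 ⟨j, by omega, rfl⟩)).2.2.1
          · rw [Finset.mem_image] at hy
            obtain ⟨j, hj, rfl⟩ := hy
            rw [Finset.mem_range] at hj
            exact (chain_props hWne hrvb (mem_chain.2 ⟨j, by omega, rfl⟩)).2.2.1
        have hcount : jm + j2 ≤ n - L := by
          have h1 := Finset.card_le_card hsub
          rw [Finset.card_union_of_disjoint hAB] at h1
          rw [card_iter_image hWne hrva (le_of_lt hj1lt),
            card_iter_image hWne hrvb (le_of_lt hj2lt)] at h1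
          rwa [Finset.card_sdiff_of_subset (Finset.subset_univ W), Finset.card_univ,
            Fintype.card_fin, hWcard] at h1
        calc (H.deleteEdges {e}).edist a b ≤ ((jm : ℕ∞) + j2) := hdd
          _ ≤ (k : ℕ∞) := by exact_mod_cast (by omega : jm + j2 ≤ k)
      · -- chains disjoint, same root: go through the common root
        have hdisj : Disjoint (chain H W hWne a) (chain H W hWne b) := by
          rw [Finset.disjoint_left]
          intro y hy1 hy2
          exact hshare ⟨y, hy1, hy2⟩
        have hsub : chain H W hWne a ∪ chain H W hWne b ⊆ Finset.univ \ W := by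
          intro y hy
          rw [Finset.mem_union] at hy
          rw [Finset.mem_sdiff]
          refine ⟨Finset.mem_univ y, ?_⟩
          rcases hy with hy | hy
          · exact (chain_props hWne hrva hy).2.2.1
          · exact (chain_props hWne hrvb hy).2.2.1
        have hcount : rr H W a + rr H W b ≤ n - L := by
          have h1 := Finset.card_le_card hsub
          rw [Finset.card_union_of_disjoint hdisj, card_chain hWne hrva,
            card_chain hWne hrvb] at h1
          rwa [Finset.card_sdiff_of_subset (Finset.subset_univ W), Finset.card_univ,
            Fintype.card_fin, hWcard] at h1
        have hdd : (H.deleteEdges {e}).edist a b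
            ≤ ((rr H W a : ℕ∞) + rr H W b) := by
          calc (H.deleteEdges {e}).edist a b
              ≤ (H.deleteEdges {e}).edist a (root H W hWne a)
                + (H.deleteEdges {e}).edist (root H W hWne a) b :=
                SimpleGraph.edist_triangle
            _ ≤ (rr H W a : ℕ∞) + rr H W b := by
                refine add_le_add hwa ?_
                rw [SimpleGraph.edist_comm, hroots]
                exact hwb
        calc (H.deleteEdges {e}).edist a b ≤ _ := hdd
          _ ≤ (k : ℕ∞) := by exact_mod_cast (by omega : rr H W a + rr H W b ≤ k)
    · -- different roots: go around the cycle avoiding the removed edge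
      have hiaib : ia ≠ ib := fun h => hroots (by rw [← hφia, ← hφib, h])
      set δ := if ia ≤ ib then ib - ia else ib + L - ia with hδdef
      have hδ1 : 1 ≤ δ := by rw [hδdef]; split <;> omega
      have hδL : δ ≤ L - 1 := by rw [hδdef]; split <;> omega
      have hiaδ : (ia + δ) % L = ib := by
        rw [hδdef]; split
        · rw [show ia + (ib - ia) = ib by omega, Nat.mod_eq_of_lt hibL]
        · rw [show ia + (ib + L - ia) = ib + L by omega, Nat.add_mod_right,
            Nat.mod_eq_of_lt hibL]
      have hibσ : (ib + (L - δ)) % L = ia := by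
        rw [hδdef]; split
        · rw [show ib + (L - (ib - ia)) = ia + L by omega, Nat.add_mod_right,
            Nat.mod_eq_of_lt hiaL]
        · rw [show ib + (L - (ib + L - ia)) = ia by omega, Nat.mod_eq_of_lt hiaL]
      have harc : ∀ st ln : ℕ, st < L → (∀ t, t < ln → (st + t) % L ≠ jst) →
          (H.deleteEdges {e}).edist (φ st) (φ ((st + ln) % L)) ≤ (ln : ℕ∞) := by
        intro st ln hst hav
        obtain ⟨p, hp⟩ := arc_walk c hc jst hjstL st ln hst hav
        have h := SimpleGraph.edist_le p
        rw [hp] at h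
        exact h
      by_cases hside : ∀ t, t < δ → (ia + t) % L ≠ jst
      · -- forward arc from ia to ib avoids the removed edge
        have hd2 : (H.deleteEdges {e}).edist (root H W hWne a) (root H W hWne b)
            ≤ (δ : ℕ∞) := by
          have h := harc ia δ hiaL hside
          rw [hiaδ, hφia, hφib] at h
          exact h
        have hk2 : rr H W a + δ + rr H W b ≤ k := by
          by_contra hcon
          push_neg at hcon
          have hw : (L - δ) + (k + 1 - L) ≤ Rf ib + Rf ((ib + (L - δ)) % L) := by
            rw [hibσ]
            omega
          have hunc := huncov ib (L - δ) hibL (by omega) (by omega) hw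
          set t0 := if ib ≤ jst then jst - ib else jst + L - ib with ht0
          have ht0L : t0 < L := by rw [ht0]; split <;> omega
          have ht0eq : (ib + t0) % L = jst := by
            rw [ht0]; split
            · rw [show ib + (jst - ib) = jst by omega, Nat.mod_eq_of_lt hjstL]
            · rw [show ib + (jst + L - ib) = jst + L by omega, Nat.add_mod_right,
                Nat.mod_eq_of_lt hjstL]
          rcases Nat.lt_or_ge t0 (L - δ) with h | h
          · exact hunc t0 h ht0eq
          · refine hside (t0 - (L - δ)) (by omega) ?_
            have h1 : (ia + (t0 - (L - δ))) % L
                = (ib + (L - δ) + (t0 - (L - δ))) % L := by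
              conv_lhs => rw [← hibσ]
              rw [Nat.mod_add_mod]
            rw [h1, show ib + (L - δ) + (t0 - (L - δ)) = ib + t0 by omega, ht0eq]
        have hdd : (H.deleteEdges {e}).edist a b
            ≤ ((rr H W a : ℕ∞) + (δ + rr H W b)) := by
          calc (H.deleteEdges {e}).edist a b
              ≤ (H.deleteEdges {e}).edist a (root H W hWne a)
                + (H.deleteEdges {e}).edist (root H W hWne a) b :=
                SimpleGraph.edist_triangle
            _ ≤ (rr H W a : ℕ∞) + (δ + rr H W b) := by
                refine add_le_add hwa ?_
                calc (H.deleteEdges {e}).edist (root H W hWne a) b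
                    ≤ (H.deleteEdges {e}).edist (root H W hWne a) (root H W hWne b)
                      + (H.deleteEdges {e}).edist (root H W hWne b) b :=
                      SimpleGraph.edist_triangle
                  _ ≤ (δ : ℕ∞) + rr H W b := by
                      refine add_le_add hd2 ?_
                      rw [SimpleGraph.edist_comm]
                      exact hwb
        calc (H.deleteEdges {e}).edist a b ≤ _ := hdd
          _ ≤ (k : ℕ∞) := by exact_mod_cast (by omega : rr H W a + (δ + rr H W b) ≤ k)
      · -- backward arc from ib to ia avoids the removed edge
        push_neg at hside
        obtain ⟨t0, ht0δ, ht0eq⟩ := hside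
        have hav : ∀ t, t < L - δ → (ib + t) % L ≠ jst := by
          intro t ht heq
          have h1 : (ia + t0) % L = (ib + ((L - δ) + t0)) % L := by
            conv_lhs => rw [← hibσ]
            rw [Nat.mod_add_mod, show ib + (L - δ) + t0 = ib + ((L - δ) + t0) by ring]
          have h2 : (ib + t) % L = (ib + ((L - δ) + t0)) % L := by
            rw [heq, ← ht0eq, h1]
          have h3 : t % L = ((L - δ) + t0) % L := Nat.ModEq.add_left_cancel' ib h2
          rw [Nat.mod_eq_of_lt (by omega), Nat.mod_eq_of_lt (by omega)] at h3
          omega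
        have hd2 : (H.deleteEdges {e}).edist (root H W hWne a) (root H W hWne b)
            ≤ ((L - δ : ℕ) : ℕ∞) := by
          have h := harc ib (L - δ) hibL hav
          rw [hibσ, hφia, hφib] at h
          rw [SimpleGraph.edist_comm]
          exact h
        have hk2 : rr H W a + (L - δ) + rr H W b ≤ k := by
          by_contra hcon
          push_neg at hcon
          have hw : δ + (k + 1 - L) ≤ Rf ia + Rf ((ia + δ) % L) := by
            rw [hiaδ]
            omega
          have hunc := huncov ia δ hiaL (by omega) (by omega) hw
          exact hunc t0 ht0δ ht0eq
        have hdd : (H.deleteEdges {e}).edist a b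
            ≤ ((rr H W a : ℕ∞) + (((L - δ : ℕ) : ℕ∞) + rr H W b)) := by
          calc (H.deleteEdges {e}).edist a b
              ≤ (H.deleteEdges {e}).edist a (root H W hWne a)
                + (H.deleteEdges {e}).edist (root H W hWne a) b :=
                SimpleGraph.edist_triangle
            _ ≤ (rr H W a : ℕ∞) + (((L - δ : ℕ) : ℕ∞) + rr H W b) := by
                refine add_le_add hwa ?_
                calc (H.deleteEdges {e}).edist (root H W hWne a) b
                    ≤ (H.deleteEdges {e}).edist (root H W hWne a) (root H W hWne b)
                      + (H.deleteEdges {e}).edist (root H W hWne b) b :=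
                      SimpleGraph.edist_triangle
                  _ ≤ ((L - δ : ℕ) : ℕ∞) + rr H W b := by
                      refine add_le_add hd2 ?_
                      rw [SimpleGraph.edist_comm]
                      exact hwb
        calc (H.deleteEdges {e}).edist a b ≤ _ := hdd
          _ ≤ (k : ℕ∞) := by
              exact_mod_cast (by omega : rr H W a + ((L - δ) + rr H W b) ≤ k)
end
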